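/- arXiv:1003.3959 — 5 statements merged into one kernel-verified Lean document; each statement's English description precedes it below -/
import Mathlib

section
/- Let G be a group generated by a subset S, equipped with the word metric with respect to S. Then G is boundedly presented by S if and only if the metric space (G, word metric) is coarsely simply connected. In particular, a locally compact, compactly generated Hausdorff topological group is compactly presented if and only if it is coarsely simply connected with respect to the word metric of some (equivalently, any) compact generating subset. -/
set_option linter.unusedSectionVars false
set_option linter.unusedVariables false


open scoped Pointwise

/-- A group `G` is *boundedly presented* by a subset `S ⊆ G` if there are an integer `n` and a
set `R` of words of length at most `n` in the letters `S ∪ S⁻¹`, each representing the identity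
in `G`, such that the canonical homomorphism from the quotient of the free group on `S` by the
normal closure of `R` onto `G` is an isomorphism. -/
def BoundedlyPresentedBy (G : Type*) [Group G] (S : Set G) : Prop :=
  ∃ (n : ℕ) (R : Set (FreeGroup S)),
    (∀ r ∈ R, ∃ w : List (S × Bool), FreeGroup.mk w = r ∧ w.length ≤ n) ∧
    Function.Surjective (FreeGroup.lift (fun s : S => (s : G))) ∧
    MonoidHom.ker (FreeGroup.lift (fun s : S => (s : G))) = Subgroup.normalClosure R

/-- A topological group is *compactly presented* if it is boundedly presented by some compact
subset. -/
def CompactlyPresented (G : Type*) [Group G] [TopologicalSpace G] : Prop :=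
  ∃ S : Set G, IsCompact S ∧ BoundedlyPresentedBy G S

/-- An `r`-path for the distance function `d`: a nonempty finite sequence of points in which any
two consecutive points are at distance at most `r`. -/
def IsPathOf {X : Type*} (d : X → X → ℝ) (r : ℝ) (p : List X) : Prop :=
  p ≠ [] ∧ p.Chain' (fun a b => d a b ≤ r)

/-- One elementary step of `r`-equivalence: insertion of one point strictly between two
consecutive points of the sequence, both sequences being `r`-paths. -/
def PathInsertStep {X : Type*} (d : X → X → ℝ) (r : ℝ) (p q : List X) : Prop :=
  IsPathOf d r p ∧ IsPathOf d r q ∧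
    ∃ (l₁ l₂ : List X) (y : X), l₁ ≠ [] ∧ l₂ ≠ [] ∧ p = l₁ ++ l₂ ∧ q = l₁ ++ y :: l₂

/-- `r`-equivalence of `r`-paths: the equivalence relation generated by insertion of one
point. -/
def PathEquiv {X : Type*} (d : X → X → ℝ) (r : ℝ) : List X → List X → Prop :=
  Relation.EqvGen (PathInsertStep d r)

/-- `p` is an `r`-loop based at `x`. -/
def IsLoopOf {X : Type*} (d : X → X → ℝ) (r : ℝ) (x : X) (p : List X) : Prop :=
  IsPathOf d r p ∧ p.head? = some x ∧ p.getLast? = some x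

/-- Coarse connectedness with respect to the distance function `d`: for some `r`, any two points
are joined by an `r`-path. -/
def CoarselyConnectedWith {X : Type*} (d : X → X → ℝ) : Prop :=
  ∃ r : ℝ, ∀ x y : X, ∃ p : List X,
    IsPathOf d r p ∧ p.head? = some x ∧ p.getLast? = some y

/-- Coarse simple connectedness with respect to the distance function `d`: coarse connectedness,
and for every `r` there exists `r' ≥ r` such that every `r`-loop is `r'`-equivalent to the
constant loop at its basepoint. -/
def CoarselySimplyConnectedWith {X : Type*} (d : X → X → ℝ) : Prop :=
  CoarselyConnectedWith d ∧
    ∀ r : ℝ, ∃ r' : ℝ, r ≤ r' ∧ ∀ (x : X) (p : List X), IsLoopOf d r x p →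
      ∃ k : ℕ, PathEquiv d r' p (List.replicate (k + 1) x)

/-- A pseudometric space is coarsely simply connected if it is so with respect to its
distance. -/
def CoarselySimplyConnected (X : Type*) [PseudoMetricSpace X] : Prop :=
  CoarselySimplyConnectedWith (dist : X → X → ℝ)

/-- The word metric on a group `G` with respect to a generating subset `S`:
`d(g, h) = min {n | g⁻¹ * h ∈ (S ∪ S⁻¹) ^ n}`. -/
noncomputable def wordDist {G : Type*} [Group G] (S : Set G) (g h : G) : ℝ :=
  (sInf {n : ℕ | g⁻¹ * h ∈ (S ∪ S⁻¹) ^ n} : ℕ)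

universe u v

set_option linter.deprecated false in
theorem List.chain'_append {α : Type*} {R : α → α → Prop} {l₁ l₂ : List α} :
    List.Chain' R (l₁ ++ l₂) ↔
      List.Chain' R l₁ ∧ List.Chain' R l₂ ∧ ∀ x ∈ l₁.getLast?, ∀ y ∈ l₂.head?, R x y :=
  List.isChain_append

set_option linter.deprecated false in
@[simp] theorem List.chain'_cons {α : Type*} {R : α → α → Prop} {x y : α} {l : List α} :
    List.Chain' R (x :: y :: l) ↔ R x y ∧ List.Chain' R (y :: l) :=
  List.isChain_cons_cons

set_option linter.deprecated false in
theorem List.chain'_cons' {α : Type*} {R : α → α → Prop} {x : α} {l : List α} :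
    List.Chain' R (x :: l) ↔ (∀ y ∈ l.head?, R x y) ∧ List.Chain' R l :=
  List.isChain_cons

set_option linter.deprecated false in
@[simp] theorem List.chain'_singleton {α : Type*} {R : α → α → Prop} (a : α) :
    List.Chain' R [a] :=
  List.isChain_singleton a

set_option linter.deprecated false in
@[simp] theorem List.chain'_nil {α : Type*} {R : α → α → Prop} :
    List.Chain' R [] :=
  List.IsChain.nil

namespace BddAux

variable {X : Type*} {d : X → X → ℝ} {r r' : ℝ} {p q : List X}

theorem isPath_mono (hr : r ≤ r') (h : IsPathOf d r p) : IsPathOf d r' p :=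
  ⟨h.1, h.2.imp fun _ _ hab => hab.trans hr⟩

theorem step_mono (hr : r ≤ r') (h : PathInsertStep d r p q) : PathInsertStep d r' p q :=
  ⟨isPath_mono hr h.1, isPath_mono hr h.2.1, h.2.2⟩

theorem pequiv_mono (hr : r ≤ r') (h : PathEquiv d r p q) : PathEquiv d r' p q :=
  Relation.EqvGen.mono (r := PathInsertStep d r) (p := PathInsertStep d r')
    (fun _ _ hs => step_mono hr hs) _ _ h

theorem pequiv_refl (p : List X) : PathEquiv d r p p := Relation.EqvGen.refl p
theorem pequiv_symm (h : PathEquiv d r p q) : PathEquiv d r q p := Relation.EqvGen.symm _ _ h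
theorem pequiv_trans {s : List X} (h : PathEquiv d r p q) (h' : PathEquiv d r q s) :
    PathEquiv d r p s := Relation.EqvGen.trans _ _ _ h h'

theorem step_head? (h : PathInsertStep d r p q) : p.head? = q.head? := by
  obtain ⟨_, _, l₁, l₂, y, h₁, h₂, rfl, rfl⟩ := h
  simp [List.head?_append, List.head?_eq_head h₁]

theorem step_getLast? (h : PathInsertStep d r p q) : p.getLast? = q.getLast? := by
  obtain ⟨_, _, l₁, l₂, y, h₁, h₂, rfl, rfl⟩ := h
  rw [List.getLast?_append, List.getLast?_append]
  have : (y :: l₂).getLast? = l₂.getLast? := by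
    cases l₂ with
    | nil => exact absurd rfl h₂
    | cons a t => simp [List.getLast?_cons_cons]
  rw [this]

theorem equiv_cases (h : PathEquiv d r p q) :
    p = q ∨ (IsPathOf d r p ∧ IsPathOf d r q ∧ p.head? = q.head? ∧ p.getLast? = q.getLast?) := by
  induction h with
  | rel a b hab => exact Or.inr ⟨hab.1, hab.2.1, step_head? hab, step_getLast? hab⟩
  | refl a => exact Or.inl rfl
  | symm a b _ ih =>
    rcases ih with rfl | ⟨h1, h2, h3, h4⟩
    · exact Or.inl rfl
    · exact Or.inr ⟨h2, h1, h3.symm, h4.symm⟩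
  | trans a b c _ _ ih₁ ih₂ =>
    rcases ih₁ with rfl | ⟨h1, h2, h3, h4⟩
    · exact ih₂
    · rcases ih₂ with rfl | ⟨h1', h2', h3', h4'⟩
      · exact Or.inr ⟨h1, h2, h3, h4⟩
      · exact Or.inr ⟨h1, h2', h3.trans h3', h4.trans h4'⟩

theorem isPathOf_congr_middle {l₁ l₂ : List X} (hq : IsPathOf d r q)
    (hh : p.head? = q.head?) (hl : p.getLast? = q.getLast?)
    (hp : IsPathOf d r (l₁ ++ p ++ l₂)) : IsPathOf d r (l₁ ++ q ++ l₂) := by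
  refine ⟨by simp [hq.1], ?_⟩
  have hc := hp.2
  rw [List.append_assoc, List.chain'_append] at hc ⊢
  obtain ⟨hcl₁, hc₂, hjun⟩ := hc
  rw [List.chain'_append] at hc₂ ⊢
  obtain ⟨hcp, hcl₂, hjun₂⟩ := hc₂
  refine ⟨hcl₁, ⟨hq.2, hcl₂, fun x hx y hy => hjun₂ x (by rwa [hl]) y hy⟩, ?_⟩
  intro x hx y hy
  apply hjun x hx y
  rwa [List.head?_append, ← hh, ← List.head?_append] at hy

theorem equiv_context {l₁ l₂ : List X} (h : PathEquiv d r p q)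
    (hp : IsPathOf d r (l₁ ++ p ++ l₂)) :
    PathEquiv d r (l₁ ++ p ++ l₂) (l₁ ++ q ++ l₂) := by
  induction h with
  | rel a b hab =>
    obtain ⟨ha, hb, m₁, m₂, y, hm₁, hm₂, rfl, rfl⟩ := hab
    refine Relation.EqvGen.rel _ _ ⟨hp, ?_, l₁ ++ m₁, m₂ ++ l₂, y, by simp [hm₁], by simp [hm₂],
      by simp, by simp⟩
    exact isPathOf_congr_middle hb
      (step_head? ⟨ha, hb, m₁, m₂, y, hm₁, hm₂, rfl, rfl⟩)
      (step_getLast? ⟨ha, hb, m₁, m₂, y, hm₁, hm₂, rfl, rfl⟩) hp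
  | refl a => exact pequiv_refl _
  | symm a b hab ih =>
    rcases equiv_cases (hab : PathEquiv d r a b) with rfl | ⟨h1, h2, h3, h4⟩
    · exact pequiv_refl _
    · have ha : IsPathOf d r (l₁ ++ a ++ l₂) := isPathOf_congr_middle h1 h3.symm h4.symm hp
      exact pequiv_symm (ih ha)
  | trans a b c hab hbc ih₁ ih₂ =>
    rcases equiv_cases (hab : PathEquiv d r a b) with rfl | ⟨h1, h2, h3, h4⟩
    · exact ih₂ hp
    · have hb : IsPathOf d r (l₁ ++ b ++ l₂) := isPathOf_congr_middle h2 h3 h4 hp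
      exact pequiv_trans (ih₁ hp) (ih₂ hb)

theorem isPathOf_append {l₁ l₂ : List X} (h₁ : IsPathOf d r l₁) (h₂ : IsPathOf d r l₂)
    (hj : ∀ a ∈ l₁.getLast?, ∀ b ∈ l₂.head?, d a b ≤ r) : IsPathOf d r (l₁ ++ l₂) :=
  ⟨by simp [h₁.1], List.chain'_append.2 ⟨h₁.2, h₂.2, hj⟩⟩

theorem chain'_pair {l₁ l₂ : List X} (hc : (l₁ ++ l₂).Chain' (fun a b => d a b ≤ r))
    (h₁ : l₁ ≠ []) (h₂ : l₂ ≠ []) : d (l₁.getLast h₁) (l₂.head h₂) ≤ r := by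
  rw [List.chain'_append] at hc
  exact hc.2.2 _ (by rw [List.getLast?_eq_getLast h₁]; rfl) _
    (by rw [List.head?_eq_head h₂]; rfl)

theorem del_step {l₁ l₂ : List X} {y : X} (h₁ : l₁ ≠ []) (h₂ : l₂ ≠ [])
    (hp : IsPathOf d r (l₁ ++ y :: l₂)) (hq : IsPathOf d r (l₁ ++ l₂)) :
    PathEquiv d r (l₁ ++ y :: l₂) (l₁ ++ l₂) :=
  Relation.EqvGen.symm _ _ (Relation.EqvGen.rel _ _ ⟨hq, hp, l₁, l₂, y, h₁, h₂, rfl, rfl⟩)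

theorem ins_step {l₁ l₂ : List X} {y : X} (h₁ : l₁ ≠ []) (h₂ : l₂ ≠ [])
    (hp : IsPathOf d r (l₁ ++ l₂)) (hq : IsPathOf d r (l₁ ++ y :: l₂)) :
    PathEquiv d r (l₁ ++ l₂) (l₁ ++ y :: l₂) :=
  Relation.EqvGen.rel _ _ ⟨hp, hq, l₁, l₂, y, h₁, h₂, rfl, rfl⟩

end BddAux

namespace BddAux

variable {G : Type*} [Group G] (S : Set G)

def lv (l : S × Bool) : G := bif l.2 then (l.1 : G) else (l.1 : G)⁻¹

def ev (w : List (S × Bool)) : G := (w.map (lv S)).prod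

@[simp] theorem ev_nil : ev S [] = 1 := rfl
@[simp] theorem ev_cons (l : S × Bool) (w : List (S × Bool)) :
    ev S (l :: w) = lv S l * ev S w := by simp [ev]
@[simp] theorem ev_append (w₁ w₂ : List (S × Bool)) :
    ev S (w₁ ++ w₂) = ev S w₁ * ev S w₂ := by simp [ev]
@[simp] theorem ev_singleton (l : S × Bool) : ev S [l] = lv S l := by simp [ev]

theorem lift_mk (w : List (S × Bool)) :
    FreeGroup.lift (fun s : S => (s : G)) (FreeGroup.mk w) = ev S w := by
  rw [FreeGroup.lift_mk]; rfl

theorem lv_mem (l : S × Bool) : lv S l ∈ S ∪ S⁻¹ := by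
  rcases l with ⟨s, b⟩
  cases b
  · exact Or.inr (by simp [lv, s.2])
  · exact Or.inl (by simp [lv, s.2])

theorem lv_not (s : S) (b : Bool) : lv S (s, !b) = (lv S (s, b))⁻¹ := by
  cases b <;> simp [lv]

theorem ev_invRev (w : List (S × Bool)) : ev S (FreeGroup.invRev w) = (ev S w)⁻¹ := by
  rw [← lift_mk, ← FreeGroup.inv_mk, map_inv, lift_mk]

@[simp] theorem invRev_length (w : List (S × Bool)) :
    (FreeGroup.invRev w).length = w.length := by simp [FreeGroup.invRev]

noncomputable def wlen (x : G) : ℕ := sInf {n : ℕ | x ∈ (S ∪ S⁻¹) ^ n}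

theorem wordDist_eq (g h : G) : wordDist S g h = (wlen S (g⁻¹ * h) : ℝ) := rfl

theorem list_prod_mem_pow {s : Set G} : ∀ {l : List G}, (∀ y ∈ l, y ∈ s) →
    l.prod ∈ s ^ l.length := by
  intro l
  induction l with
  | nil => intro _; simp [Set.mem_one]
  | cons a t ih =>
    intro h
    rw [List.prod_cons, List.length_cons, pow_succ']
    exact Set.mul_mem_mul (h a (by simp)) (ih fun y hy => h y (List.mem_cons_of_mem _ hy))

theorem exists_list_of_mem_pow {s : Set G} : ∀ {n : ℕ} {x : G}, x ∈ s ^ n →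
    ∃ l : List G, l.length = n ∧ (∀ y ∈ l, y ∈ s) ∧ l.prod = x := by
  intro n
  induction n with
  | zero => intro x hx; rw [pow_zero, Set.mem_one] at hx; exact ⟨[], rfl, by simp, hx.symm⟩
  | succ m ih =>
    intro x hx
    rw [pow_succ] at hx
    obtain ⟨y, hy, t, ht, rfl⟩ := Set.mem_mul.1 hx
    obtain ⟨l, hl, hmem, rfl⟩ := ih hy
    refine ⟨l ++ [t], by simp [hl], ?_, by simp⟩
    intro z hz
    rcases List.mem_append.1 hz with h | h
    · exact hmem z h
    · rwa [List.mem_singleton.1 h]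

variable {S} (hS : Subgroup.closure S = ⊤)

include hS in
theorem wset_nonempty (x : G) : {n : ℕ | x ∈ (S ∪ S⁻¹) ^ n}.Nonempty := by
  have hx : x ∈ Subgroup.closure S := hS ▸ Subgroup.mem_top x
  have h' : x ∈ Submonoid.closure (S ∪ S⁻¹) := by
    rw [← Subgroup.closure_toSubmonoid]; exact hx
  obtain ⟨l, h1, h2⟩ := Submonoid.exists_list_of_mem_closure h'
  exact ⟨l.length, h2 ▸ list_prod_mem_pow h1⟩

include hS in
theorem mem_pow_wlen (x : G) : x ∈ (S ∪ S⁻¹) ^ (wlen S x) :=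
  Nat.sInf_mem (wset_nonempty hS x)

theorem wlen_le {x : G} {n : ℕ} (h : x ∈ (S ∪ S⁻¹) ^ n) : wlen S x ≤ n := Nat.sInf_le h

@[simp] theorem wlen_one : wlen S (1 : G) = 0 :=
  Nat.le_zero.1 (wlen_le (by simp [Set.mem_one]))

include hS in
theorem wlen_mul (x y : G) : wlen S (x * y) ≤ wlen S x + wlen S y :=
  wlen_le (by rw [pow_add]; exact Set.mul_mem_mul (mem_pow_wlen hS x) (mem_pow_wlen hS y))

theorem union_inv_symm : (S ∪ S⁻¹)⁻¹ = S ∪ S⁻¹ := by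
  rw [Set.union_inv, inv_inv, Set.union_comm]

theorem mem_pow_inv {x : G} {n : ℕ} (h : x ∈ (S ∪ S⁻¹) ^ n) : x⁻¹ ∈ (S ∪ S⁻¹) ^ n := by
  have : x⁻¹ ∈ ((S ∪ S⁻¹) ^ n)⁻¹ := by simpa using h
  rwa [← inv_pow, union_inv_symm] at this

include hS in
theorem wlen_inv (x : G) : wlen S x⁻¹ = wlen S x := by
  refine le_antisymm (wlen_le (mem_pow_inv (mem_pow_wlen hS x))) ?_
  have := wlen_le (mem_pow_inv (mem_pow_wlen hS x⁻¹))
  simpa using this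

theorem wlen_letter {t : G} (h : t ∈ S ∪ S⁻¹) : wlen S t ≤ 1 := wlen_le (by rwa [pow_one])

theorem wlen_ev_le (w : List (S × Bool)) : wlen S (ev S w) ≤ w.length := by
  have := list_prod_mem_pow (s := S ∪ S⁻¹) (l := w.map (lv S)) (by
    intro y hy; obtain ⟨l, _, rfl⟩ := List.mem_map.1 hy; exact lv_mem S l)
  simpa [ev] using wlen_le this

theorem wd_self (g : G) : wordDist S g g = 0 := by simp [wordDist_eq]

theorem wd_nonneg (g h : G) : 0 ≤ wordDist S g h := by
  rw [wordDist_eq]; positivity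

theorem wd_letter (g : G) (l : S × Bool) : wordDist S g (g * lv S l) ≤ 1 := by
  rw [wordDist_eq]
  have : wlen S (g⁻¹ * (g * lv S l)) ≤ 1 := by
    rw [inv_mul_cancel_left]; exact wlen_letter (lv_mem S l)
  exact_mod_cast this

end BddAux
namespace BddAux

variable {G : Type*} [Group G] (S : Set G)

/-- the list of proper partial products -/
def ptr (x : G) : List (S × Bool) → List G
  | [] => []
  | l :: w => x :: ptr (x * lv S l) w

@[simp] theorem ptr_nil (x : G) : ptr S x [] = [] := rfl
@[simp] theorem ptr_cons (x : G) (l : S × Bool) (w : List (S × Bool)) :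
    ptr S x (l :: w) = x :: ptr S (x * lv S l) w := rfl

theorem ptr_append (x : G) (w₁ w₂ : List (S × Bool)) :
    ptr S x (w₁ ++ w₂) = ptr S x w₁ ++ ptr S (x * ev S w₁) w₂ := by
  induction w₁ generalizing x with
  | nil => simp
  | cons l w ih => simp [ih, mul_assoc]

@[simp] theorem ptr_singleton (x : G) (l : S × Bool) : ptr S x [l] = [x] := rfl

theorem head?_ptr (x : G) {w : List (S × Bool)} (h : w ≠ []) :
    (ptr S x w).head? = some x := by
  cases w with
  | nil => exact absurd rfl h
  | cons l w => simp

/-- the full trail of a word -/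
def tr (x : G) (w : List (S × Bool)) : List G := ptr S x w ++ [x * ev S w]

theorem tr_nil (x : G) : tr S x [] = [x] := by simp [tr]

theorem tr_cons (x : G) (l : S × Bool) (w : List (S × Bool)) :
    tr S x (l :: w) = x :: tr S (x * lv S l) w := by simp [tr, mul_assoc]

theorem tr_ne_nil (x : G) (w : List (S × Bool)) : tr S x w ≠ [] := by simp [tr]

theorem head?_tr (x : G) (w : List (S × Bool)) : (tr S x w).head? = some x := by
  cases w with
  | nil => simp [tr_nil]
  | cons l w => rw [tr_cons]; rfl

theorem getLast?_tr (x : G) (w : List (S × Bool)) :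
    (tr S x w).getLast? = some (x * ev S w) := by
  simp [tr, List.getLast?_concat]

variable {S}

theorem chain'_tr {r : ℝ} (hr : 1 ≤ r) (x : G) (w : List (S × Bool)) :
    (tr S x w).Chain' (fun a b => wordDist S a b ≤ r) := by
  induction w generalizing x with
  | nil => simp [tr_nil]
  | cons l w ih =>
    rw [tr_cons, List.chain'_cons']
    refine ⟨?_, ih (x * lv S l)⟩
    intro y hy
    rw [head?_tr] at hy
    cases hy
    exact (wd_letter x l).trans hr

theorem isPath_tr {r : ℝ} (hr : 1 ≤ r) (x : G) (w : List (S × Bool)) :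
    IsPathOf (wordDist S) r (tr S x w) :=
  ⟨tr_ne_nil S x w, chain'_tr hr x w⟩

theorem getLast?_ptr (x : G) {w : List (S × Bool)} (h : w ≠ []) :
    (ptr S x w).getLast? = some (x * ev S w.dropLast) := by
  induction w using List.reverseRecOn with
  | nil => exact absurd rfl h
  | append_singleton w' l _ =>
    rw [ptr_append, ptr_singleton, List.getLast?_concat, List.dropLast_concat]

theorem isPath_ptr {r : ℝ} (hr : 1 ≤ r) (x : G) {w : List (S × Bool)} (h : w ≠ []) :
    IsPathOf (wordDist S) r (ptr S x w) := by
  induction w generalizing x with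
  | nil => exact absurd rfl h
  | cons l w ih =>
    rcases eq_or_ne w [] with rfl | hw
    · exact ⟨by simp, by simp⟩
    · refine ⟨by simp, ?_⟩
      rw [ptr_cons, List.chain'_cons']
      refine ⟨?_, (ih (x * lv S l) hw).2⟩
      intro y hy
      rw [head?_ptr S _ hw] at hy
      cases hy
      exact (wd_letter x l).trans hr

variable (S)

/-- the guarded trail of a word -/
def Eb (x : G) (w : List (S × Bool)) : List G :=
  tr S x w ++ [x * ev S w]

theorem Eb_eq_ptr (x : G) (w : List (S × Bool)) :
    Eb S x w = ptr S x w ++ [x * ev S w, x * ev S w] := by simp [Eb, tr]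

theorem Eb_ne_nil (x : G) (w : List (S × Bool)) : Eb S x w ≠ [] := by simp [Eb]

theorem two_le_length_Eb (x : G) (w : List (S × Bool)) : 2 ≤ (Eb S x w).length := by
  rw [Eb_eq_ptr]; simp

theorem head?_Eb (x : G) (w : List (S × Bool)) : (Eb S x w).head? = some x := by
  rw [Eb, List.head?_append, head?_tr]; rfl

theorem getLast?_Eb (x : G) (w : List (S × Bool)) :
    (Eb S x w).getLast? = some (x * ev S w) := by
  simp [Eb, List.getLast?_concat]

theorem Eb_append (x : G) (w₁ w₂ : List (S × Bool)) :
    Eb S x (w₁ ++ w₂) = ptr S x w₁ ++ Eb S (x * ev S w₁) w₂ := by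
  simp [Eb, tr, ptr_append, mul_assoc]

variable {S}

theorem isPath_Eb {r : ℝ} (hr : 1 ≤ r) (x : G) (w : List (S × Bool)) :
    IsPathOf (wordDist S) r (Eb S x w) := by
  have h0 : (0:ℝ) ≤ r := le_trans zero_le_one hr
  refine ⟨Eb_ne_nil S x w, ?_⟩
  rw [Eb, List.chain'_append]
  refine ⟨chain'_tr hr x w, List.chain'_singleton _, ?_⟩
  intro a ha b hb
  rw [getLast?_tr] at ha
  cases ha
  cases hb
  rw [wd_self]; exact h0

theorem head?_ptr_app {x : G} {w : List (S × Bool)} {M : List G}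
    (hM : M.head? = some (x * ev S w)) :
    (ptr S x w ++ M).head? = some x := by
  cases w with
  | nil => simpa using hM
  | cons l w => simp

end BddAux
namespace BddAux

section Generic
variable {X : Type*} {d : X → X → ℝ} {r : ℝ} {p q : List X}

theorem equiv_cons {a : X} (h : PathEquiv d r p q) (hp : IsPathOf d r (a :: p)) :
    PathEquiv d r (a :: p) (a :: q) := by
  have := equiv_context (l₁ := [a]) (l₂ := ([] : List X)) h (by simpa using hp)
  simpa using this

theorem isPathOf_cons {a : X} (hp : IsPathOf d r p)
    (hj : ∀ b ∈ p.head?, d a b ≤ r) : IsPathOf d r (a :: p) := by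
  refine ⟨by simp, ?_⟩
  rw [List.chain'_cons']
  exact ⟨hj, hp.2⟩

end Generic

variable {G : Type*} [Group G] {S : Set G} (hS : Subgroup.closure S = ⊤)

theorem Eb_nil (x : G) : Eb S x [] = [x, x] := by simp [Eb, tr]

theorem ptr_ne_nil (x : G) {w : List (S × Bool)} (h : w ≠ []) : ptr S x w ≠ [] := by
  cases w with
  | nil => exact absurd rfl h
  | cons l w => simp

include hS

theorem wd_mul_ev (x : G) {r : ℝ} (u : List (S × Bool)) (hu : (u.length : ℝ) ≤ r) :
    wordDist S (x * ev S u) x ≤ r := by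
  rw [wordDist_eq, mul_inv_rev, mul_assoc, inv_mul_cancel, mul_one, wlen_inv hS]
  exact le_trans (Nat.cast_le.mpr (wlen_ev_le _)) hu

theorem wd_ev_right (x : G) {r : ℝ} (u : List (S × Bool)) (hu : (u.length : ℝ) ≤ r) :
    wordDist S x (x * ev S u) ≤ r := by
  rw [wordDist_eq, inv_mul_cancel_left]
  exact le_trans (Nat.cast_le.mpr (wlen_ev_le _)) hu

theorem detour_del {r : ℝ} (hr : 1 ≤ r) {y : G} {M : List G} (hM : M.head? = some y)
    (hlen : 2 ≤ M.length) (hMp : IsPathOf (wordDist S) r M) :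
    ∀ v : List (S × Bool), (v.length : ℝ) ≤ r →
      PathEquiv (wordDist S) r (ptr S y v ++ M) M := by
  have h0 : (0:ℝ) ≤ r := le_trans zero_le_one hr
  have hMtail : M.tail ≠ [] := by
    have h2 := List.length_tail (l := M)
    intro h
    rw [h] at h2
    simp at h2
    omega
  have hMeq : y :: M.tail = M := List.cons_head?_tail hM
  intro v
  induction v using List.reverseRecOn with
  | nil => intro _; simp only [ptr_nil, List.nil_append]; exact pequiv_refl M
  | append_singleton v' l ih =>
    intro hv
    have hv' : ((v'.length : ℝ)) ≤ r := by
      refine le_trans ?_ hv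
      exact_mod_cast by simp
    rw [ptr_append, ptr_singleton]
    rcases eq_or_ne v' [] with rfl | hv'ne
    · simp only [ptr_nil, List.nil_append, ev_nil, mul_one]
      have hp : IsPathOf (wordDist S) r ([y] ++ M) := by
        refine isPathOf_append ⟨by simp, by simp⟩ hMp ?_
        intro a ha b hb
        simp only [List.getLast?_singleton, Option.mem_def, Option.some.injEq] at ha
        rw [hM] at hb
        cases hb
        rw [← ha, wd_self]
        exact h0
      have hq : IsPathOf (wordDist S) r ([y] ++ M.tail) := by
        rw [show ([y] ++ M.tail : List G) = M from hMeq]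
        exact hMp
      conv_lhs => rw [← hMeq]
      conv_rhs => rw [← hMeq]
      exact del_step (by simp) hMtail (by rw [← hMeq] at hp; exact hp) hq
    · have hptrne : ptr S y v' ≠ [] := ptr_ne_nil y hv'ne
      have hp : IsPathOf (wordDist S) r (ptr S y v' ++ (y * ev S v') :: M) := by
        have := isPathOf_append (l₁ := tr S y v') (l₂ := M) (isPath_tr hr y v') hMp ?_
        · rw [tr, List.append_assoc] at this
          exact this
        · intro a ha b hb
          rw [getLast?_tr] at ha
          rw [hM] at hb
          cases ha; cases hb
          exact wd_mul_ev hS y v' hv'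
      have hq : IsPathOf (wordDist S) r (ptr S y v' ++ M) := by
        refine isPathOf_append (isPath_ptr hr y hv'ne) hMp ?_
        intro a ha b hb
        rw [getLast?_ptr y hv'ne] at ha
        rw [hM] at hb
        cases ha; cases hb
        refine wd_mul_ev hS y v'.dropLast ?_
        refine le_trans ?_ hv'
        exact_mod_cast (List.length_dropLast (xs := v')) ▸ Nat.sub_le _ _
      have e1 : PathEquiv (wordDist S) r (ptr S y v' ++ (y * ev S v') :: M) (ptr S y v' ++ M) :=
        del_step hptrne hMp.1 hp hq
      rw [List.append_assoc, List.singleton_append]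
      exact pequiv_trans e1 (ih hv')

theorem detour_ins {r : ℝ} (hr : 1 ≤ r) {M : List G}
    (hMp : IsPathOf (wordDist S) r M) (hlen : 2 ≤ M.length) :
    ∀ (v : List (S × Bool)) (g : G), M.head? = some (g * ev S v) → (v.length : ℝ) ≤ r →
      PathEquiv (wordDist S) r (g :: M) (ptr S g v ++ M) := by
  have h0 : (0:ℝ) ≤ r := le_trans zero_le_one hr
  intro v
  induction v with
  | nil =>
    intro g hM _
    simp only [ev_nil, mul_one] at hM
    have hMtail : M.tail ≠ [] := by
      have h2 := List.length_tail (l := M)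
      intro h
      rw [h] at h2
      simp at h2
      omega
    have hMeq : g :: M.tail = M := List.cons_head?_tail hM
    have hp : IsPathOf (wordDist S) r (g :: M) := by
      refine isPathOf_cons hMp ?_
      intro b hb
      rw [hM] at hb
      cases hb
      rw [wd_self]; exact h0
    simp only [ptr_nil, List.nil_append]
    conv_lhs => rw [← hMeq]
    conv_rhs => rw [← hMeq]
    refine del_step (l₁ := [g]) (by simp) hMtail ?_ ?_
    · rw [← hMeq] at hp; exact hp
    · rw [show ([g] ++ M.tail : List G) = M from hMeq]
      exact hMp
  | cons l v ih =>
    intro g hM hv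
    have hv' : ((v.length : ℝ)) ≤ r := by
      refine le_trans ?_ hv
      exact_mod_cast by simp
    have hM' : M.head? = some ((g * lv S l) * ev S v) := by
      rw [hM]; congr 1; rw [mul_assoc, ← ev_cons]
    -- step 1 : insert g * lv S l
    have hstep1 : IsPathOf (wordDist S) r (g :: (g * lv S l) :: M) := by
      refine isPathOf_cons (isPathOf_cons hMp ?_) ?_
      · intro b hb
        rw [hM'] at hb
        cases hb
        exact wd_ev_right hS (g * lv S l) v hv'
      · intro b hb
        simp only [List.head?_cons, Option.mem_def, Option.some.injEq] at hb
        cases hb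
        exact (wd_letter g l).trans hr
    have hp0 : IsPathOf (wordDist S) r (g :: M) := by
      refine isPathOf_cons hMp ?_
      intro b hb
      rw [hM] at hb
      cases hb
      exact wd_ev_right hS g (l :: v) hv
    have e1 : PathEquiv (wordDist S) r (g :: M) (g :: (g * lv S l) :: M) := by
      refine ins_step (l₁ := [g]) (l₂ := M) (by simp) hMp.1 hp0 hstep1
    -- step 2 : expand the rest by IH, in context
    have e2 : PathEquiv (wordDist S) r ((g * lv S l) :: M) (ptr S (g * lv S l) v ++ M) :=
      ih (g * lv S l) hM' hv'
    have e3 : PathEquiv (wordDist S) r (g :: (g * lv S l) :: M)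
        (g :: (ptr S (g * lv S l) v ++ M)) :=
      equiv_cons e2 hstep1
    rw [ptr_cons, List.cons_append]
    exact pequiv_trans e1 e3

theorem red_step_equiv {r : ℝ} (hr : 1 ≤ r) (x : G) {w w' : List (S × Bool)}
    (h : FreeGroup.Red.Step w w') :
    PathEquiv (wordDist S) r (Eb S x w) (Eb S x w') := by
  have h0 : (0:ℝ) ≤ r := le_trans zero_le_one hr
  cases h with
  | @not L₁ L₂ s b =>
    set y := x * ev S L₁ with hy
    set t := lv S (s, b) with ht
    have hev2 : ∀ c : List (S × Bool), ev S ((s, b) :: (s, !b) :: c) = ev S c := by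
      intro c
      rw [ev_cons, ev_cons, lv_not, ← mul_assoc, mul_inv_cancel, one_mul]
    -- decompose Eb S x w
    have hw : Eb S x (L₁ ++ (s, b) :: (s, !b) :: L₂)
        = ptr S x L₁ ++ ([y] ++ ((y * t) :: Eb S y L₂)) := by
      rw [Eb_append]
      congr 1
      rw [Eb_eq_ptr, ptr_cons, ptr_cons, ← ht, lv_not, mul_inv_cancel_right, hev2]
      rw [Eb_eq_ptr]
      simp [hy]
    have hw' : Eb S x (L₁ ++ L₂) = ptr S x L₁ ++ Eb S y L₂ := Eb_append S x L₁ L₂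
    have hpw : IsPathOf (wordDist S) r (Eb S x (L₁ ++ (s, b) :: (s, !b) :: L₂)) :=
      isPath_Eb hr x _
    have hpw' : IsPathOf (wordDist S) r (Eb S x (L₁ ++ L₂)) := isPath_Eb hr x _
    have hEbhead : (Eb S y L₂).head? = some y := head?_Eb S y L₂
    have hEbtail : (Eb S y L₂).tail ≠ [] := by
      have h2 := List.length_tail (l := Eb S y L₂)
      have h3 := two_le_length_Eb (S := S) y L₂
      intro h
      rw [h] at h2
      simp at h2
      omega
    have hEbeq : y :: (Eb S y L₂).tail = Eb S y L₂ := List.cons_head?_tail hEbhead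
    -- mid path : ptr S x L₁ ++ [y] ++ Eb S y L₂
    have hmid : IsPathOf (wordDist S) r ((ptr S x L₁ ++ [y]) ++ Eb S y L₂) := by
      have h1 : ptr S x L₁ ++ [y] = tr S x L₁ := by rw [tr, hy]
      rw [h1]
      refine isPathOf_append (isPath_tr hr x L₁) (isPath_Eb hr y L₂) ?_
      intro a ha b hb
      rw [getLast?_tr] at ha
      rw [hEbhead] at hb
      cases ha; cases hb
      rw [← hy, wd_self]
      exact h0
    -- first deletion : remove y * t
    have e1 : PathEquiv (wordDist S) r ((ptr S x L₁ ++ [y]) ++ ((y * t) :: Eb S y L₂))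
        ((ptr S x L₁ ++ [y]) ++ Eb S y L₂) := by
      refine del_step (by simp) (Eb_ne_nil S y L₂) ?_ hmid
      rw [hw] at hpw
      rw [← List.append_assoc] at hpw
      exact hpw
    -- second deletion : remove duplicate y
    have e2 : PathEquiv (wordDist S) r ((ptr S x L₁ ++ [y]) ++ Eb S y L₂)
        (ptr S x L₁ ++ Eb S y L₂) := by
      have hshow : ((ptr S x L₁ ++ [y]) ++ (Eb S y L₂).tail : List G)
          = ptr S x L₁ ++ (y :: (Eb S y L₂).tail) := by simp
      have h₁ : IsPathOf (wordDist S) r ((ptr S x L₁ ++ [y]) ++ (y :: (Eb S y L₂).tail)) := by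
        rw [hEbeq]; exact hmid
      have h₂ : IsPathOf (wordDist S) r ((ptr S x L₁ ++ [y]) ++ (Eb S y L₂).tail) := by
        rw [hshow, hEbeq, ← hw']
        exact hpw'
      have hd := del_step (l₁ := ptr S x L₁ ++ [y]) (l₂ := (Eb S y L₂).tail) (y := y)
        (by simp) hEbtail h₁ h₂
      rw [hshow, hEbeq] at hd
      exact hd
    rw [hw, hw', ← List.append_assoc]
    exact pequiv_trans e1 e2

end BddAux
namespace BddAux

variable {G : Type*} [Group G] {S : Set G} (hS : Subgroup.closure S = ⊤)

include hS

theorem red_equiv {r : ℝ} (hr : 1 ≤ r) (x : G) {w w' : List (S × Bool)}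
    (h : FreeGroup.Red w w') :
    PathEquiv (wordDist S) r (Eb S x w) (Eb S x w') := by
  induction h with
  | refl => exact pequiv_refl _
  | tail _ h₂ ih => exact pequiv_trans ih (red_step_equiv hS hr x h₂)

theorem mk_eq_equiv {r : ℝ} (hr : 1 ≤ r) (x : G) {w w' : List (S × Bool)}
    (h : FreeGroup.mk w = FreeGroup.mk w') :
    PathEquiv (wordDist S) r (Eb S x w) (Eb S x w') := by
  obtain ⟨u, h1, h2⟩ := FreeGroup.Red.exact.1 h
  exact pequiv_trans (red_equiv hS hr x h1) (pequiv_symm (red_equiv hS hr x h2))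

theorem normalClosure_equiv {r : ℝ} (hr : 1 ≤ r) {R : Set (FreeGroup S)}
    (hR : ∀ ρ ∈ R, ∃ wρ : List (S × Bool),
      FreeGroup.mk wρ = ρ ∧ ((wρ.length : ℝ)) ≤ r ∧ ev S wρ = 1)
    (x : G) {w : List (S × Bool)} (hw : FreeGroup.mk w ∈ Subgroup.normalClosure R) :
    PathEquiv (wordDist S) r (Eb S x w) [x, x] := by
  classical
  -- get a list of (inverses of) conjugates of relators with product `mk w`
  have h1 : FreeGroup.mk w ∈ Submonoid.closure
      (Group.conjugatesOfSet R ∪ (Group.conjugatesOfSet R)⁻¹) := by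
    rw [← Subgroup.closure_toSubmonoid]
    exact hw
  obtain ⟨lc, hlc, hprod⟩ := Submonoid.exists_list_of_mem_closure h1
  clear h1 hw
  induction lc generalizing w with
  | nil =>
    simp only [List.prod_nil] at hprod
    have : FreeGroup.mk w = FreeGroup.mk ([] : List (S × Bool)) := by
      rw [← hprod]; rfl
    have h2 := mk_eq_equiv hS hr x this
    rwa [Eb_nil] at h2
  | cons q lc ih =>
    -- q is a conjugate of a relator or of its inverse
    have hq : ∃ (c : FreeGroup S) (wρ : List (S × Bool)),
        q = c * FreeGroup.mk wρ * c⁻¹ ∧ ((wρ.length : ℝ)) ≤ r ∧ ev S wρ = 1 := by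
      rcases hlc q (by simp) with h | h
      · obtain ⟨ρ, hρR, hconj⟩ := Group.mem_conjugatesOfSet_iff.1 h
        obtain ⟨c, hc⟩ := isConj_iff.1 hconj
        obtain ⟨wρ, hmk, hlen, hev⟩ := hR ρ hρR
        exact ⟨c, wρ, by rw [hmk, hc], hlen, hev⟩
      · rw [Set.mem_inv] at h
        obtain ⟨ρ, hρR, hconj⟩ := Group.mem_conjugatesOfSet_iff.1 h
        obtain ⟨c, hc⟩ := isConj_iff.1 hconj
        obtain ⟨wρ, hmk, hlen, hev⟩ := hR ρ hρR
        refine ⟨c, FreeGroup.invRev wρ, ?_, by simpa using hlen, by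
          rw [ev_invRev, hev, inv_one]⟩
        rw [← FreeGroup.inv_mk, hmk]
        have : q = (c * ρ * c⁻¹)⁻¹ := by rw [hc]; simp
        rw [this]
        group
    obtain ⟨c, wρ, hqeq, hlen, hev⟩ := hq
    set u := c.toWord with hu
    set tw := (lc.prod).toWord with htw
    have hmku : FreeGroup.mk u = c := FreeGroup.mk_toWord
    have hmktw : FreeGroup.mk tw = lc.prod := FreeGroup.mk_toWord
    -- the explicit word for (q :: lc).prod
    have hW : FreeGroup.mk (u ++ (wρ ++ (FreeGroup.invRev u ++ tw))) = FreeGroup.mk w := by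
      rw [← FreeGroup.mul_mk, ← FreeGroup.mul_mk, ← FreeGroup.mul_mk]
      rw [hmku, hmktw, ← FreeGroup.inv_mk, hmku]
      rw [← hprod, List.prod_cons, hqeq]
      group
    have e1 : PathEquiv (wordDist S) r (Eb S x w)
        (Eb S x (u ++ (wρ ++ (FreeGroup.invRev u ++ tw)))) :=
      mk_eq_equiv hS hr x hW.symm
    -- remove the relator detour
    set x' := x * ev S u with hx'
    have e2 : PathEquiv (wordDist S) r (Eb S x (u ++ (wρ ++ (FreeGroup.invRev u ++ tw))))
        (Eb S x (u ++ (FreeGroup.invRev u ++ tw))) := by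
      have hinner : PathEquiv (wordDist S) r
          (Eb S x' (wρ ++ (FreeGroup.invRev u ++ tw)))
          (Eb S x' (FreeGroup.invRev u ++ tw)) := by
        rw [Eb_append S x' wρ (FreeGroup.invRev u ++ tw), hev, mul_one]
        exact detour_del hS hr (head?_Eb S x' _) (two_le_length_Eb S x' _)
          (isPath_Eb hr x' _) wρ hlen
      have hctx := equiv_context (l₁ := ptr S x u) (l₂ := ([] : List G)) hinner (by
        rw [List.append_nil, ← Eb_append S x u (wρ ++ (FreeGroup.invRev u ++ tw))]
        exact isPath_Eb hr x _)
      rw [List.append_nil, List.append_nil] at hctx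
      rw [Eb_append S x u (wρ ++ (FreeGroup.invRev u ++ tw)),
        Eb_append S x u (FreeGroup.invRev u ++ tw)]
      exact hctx
    have e3 : PathEquiv (wordDist S) r (Eb S x (u ++ (FreeGroup.invRev u ++ tw)))
        (Eb S x tw) := by
      refine mk_eq_equiv hS hr x ?_
      rw [← FreeGroup.mul_mk, ← FreeGroup.mul_mk, ← FreeGroup.inv_mk, hmku, hmktw]
      group
    have e4 : PathEquiv (wordDist S) r (Eb S x tw) [x, x] :=
      ih (fun q' hq' => hlc q' (List.mem_cons_of_mem _ hq')) hmktw.symm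
    exact pequiv_trans e1 (pequiv_trans e2 (pequiv_trans e3 e4))



end BddAux
namespace BddAux

variable {G : Type*} [Group G] {S : Set G} (hS : Subgroup.closure S = ⊤)

theorem exists_letters : ∀ {l : List G}, (∀ y ∈ l, y ∈ S ∪ S⁻¹) →
    ∃ w : List (S × Bool), ev S w = l.prod ∧ w.length = l.length := by
  intro l
  induction l with
  | nil => intro _; exact ⟨[], by simp, rfl⟩
  | cons y l ih =>
    intro h
    obtain ⟨w, hev, hlen⟩ := ih fun z hz => h z (List.mem_cons_of_mem _ hz)
    rcases h y (by simp) with hy | hy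
    · exact ⟨(⟨y, hy⟩, true) :: w, by simp [lv, hev], by simp [hlen]⟩
    · rw [Set.mem_inv] at hy
      refine ⟨(⟨y⁻¹, hy⟩, false) :: w, by simp [lv, hev], by simp [hlen]⟩

include hS in
theorem exists_word (x : G) :
    ∃ w : List (S × Bool), ev S w = x ∧ w.length = wlen S x := by
  obtain ⟨l, hlen, hmem, hprod⟩ := exists_list_of_mem_pow (mem_pow_wlen hS x)
  obtain ⟨w, hev, hwlen⟩ := exists_letters hmem
  exact ⟨w, by rw [hev, hprod], by rw [hwlen, hlen]⟩

include hS in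
theorem wrd_spec (hne : S.Nonempty) (g h : G) :
    ∃ w : List (S × Bool), ev S w = g⁻¹ * h ∧ w.length ≤ wlen S (g⁻¹ * h) + 2 ∧ w ≠ [] := by
  obtain ⟨w₀, hev, hlen⟩ := exists_word hS (g⁻¹ * h)
  obtain ⟨t₀, ht₀⟩ := hne
  refine ⟨w₀ ++ [(⟨t₀, ht₀⟩, true), (⟨t₀, ht₀⟩, false)], ?_, by simp [hlen], by simp⟩
  simp [lv, hev]

noncomputable def wrd (hne : S.Nonempty) (g h : G) : List (S × Bool) :=
  Classical.choose (wrd_spec hS hne g h)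

theorem wrd_ev (hne : S.Nonempty) (g h : G) : ev S (wrd hS hne g h) = g⁻¹ * h :=
  (Classical.choose_spec (wrd_spec hS hne g h)).1

theorem wrd_len (hne : S.Nonempty) (g h : G) :
    (wrd hS hne g h).length ≤ wlen S (g⁻¹ * h) + 2 :=
  (Classical.choose_spec (wrd_spec hS hne g h)).2.1

theorem wrd_ne_nil (hne : S.Nonempty) (g h : G) : wrd hS hne g h ≠ [] :=
  (Classical.choose_spec (wrd_spec hS hne g h)).2.2

theorem wrd_len_real {r : ℝ} (hne : S.Nonempty) {g h : G} (hd : wordDist S g h ≤ r) :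
    ((wrd hS hne g h).length : ℝ) ≤ r + 2 := by
  have h1 := wrd_len hS hne g h
  have h2 : ((wlen S (g⁻¹ * h) : ℕ) : ℝ) ≤ r := hd
  calc ((wrd hS hne g h).length : ℝ) ≤ ((wlen S (g⁻¹ * h) + 2 : ℕ) : ℝ) := by exact_mod_cast h1
    _ ≤ r + 2 := by push_cast; linarith

theorem chain_dup {r : ℝ} (h0 : 0 ≤ r) {q : List G} {z : G}
    (h : (q ++ [z]).Chain' (fun a b => wordDist S a b ≤ r)) :
    (q ++ [z, z]).Chain' (fun a b => wordDist S a b ≤ r) := by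
  have : (q ++ [z, z] : List G) = (q ++ [z]) ++ [z] := by simp
  rw [this, List.chain'_append]
  refine ⟨h, List.chain'_singleton _, ?_⟩
  intro a ha b hb
  rw [List.getLast?_concat] at ha
  cases ha
  cases hb
  rw [wd_self]
  exact h0

include hS in
theorem expand {r r' : ℝ} (hne : S.Nonempty) (hr0 : 0 ≤ r) (hr'1 : 1 ≤ r')
    (hrr' : r + 2 ≤ r') :
    ∀ (p : List G) (g z : G), ((g :: p) ++ [z]).Chain' (fun a b => wordDist S a b ≤ r) →
      ∃ w : List (S × Bool), ev S w = g⁻¹ * z ∧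
        PathEquiv (wordDist S) r' ((g :: p) ++ [z, z]) (Eb S g w) := by
  have hrle : r ≤ r' := by linarith
  have h0' : (0:ℝ) ≤ r' := by linarith
  intro p
  induction p with
  | nil =>
    intro g z hc
    have hd : wordDist S g z ≤ r := by
      simp only [List.cons_append, List.nil_append, List.chain'_cons, List.chain'_singleton,
        and_true] at hc
      exact hc
    refine ⟨wrd hS hne g z, wrd_ev hS hne g z, ?_⟩
    have hM : IsPathOf (wordDist S) r' [z, z] := by
      refine ⟨by simp, ?_⟩
      simp only [List.chain'_cons, List.chain'_singleton, and_true]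
      rw [wd_self]; exact h0'
    have hhead : ([z, z] : List G).head? = some (g * ev S (wrd hS hne g z)) := by
      rw [wrd_ev hS hne g z, mul_inv_cancel_left]
      rfl
    have := detour_ins hS hr'1 hM (by simp) (wrd hS hne g z) g hhead
      (le_trans (wrd_len_real hS hne hd) hrr')
    have hEb : Eb S g (wrd hS hne g z) = ptr S g (wrd hS hne g z) ++ [z, z] := by
      rw [Eb_eq_ptr, wrd_ev hS hne g z, mul_inv_cancel_left]
    rw [hEb]
    simpa using this
  | cons g' p ih =>
    intro g z hc
    have hc' : ((g' :: p) ++ [z]).Chain' (fun a b => wordDist S a b ≤ r) := by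
      rw [List.cons_append, List.chain'_cons'] at hc
      exact hc.2
    have hdgg' : wordDist S g g' ≤ r := by
      rw [List.cons_append, List.chain'_cons'] at hc
      have := hc.1 g' (by simp)
      exact this
    obtain ⟨w', hev', hequiv'⟩ := ih g' z hc'
    -- the path (g :: (g' :: p) ++ [z, z]) at r'
    have hpath : IsPathOf (wordDist S) r' ((g :: (g' :: p)) ++ [z, z]) := by
      refine ⟨by simp, ?_⟩
      have := chain_dup (S := S) hr0 (q := g :: g' :: p) (z := z) (by exact hc)
      exact this.imp fun a b hab => le_trans hab hrle
    have e1 : PathEquiv (wordDist S) r' ((g :: (g' :: p)) ++ [z, z])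
        (g :: Eb S g' w') := by
      have hp2 : IsPathOf (wordDist S) r' (g :: ((g' :: p) ++ [z, z])) := by
        rw [show (g :: ((g' :: p) ++ [z, z]) : List G) = (g :: (g' :: p)) ++ [z, z] by simp]
        exact hpath
      have := equiv_cons hequiv' hp2
      rw [show ((g :: (g' :: p)) ++ [z, z] : List G) = g :: ((g' :: p) ++ [z, z]) by simp]
      exact this
    set w₀ := wrd hS hne g g' with hw₀
    have hevw₀ : ev S w₀ = g⁻¹ * g' := wrd_ev hS hne g g'
    have e2 : PathEquiv (wordDist S) r' (g :: Eb S g' w') (ptr S g w₀ ++ Eb S g' w') := by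
      have hhead : (Eb S g' w').head? = some (g * ev S w₀) := by
        rw [head?_Eb, hevw₀, mul_inv_cancel_left]
      exact detour_ins hS hr'1 (isPath_Eb hr'1 g' w') (two_le_length_Eb S g' w') w₀ g hhead
        (le_trans (wrd_len_real hS hne hdgg') hrr')
    refine ⟨w₀ ++ w', by rw [ev_append, hevw₀, hev', mul_assoc, mul_inv_cancel_left], ?_⟩
    have hEb : Eb S g (w₀ ++ w') = ptr S g w₀ ++ Eb S g' w' := by
      rw [Eb_append S g w₀ w', hevw₀, mul_inv_cancel_left]
    rw [hEb]
    exact pequiv_trans e1 e2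

end BddAux
namespace BddAux

variable {G : Type*} [Group G] {S : Set G} (hS : Subgroup.closure S = ⊤)

include hS in
theorem subsingleton_of_empty (h : S = ∅) : Subsingleton G := by
  subst h
  rw [Subgroup.closure_empty] at hS
  refine ⟨fun a b => ?_⟩
  have ha : a ∈ (⊥ : Subgroup G) := hS ▸ Subgroup.mem_top a
  have hb : b ∈ (⊥ : Subgroup G) := hS ▸ Subgroup.mem_top b
  rw [Subgroup.mem_bot] at ha hb
  rw [ha, hb]

/-- trivial simple connectedness for subsingleton groups -/
theorem loop_replicate_of_subsingleton [Subsingleton G] {r : ℝ} {x : G} {p : List G}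
    (hp : IsLoopOf (wordDist S) r x p) :
    ∃ k : ℕ, PathEquiv (wordDist S) r p (List.replicate (k + 1) x) := by
  obtain ⟨⟨hne, _⟩, hh, _⟩ := hp
  refine ⟨p.length - 1, ?_⟩
  have hlen : p.length - 1 + 1 = p.length := Nat.succ_pred_eq_of_pos (List.length_pos_iff.2 hne)
  have : p = List.replicate (p.length - 1 + 1) x := by
    rw [hlen]
    exact List.eq_replicate_iff.2 ⟨rfl, fun b _ => Subsingleton.elim b x⟩
  rw [← this]
  exact pequiv_refl p

include hS in
theorem bp_to_csc (h : BoundedlyPresentedBy G S) :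
    CoarselySimplyConnectedWith (wordDist S) := by
  obtain ⟨n, R, hword, hsurj, hker⟩ := h
  constructor
  · -- coarse connectedness
    refine ⟨1, fun x y => ?_⟩
    obtain ⟨w, hev, -⟩ := exists_word hS (x⁻¹ * y)
    exact ⟨tr S x w, isPath_tr le_rfl x w, head?_tr S x w,
      by rw [getLast?_tr, hev, mul_inv_cancel_left]⟩
  · intro r
    rcases eq_or_ne S ∅ with hSe | hSe
    · -- trivial group
      have := subsingleton_of_empty hS hSe
      exact ⟨r, le_rfl, fun x p hp => loop_replicate_of_subsingleton hp⟩
    have hne : S.Nonempty := Set.nonempty_iff_ne_empty.2 hSe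
    refine ⟨max r 0 + (n + 3 : ℝ), by
      have : (0:ℝ) ≤ (n:ℝ) + 3 := by positivity
      have := le_max_left r 0
      linarith, fun x p hp => ?_⟩
    set r' := max r 0 + (n + 3 : ℝ) with hr'
    have hr'1 : 1 ≤ r' := by
      have : (0:ℝ) ≤ max r 0 := le_max_right r 0
      have h3 : (0:ℝ) ≤ (n:ℝ) := by positivity
      rw [hr']; linarith
    obtain ⟨⟨hpne, hchain⟩, hhead, hlast⟩ := hp
    -- p starts with x
    obtain ⟨p₁, rfl⟩ : ∃ p₁, p = x :: p₁ :=
      ⟨p.tail, (List.cons_head?_tail hhead).symm⟩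
    rcases eq_or_ne p₁ [] with rfl | hp₁ne
    · exact ⟨0, pequiv_refl _⟩
    -- r is nonnegative
    have hr0 : 0 ≤ r := by
      obtain ⟨b, p₂, rfl⟩ : ∃ b p₂, p₁ = b :: p₂ := by
        cases p₁ with
        | nil => exact absurd rfl hp₁ne
        | cons b p₂ => exact ⟨b, p₂, rfl⟩
      rw [List.chain'_cons] at hchain
      exact le_trans (wd_nonneg x b) hchain.1
    have hmax : max r 0 = r := max_eq_left hr0
    have hrr2 : r + 2 ≤ r' := by
      have h3 : (0:ℝ) ≤ (n:ℝ) := by positivity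
      rw [hr', hmax]; linarith
    have hnr' : (n : ℝ) ≤ r' := by
      have : (0:ℝ) ≤ max r 0 := le_max_right r 0
      rw [hr']; linarith
    have hrler' : r ≤ r' := by linarith
    -- p₁ ends with x
    have hlast₁ : p₁.getLast hp₁ne = x := by
      have h2 : (x :: p₁).getLast? = p₁.getLast? := by
        cases p₁ with
        | nil => exact absurd rfl hp₁ne
        | cons b t => rw [List.getLast?_cons_cons]
      rw [h2, List.getLast?_eq_getLast hp₁ne] at hlast
      exact Option.some_inj.1 hlast
    have hp₁eq : p₁ = p₁.dropLast ++ [x] := by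
      conv_lhs => rw [← List.dropLast_append_getLast hp₁ne]
      rw [hlast₁]
    -- expand the loop into a word trail
    have hchain' : ((x :: p₁.dropLast) ++ [x]).Chain'
        (fun a b => wordDist S a b ≤ r) := by
      rw [List.cons_append, ← hp₁eq]
      exact hchain
    obtain ⟨w, hevw, hequiv⟩ := expand hS hne hr0 hr'1 hrr2 p₁.dropLast x x hchain'
    -- p is equivalent to the duplicated-end version
    have e0 : PathEquiv (wordDist S) r' (x :: p₁) ((x :: p₁.dropLast) ++ [x, x]) := by
      have heq1 : (x :: p₁ : List G) = (x :: p₁.dropLast) ++ [x] := by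
        rw [List.cons_append, ← hp₁eq]
      have heq2 : ((x :: p₁.dropLast) ++ [x, x] : List G)
          = (x :: p₁.dropLast) ++ x :: [x] := rfl
      have hp' : IsPathOf (wordDist S) r' (x :: p₁) :=
        ⟨by simp, hchain.imp fun a b hab => le_trans hab hrler'⟩
      have hq' : IsPathOf (wordDist S) r' ((x :: p₁.dropLast) ++ [x, x]) :=
        ⟨by simp, (chain_dup (S := S) hr0 hchain').imp fun a b hab => le_trans hab hrler'⟩
      rw [heq1, heq2]
      refine ins_step (by simp) (by simp) ?_ ?_
      · rw [← heq1]; exact hp'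
      · rw [← heq2]; exact hq'
    -- the word w lies in the kernel, hence the normal closure
    have hwker : FreeGroup.mk w ∈ Subgroup.normalClosure R := by
      rw [← hker, MonoidHom.mem_ker, lift_mk, hevw, inv_mul_cancel]
    have hR' : ∀ ρ ∈ R, ∃ wρ : List (S × Bool),
        FreeGroup.mk wρ = ρ ∧ ((wρ.length : ℝ)) ≤ r' ∧ ev S wρ = 1 := by
      intro ρ hρ
      obtain ⟨wρ, hmk, hlen⟩ := hword ρ hρ
      refine ⟨wρ, hmk, le_trans (by exact_mod_cast hlen) hnr', ?_⟩
      have : ρ ∈ MonoidHom.ker (FreeGroup.lift (fun s : S => (s : G))) := by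
        rw [hker]; exact Subgroup.subset_normalClosure hρ
      rw [MonoidHom.mem_ker] at this
      rw [← lift_mk, hmk, this]
    have e2 : PathEquiv (wordDist S) r' (Eb S x w) [x, x] :=
      normalClosure_equiv hS hr'1 hR' x hwker
    refine ⟨1, ?_⟩
    have hrep : List.replicate (1 + 1) x = [x, x] := rfl
    rw [hrep]
    exact pequiv_trans e0 (pequiv_trans hequiv e2)

end BddAux
namespace BddAux

variable {G : Type*} [Group G] {S : Set G} (hS : Subgroup.closure S = ⊤) (hne : S.Nonempty)

/-- the free-group bookkeeping word of a path -/
noncomputable def Wfn : List G → FreeGroup S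
  | [] => 1
  | [_] => 1
  | a :: b :: t => FreeGroup.mk (wrd hS hne a b) * Wfn (b :: t)

@[simp] theorem Wfn_nil : Wfn hS hne ([] : List G) = 1 := rfl
@[simp] theorem Wfn_single (a : G) : Wfn hS hne [a] = 1 := rfl
theorem Wfn_cons (a b : G) (t : List G) :
    Wfn hS hne (a :: b :: t) = FreeGroup.mk (wrd hS hne a b) * Wfn hS hne (b :: t) := rfl

theorem Wfn_append (l₁ : List G) : ∀ (l₂ : List G) (h₁ : l₁ ≠ []) (h₂ : l₂ ≠ []),
    Wfn hS hne (l₁ ++ l₂)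
      = Wfn hS hne l₁ * FreeGroup.mk (wrd hS hne (l₁.getLast h₁) (l₂.head h₂))
        * Wfn hS hne l₂ := by
  induction l₁ with
  | nil => intro l₂ h₁ h₂; exact absurd rfl h₁
  | cons a t ih =>
    intro l₂ h₁ h₂
    cases t with
    | nil =>
      cases l₂ with
      | nil => exact absurd rfl h₂
      | cons b t₂ => simp [Wfn_cons, List.getLast_singleton]
    | cons a' t' =>
      have ht : (a' :: t' : List G) ≠ [] := by simp
      have h4 : ((a :: a' :: t') ++ l₂ : List G) = a :: ((a' :: t') ++ l₂) := by simp
      rw [h4]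
      have h3 : ((a' :: t') ++ l₂ : List G) = a' :: (t' ++ l₂) := by simp
      rw [h3, Wfn_cons, ← h3, ih l₂ ht h₂, Wfn_cons]
      rw [List.getLast_cons ht]
      group

section Presentation

variable {r' : ℝ} {n : ℕ} {R : Set (FreeGroup S)}

theorem pair_rel (hRc : ∀ w : List (S × Bool), w.length ≤ n → ev S w = 1 → FreeGroup.mk w ∈ R)
    (hr'0 : 0 ≤ r') (hn : 3 * (Nat.floor r' + 2) ≤ n) {a y b : G}
    (h1 : wordDist S a y ≤ r') (h2 : wordDist S y b ≤ r') (h3 : wordDist S a b ≤ r') :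
    (QuotientGroup.mk' (Subgroup.normalClosure R))
        (FreeGroup.mk (wrd hS hne a y) * FreeGroup.mk (wrd hS hne y b))
      = QuotientGroup.mk' (Subgroup.normalClosure R) (FreeGroup.mk (wrd hS hne a b)) := by
  have hb : ∀ g h : G, wordDist S g h ≤ r' → wlen S (g⁻¹ * h) ≤ Nat.floor r' := by
    intro g h hd
    exact Nat.le_floor hd
  have hlen : (wrd hS hne a y ++ (wrd hS hne y b ++ FreeGroup.invRev (wrd hS hne a b))).length
      ≤ n := by
    have l1 := wrd_len hS hne a y
    have l2 := wrd_len hS hne y b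
    have l3 := wrd_len hS hne a b
    have b1 := hb a y h1
    have b2 := hb y b h2
    have b3 := hb a b h3
    simp only [List.length_append, invRev_length]
    omega
  have hev : ev S (wrd hS hne a y ++ (wrd hS hne y b ++ FreeGroup.invRev (wrd hS hne a b)))
      = 1 := by
    rw [ev_append, ev_append, ev_invRev, wrd_ev, wrd_ev, wrd_ev]
    group
  have hζ : FreeGroup.mk (wrd hS hne a y ++ (wrd hS hne y b ++ FreeGroup.invRev (wrd hS hne a b)))
      ∈ Subgroup.normalClosure R :=
    Subgroup.subset_normalClosure (hRc _ hlen hev)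
  have hζ1 : QuotientGroup.mk' (Subgroup.normalClosure R)
      (FreeGroup.mk (wrd hS hne a y ++ (wrd hS hne y b ++ FreeGroup.invRev (wrd hS hne a b))))
      = 1 := by
    rw [← MonoidHom.mem_ker, QuotientGroup.ker_mk']
    exact hζ
  have key : FreeGroup.mk (wrd hS hne a y) * FreeGroup.mk (wrd hS hne y b)
      = FreeGroup.mk (wrd hS hne a y ++ (wrd hS hne y b ++ FreeGroup.invRev (wrd hS hne a b)))
        * FreeGroup.mk (wrd hS hne a b) := by
    rw [← FreeGroup.mul_mk, ← FreeGroup.mul_mk, ← FreeGroup.inv_mk]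
    group
  rw [key, map_mul, hζ1, one_mul]

theorem Wfn_step (hRc : ∀ w : List (S × Bool), w.length ≤ n → ev S w = 1 → FreeGroup.mk w ∈ R)
    (hr'0 : 0 ≤ r') (hn : 3 * (Nat.floor r' + 2) ≤ n) {p q : List G}
    (hstep : PathInsertStep (wordDist S) r' p q) :
    QuotientGroup.mk' (Subgroup.normalClosure R) (Wfn hS hne p)
      = QuotientGroup.mk' (Subgroup.normalClosure R) (Wfn hS hne q) := by
  obtain ⟨hp, hq, l₁, l₂, y, h₁, h₂, rfl, rfl⟩ := hstep
  obtain ⟨b, t, rfl⟩ : ∃ b t, l₂ = b :: t := by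
    cases l₂ with
    | nil => exact absurd rfl h₂
    | cons b t => exact ⟨b, t, rfl⟩
  set a := l₁.getLast h₁ with ha
  have hd1 : wordDist S a y ≤ r' := by
    have := chain'_pair (l₂ := y :: b :: t) hq.2 h₁ (by simp)
    simpa using this
  have hd2 : wordDist S y b ≤ r' := by
    have hc := hq.2
    rw [List.chain'_append] at hc
    have := hc.2.1
    rw [List.chain'_cons] at this
    exact this.1
  have hd3 : wordDist S a b ≤ r' := by
    have := chain'_pair (l₂ := b :: t) hp.2 h₁ (by simp)
    simpa using this
  rw [Wfn_append hS hne _ _ h₁ (by simp : (b :: t : List G) ≠ []),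
    Wfn_append hS hne _ _ h₁ (by simp : (y :: b :: t : List G) ≠ [])]
  rw [show ((y :: b :: t : List G).head (by simp)) = y from rfl,
    show ((b :: t : List G).head (by simp)) = b from rfl, Wfn_cons]
  simp only [map_mul, ← ha]
  have hpair : QuotientGroup.mk' (Subgroup.normalClosure R) (FreeGroup.mk (wrd hS hne a y))
      * QuotientGroup.mk' (Subgroup.normalClosure R) (FreeGroup.mk (wrd hS hne y b))
      = QuotientGroup.mk' (Subgroup.normalClosure R) (FreeGroup.mk (wrd hS hne a b)) := by
    rw [← map_mul, pair_rel hS hne hRc hr'0 hn hd1 hd2 hd3]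
  rw [← hpair]
  group

theorem Wfn_equiv (hRc : ∀ w : List (S × Bool), w.length ≤ n → ev S w = 1 → FreeGroup.mk w ∈ R)
    (hr'0 : 0 ≤ r') (hn : 3 * (Nat.floor r' + 2) ≤ n) {p q : List G}
    (h : PathEquiv (wordDist S) r' p q) :
    QuotientGroup.mk' (Subgroup.normalClosure R) (Wfn hS hne p)
      = QuotientGroup.mk' (Subgroup.normalClosure R) (Wfn hS hne q) := by
  induction h with
  | rel _ _ hab => exact Wfn_step hS hne hRc hr'0 hn hab
  | refl _ => rfl
  | symm _ _ _ ih => exact ih.symm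
  | trans _ _ _ _ _ ih₁ ih₂ => exact ih₁.trans ih₂

theorem Wfn_replicate
    (hRc : ∀ w : List (S × Bool), w.length ≤ n → ev S w = 1 → FreeGroup.mk w ∈ R)
    (hn : 2 ≤ n) (k : ℕ) :
    QuotientGroup.mk' (Subgroup.normalClosure R)
      (Wfn hS hne (List.replicate (k + 1) (1 : G))) = 1 := by
  induction k with
  | zero => simp
  | succ m ih =>
    rw [List.replicate_succ, List.replicate_succ, Wfn_cons, ← List.replicate_succ, map_mul, ih,
      mul_one]
    have hlen : (wrd hS hne (1 : G) 1).length ≤ n := by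
      have := wrd_len hS hne (1 : G) 1
      simp only [inv_one, one_mul, wlen_one] at this
      omega
    have hev : ev S (wrd hS hne (1 : G) 1) = 1 := by
      rw [wrd_ev]; simp
    rw [← MonoidHom.mem_ker, QuotientGroup.ker_mk']
    exact Subgroup.subset_normalClosure (hRc _ hlen hev)

theorem Wfn_trail
    (hRc : ∀ w : List (S × Bool), w.length ≤ n → ev S w = 1 → FreeGroup.mk w ∈ R)
    (hn : 4 ≤ n) :
    ∀ (w : List (S × Bool)) (g : G),
      QuotientGroup.mk' (Subgroup.normalClosure R) (Wfn hS hne (tr S g w))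
        = QuotientGroup.mk' (Subgroup.normalClosure R) (FreeGroup.mk w) := by
  intro w
  induction w with
  | nil =>
    intro g
    rw [tr_nil]
    simp [FreeGroup.one_eq_mk]
  | cons l w ih =>
    intro g
    rw [tr_cons]
    have htreq : (g * lv S l) :: (tr S (g * lv S l) w).tail = tr S (g * lv S l) w :=
      List.cons_head?_tail (head?_tr S _ w)
    rw [← htreq, Wfn_cons, htreq, map_mul, ih (g * lv S l)]
    have hkey : QuotientGroup.mk' (Subgroup.normalClosure R)
        (FreeGroup.mk (wrd hS hne g (g * lv S l)))
        = QuotientGroup.mk' (Subgroup.normalClosure R) (FreeGroup.mk [l]) := by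
      have hlen : ([l] ++ FreeGroup.invRev (wrd hS hne g (g * lv S l))).length ≤ n := by
        have h1 := wrd_len hS hne g (g * lv S l)
        have h2 : wlen S (g⁻¹ * (g * lv S l)) ≤ 1 := by
          rw [inv_mul_cancel_left]
          exact wlen_letter (lv_mem S l)
        simp only [List.length_append, invRev_length, List.length_singleton]
        omega
      have hev : ev S ([l] ++ FreeGroup.invRev (wrd hS hne g (g * lv S l))) = 1 := by
        rw [ev_append, ev_invRev, wrd_ev, ev_singleton, inv_mul_cancel_left]
        group
      have hξ : QuotientGroup.mk' (Subgroup.normalClosure R)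
          (FreeGroup.mk ([l] ++ FreeGroup.invRev (wrd hS hne g (g * lv S l)))) = 1 := by
        rw [← MonoidHom.mem_ker, QuotientGroup.ker_mk']
        exact Subgroup.subset_normalClosure (hRc _ hlen hev)
      have key : FreeGroup.mk ([l] : List (S × Bool))
          = FreeGroup.mk ([l] ++ FreeGroup.invRev (wrd hS hne g (g * lv S l)))
            * FreeGroup.mk (wrd hS hne g (g * lv S l)) := by
        rw [← FreeGroup.mul_mk, ← FreeGroup.inv_mk]
        group
      rw [key, map_mul, hξ, one_mul]
    rw [hkey, ← map_mul, FreeGroup.mul_mk]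
    rfl

end Presentation

end BddAux
namespace BddAux

variable {G : Type*} [Group G] {S : Set G} (hS : Subgroup.closure S = ⊤)

include hS in
theorem lift_surjective : Function.Surjective (FreeGroup.lift (fun s : S => (s : G))) := by
  rw [← MonoidHom.range_eq_top, FreeGroup.range_lift_eq_closure, Subtype.range_coe]
  exact hS

include hS in
theorem csc_to_bp (h : CoarselySimplyConnectedWith (wordDist S)) :
    BoundedlyPresentedBy G S := by
  classical
  rcases eq_or_ne S ∅ with hSe | hSe
  · -- trivial group
    have hsub := subsingleton_of_empty hS hSe
    have hSempty : IsEmpty S := by rw [hSe]; exact Set.isEmpty_coe_sort.2 rfl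
    have htriv : ∀ z : FreeGroup S, z = 1 := by
      intro z
      have : z = FreeGroup.mk z.toWord := FreeGroup.mk_toWord.symm
      rw [this]
      rcases hzw : z.toWord with _ | ⟨l, t⟩
      · rfl
      · exact hSempty.elim l.1
    refine ⟨0, ∅, by simp, fun g => ⟨1, Subsingleton.elim _ _⟩, ?_⟩
    ext z
    rw [htriv z]
    exact iff_of_true (Subgroup.one_mem _) (Subgroup.one_mem _)
  have hne : S.Nonempty := Set.nonempty_iff_ne_empty.2 hSe
  obtain ⟨-, hSC⟩ := h
  obtain ⟨r', hr'1, hloop⟩ := hSC 1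
  have hr'0 : (0:ℝ) ≤ r' := by linarith
  set n := 3 * (Nat.floor r' + 2) with hn
  set R : Set (FreeGroup S) :=
    {z | ∃ w : List (S × Bool), FreeGroup.mk w = z ∧ w.length ≤ n ∧ ev S w = 1} with hR
  have hRc : ∀ w : List (S × Bool), w.length ≤ n → ev S w = 1 → FreeGroup.mk w ∈ R :=
    fun w h1 h2 => ⟨w, rfl, h1, h2⟩
  refine ⟨n, R, ?_, lift_surjective hS, ?_⟩
  · rintro ρ ⟨w, hmk, hlen, -⟩
    exact ⟨w, hmk, hlen⟩
  · have hRker : R ⊆ (MonoidHom.ker (FreeGroup.lift (fun s : S => (s : G))) : Set (FreeGroup S)) := by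
      rintro ρ ⟨w, rfl, -, hev⟩
      rw [SetLike.mem_coe, MonoidHom.mem_ker, lift_mk, hev]
    refine le_antisymm ?_ (Subgroup.normalClosure_le_normal hRker)
    intro z hz
    rw [MonoidHom.mem_ker] at hz
    set w := z.toWord with hw
    have hmkw : FreeGroup.mk w = z := FreeGroup.mk_toWord
    have hevw : ev S w = 1 := by rw [← lift_mk, hmkw, hz]
    -- the trail of w is a 1-loop at 1
    have hloopw : IsLoopOf (wordDist S) 1 1 (tr S 1 w) := by
      refine ⟨isPath_tr le_rfl 1 w, head?_tr S 1 w, ?_⟩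
      rw [getLast?_tr, hevw, mul_one]
    obtain ⟨k, hk⟩ := hloop 1 (tr S 1 w) hloopw
    have h1 := Wfn_equiv hS hne hRc hr'0 (le_of_eq hn.symm) hk
    have h2 := Wfn_replicate hS hne hRc (by omega) k
    have h3 := Wfn_trail hS hne hRc (by omega) w 1
    have : QuotientGroup.mk' (Subgroup.normalClosure R) z = 1 := by
      rw [← hmkw, ← h3, h1, h2]
    rwa [← MonoidHom.mem_ker, QuotientGroup.ker_mk'] at this

include hS in
theorem part1 : BoundedlyPresentedBy G S ↔ CoarselySimplyConnectedWith (wordDist S) :=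
  ⟨bp_to_csc hS, csc_to_bp hS⟩

end BddAux
namespace BddAux

section Transfer

variable {X : Type*} {d d' : X → X → ℝ} {C : ℝ}

theorem isPath_transfer (hC : 0 ≤ C) (hdd' : ∀ a b, d' a b ≤ C * d a b) {r : ℝ} {p : List X}
    (hp : IsPathOf d r p) : IsPathOf d' (C * r) p :=
  ⟨hp.1, hp.2.imp fun a b hab => le_trans (hdd' a b) (mul_le_mul_of_nonneg_left hab hC)⟩

theorem step_transfer (hC : 0 ≤ C) (hdd' : ∀ a b, d' a b ≤ C * d a b) {r : ℝ} {p q : List X}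
    (h : PathInsertStep d r p q) : PathInsertStep d' (C * r) p q :=
  ⟨isPath_transfer hC hdd' h.1, isPath_transfer hC hdd' h.2.1, h.2.2⟩

theorem equiv_transfer (hC : 0 ≤ C) (hdd' : ∀ a b, d' a b ≤ C * d a b) {r : ℝ} {p q : List X}
    (h : PathEquiv d r p q) : PathEquiv d' (C * r) p q :=
  Relation.EqvGen.mono (r := PathInsertStep d r) (p := PathInsertStep d' (C * r))
    (fun _ _ hs => step_transfer hC hdd' hs) _ _ h

theorem csc_transfer (hC : 0 ≤ C) (h1 : ∀ a b, d' a b ≤ C * d a b)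
    (h2 : ∀ a b, d a b ≤ C * d' a b) (h : CoarselySimplyConnectedWith d) :
    CoarselySimplyConnectedWith d' := by
  obtain ⟨⟨r₀, hcc⟩, hsc⟩ := h
  constructor
  · refine ⟨C * max r₀ 0, fun x y => ?_⟩
    obtain ⟨p, hp, hh, hl⟩ := hcc x y
    exact ⟨p, isPath_transfer hC h1 (isPath_mono (le_max_left r₀ 0) hp), hh, hl⟩
  · intro r
    obtain ⟨r₂, hρr₂, hl⟩ := hsc (C * max r 0)
    refine ⟨max r (C * r₂), le_max_left _ _, fun x p hp => ?_⟩
    have hploop : IsLoopOf d (C * max r 0) x p := by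
      refine ⟨?_, hp.2.1, hp.2.2⟩
      have := isPath_transfer (d := d') (d' := d) hC h2 (isPath_mono (le_max_left r 0) hp.1)
      exact this
    obtain ⟨k, hk⟩ := hl x p hploop
    exact ⟨k, pequiv_mono (le_max_right _ _) (equiv_transfer hC h1 hk)⟩

end Transfer

variable {G : Type*} [Group G]

theorem wlen_prod_le {S : Set G} (hS : Subgroup.closure S = ⊤) {B : ℕ} :
    ∀ {l : List G}, (∀ y ∈ l, wlen S y ≤ B) → wlen S l.prod ≤ B * l.length := by
  intro l
  induction l with
  | nil => intro _; simp
  | cons a t ih =>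
    intro h
    rw [List.prod_cons, List.length_cons]
    calc wlen S (a * t.prod) ≤ wlen S a + wlen S t.prod := wlen_mul hS _ _
      _ ≤ B + B * t.length := by
          exact Nat.add_le_add (h a (by simp)) (ih fun y hy => h y (List.mem_cons_of_mem _ hy))
      _ = B * (t.length + 1) := by ring

theorem wd_compare {S S' : Set G} (hSgen : Subgroup.closure S = ⊤)
    (hS'gen : Subgroup.closure S' = ⊤)
    {B : ℕ} (hB : ∀ t ∈ S ∪ S⁻¹, wlen S' t ≤ B) :
    ∀ g h : G, wordDist S' g h ≤ (B : ℝ) * wordDist S g h := by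
  intro g h
  rw [wordDist_eq, wordDist_eq]
  set x := g⁻¹ * h
  obtain ⟨l, hlen, hmem, hprod⟩ := exists_list_of_mem_pow (mem_pow_wlen hSgen x)
  have h1 : wlen S' x ≤ B * wlen S x := by
    rw [← hlen, ← hprod]
    exact wlen_prod_le hS'gen fun y hy => hB y (hmem y hy)
  exact_mod_cast h1

end BddAux
namespace BddAux

variable {G : Type*} [Group G] [TopologicalSpace G] [IsTopologicalGroup G] [T2Space G]
  [LocallyCompactSpace G]

theorem compact_bound {S : Set G} (hSc : IsCompact S) (hS : Subgroup.closure S = ⊤)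
    {K : Set G} (hK : IsCompact K) : ∃ B : ℕ, ∀ x ∈ K, wlen S x ≤ B := by
  classical
  set V : Set G := insert 1 (S ∪ S⁻¹) with hV
  have h1V : (1 : G) ∈ V := Set.mem_insert 1 _
  have hTV : S ∪ S⁻¹ ⊆ V := Set.subset_insert _ _
  have hVc : IsCompact V := (hSc.union hSc.inv).insert 1
  have hVsymm : V⁻¹ = V := by
    rw [hV, Set.insert_eq, Set.union_inv, Set.inv_singleton, inv_one, union_inv_symm,
      ← Set.insert_eq]
  have hVpow : ∀ n : ℕ, IsCompact (V ^ n) := by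
    intro n
    induction n with
    | zero => rw [pow_zero, show (1 : Set G) = {1} from rfl]; exact isCompact_singleton
    | succ m ih => rw [pow_succ]; exact ih.mul hVc
  have hVmem : ∀ x : G, ∃ n, x ∈ V ^ n := by
    intro x
    have hx : x ∈ Subgroup.closure S := hS ▸ Subgroup.mem_top x
    have h' : x ∈ Submonoid.closure (S ∪ S⁻¹) := by
      rw [← Subgroup.closure_toSubmonoid]; exact hx
    obtain ⟨l, hmem, hprod⟩ := Submonoid.exists_list_of_mem_closure h'
    exact ⟨l.length, hprod ▸ list_prod_mem_pow fun y hy => hTV (hmem y hy)⟩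
  have hcover : ⋃ n : ℕ, V ^ n = Set.univ :=
    Set.eq_univ_iff_forall.2 fun x => Set.mem_iUnion.2 (hVmem x)
  -- Baire category
  obtain ⟨n₀, u, hu⟩ := nonempty_interior_of_iUnion_of_closed
    (fun n : ℕ => (hVpow n).isClosed) hcover
  set O : Set G := u⁻¹ • interior (V ^ n₀) with hO
  have hOopen : IsOpen O := isOpen_interior.smul u⁻¹
  have h1O : (1 : G) ∈ O := by
    rw [hO, Set.mem_smul_set]
    exact ⟨u, hu, by simp⟩
  have hOsub : O ⊆ V ^ (2 * n₀) := by
    intro z hz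
    rw [hO, Set.mem_smul_set] at hz
    obtain ⟨g, hg, rfl⟩ := hz
    have hg' : g ∈ V ^ n₀ := interior_subset hg
    have hu' : u ∈ V ^ n₀ := interior_subset hu
    have huinv : u⁻¹ ∈ V ^ n₀ := by
      have : u⁻¹ ∈ (V ^ n₀)⁻¹ := by simpa using hu'
      rwa [← inv_pow, hVsymm] at this
    rw [smul_eq_mul, two_mul, pow_add]
    exact Set.mul_mem_mul huinv hg'
  -- cover K by translates of O
  have hKsub : K ⊆ ⋃ x : K, (x : G) • O := by
    intro z hz
    exact Set.mem_iUnion.2 ⟨⟨z, hz⟩, ⟨1, h1O, by simp⟩⟩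
  obtain ⟨t, ht⟩ := hK.elim_finite_subcover (fun x : K => (x : G) • O)
    (fun x => hOopen.smul _) hKsub
  have hm : ∀ x : K, ∃ m, (x : G) ∈ V ^ m := fun x => hVmem x
  choose m hm using hm
  set M := t.sup m with hM
  refine ⟨M + 2 * n₀, fun z hz => ?_⟩
  have hzmem : z ∈ V ^ (M + 2 * n₀) := by
    have hztx := ht hz
    rw [Set.mem_iUnion] at hztx
    obtain ⟨x, hx⟩ := hztx
    rw [Set.mem_iUnion] at hx
    obtain ⟨hxt, hzx⟩ := hx
    rw [Set.mem_smul_set] at hzx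
    obtain ⟨o, ho, rfl⟩ := hzx
    have hx' : (x : G) ∈ V ^ M :=
      Set.pow_subset_pow (subset_refl V) h1V (Finset.le_sup hxt) (hm x)
    rw [smul_eq_mul, pow_add]
    exact Set.mul_mem_mul hx' (hOsub ho)
  -- conclude the word length bound
  have hVwlen : ∀ y ∈ V, wlen S y ≤ 1 := by
    intro y hy
    rcases Set.mem_insert_iff.1 hy with rfl | hy
    · simp
    · exact wlen_letter hy
  obtain ⟨l, hlen, hmem, hprod⟩ := exists_list_of_mem_pow hzmem
  calc wlen S z = wlen S l.prod := by rw [hprod]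
    _ ≤ 1 * l.length := wlen_prod_le hS fun y hy => hVwlen y (hmem y hy)
    _ = M + 2 * n₀ := by rw [one_mul, hlen]

end BddAux
namespace BddAux

theorem gen_of_bp {G : Type*} [Group G] {S : Set G} (h : BoundedlyPresentedBy G S) :
    Subgroup.closure S = ⊤ := by
  obtain ⟨n, R, -, hsurj, -⟩ := h
  rw [← Subtype.range_coe (s := S), ← FreeGroup.range_lift_eq_closure, MonoidHom.range_eq_top]
  exact hsurj

theorem part2 {G : Type*} [Group G] [TopologicalSpace G] [IsTopologicalGroup G] [T2Space G]
    [LocallyCompactSpace G] (hex : ∃ S : Set G, IsCompact S ∧ Subgroup.closure S = ⊤) :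
    (CompactlyPresented G ↔ ∃ S : Set G, IsCompact S ∧ Subgroup.closure S = ⊤ ∧
        CoarselySimplyConnectedWith (wordDist S)) ∧
    (CompactlyPresented G ↔ ∀ S : Set G, IsCompact S → Subgroup.closure S = ⊤ →
        CoarselySimplyConnectedWith (wordDist S)) := by
  have hfwd : CompactlyPresented G → ∀ S' : Set G, IsCompact S' → Subgroup.closure S' = ⊤ →
      CoarselySimplyConnectedWith (wordDist S') := by
    rintro ⟨S, hSc, hBP⟩ S' hS'c hS'gen
    have hSgen := gen_of_bp hBP
    have hcsc := bp_to_csc hSgen hBP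
    obtain ⟨B₁, hB₁⟩ := compact_bound hSc hSgen (hS'c.union hS'c.inv)
    obtain ⟨B₂, hB₂⟩ := compact_bound hS'c hS'gen (hSc.union hSc.inv)
    set C : ℕ := max B₁ B₂ + 1 with hC
    have hC0 : (0:ℝ) ≤ (C:ℝ) := by positivity
    have h1 : ∀ g h : G, wordDist S' g h ≤ (C:ℝ) * wordDist S g h := by
      refine wd_compare hSgen hS'gen (B := C) ?_
      intro t ht
      exact le_trans (hB₂ t ht) (by omega)
    have h2 : ∀ g h : G, wordDist S g h ≤ (C:ℝ) * wordDist S' g h := by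
      refine wd_compare hS'gen hSgen (B := C) ?_
      intro t ht
      exact le_trans (hB₁ t ht) (by omega)
    exact csc_transfer hC0 h1 h2 hcsc
  refine ⟨⟨?_, ?_⟩, ⟨?_, ?_⟩⟩
  · rintro ⟨S, hSc, hBP⟩
    exact ⟨S, hSc, gen_of_bp hBP, bp_to_csc (gen_of_bp hBP) hBP⟩
  · rintro ⟨S, hSc, hSgen, hcsc⟩
    exact ⟨S, hSc, csc_to_bp hSgen hcsc⟩
  · exact hfwd
  · intro hAll
    obtain ⟨S, hSc, hSgen⟩ := hex
    exact ⟨S, hSc, csc_to_bp hSgen (hAll S hSc hSgen)⟩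

end BddAux


/-- a group `G` generated by a subset `S` is boundedly presented by `S` if and
only if `G`, with the word metric of `S`, is coarsely simply connected. In particular, a locally
compact compactly generated Hausdorff topological group is compactly presented if and only if it
is coarsely simply connected with respect to the word metric of some (equivalently, any) compact
generating subset. -/
theorem boundedlyPresentedBy_iff_coarselySimplyConnected :
    (∀ (G : Type u) [Group G], ∀ S : Set G, Subgroup.closure S = ⊤ →
      (BoundedlyPresentedBy G S ↔ CoarselySimplyConnectedWith (wordDist S))) ∧
    (∀ (G : Type v) [Group G] [TopologicalSpace G] [IsTopologicalGroup G] [T2Space G]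
        [LocallyCompactSpace G], (∃ S : Set G, IsCompact S ∧ Subgroup.closure S = ⊤) →
      ((CompactlyPresented G ↔
          ∃ S : Set G, IsCompact S ∧ Subgroup.closure S = ⊤ ∧
            CoarselySimplyConnectedWith (wordDist S)) ∧
        (CompactlyPresented G ↔
          ∀ S : Set G, IsCompact S → Subgroup.closure S = ⊤ →
            CoarselySimplyConnectedWith (wordDist S)))) :=
  ⟨fun _ _ _ hS => BddAux.part1 hS, fun _ _ _ _ _ _ hex => BddAux.part2 hex⟩
end

section
/- Let X and Y be metric spaces that are quasi-isometric. If Y is coarsely simply connected, then X is coarsely simply connected. -/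
/-- `f` is a quasi-isometry from `(X, dX)` to `(Y, dY)`: it is a quasi-isometric embedding with
quasi-dense image. -/
def IsQuasiIsometryWith {X Y : Type*} (dX : X → X → ℝ) (dY : Y → Y → ℝ) (f : X → Y) : Prop :=
  ∃ A B : ℝ, 1 ≤ A ∧ 0 ≤ B ∧
    (∀ x x' : X, A⁻¹ * dX x x' - B ≤ dY (f x) (f x')) ∧
    (∀ x x' : X, dY (f x) (f x') ≤ A * dX x x' + B) ∧
    (∀ y : Y, ∃ x : X, dY (f x) y ≤ B)


section Aux

open List

lemma isPathOf_mono {X : Type*} (d : X → X → ℝ) {r r' : ℝ} (h : r ≤ r') {p : List X}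
    (hp : IsPathOf d r p) : IsPathOf d r' p :=
  ⟨hp.1, hp.2.imp fun _ _ hd => hd.trans h⟩

lemma pathEquiv_mono {X : Type*} (d : X → X → ℝ) {r r' : ℝ} (h : r ≤ r') {p q : List X}
    (hp : PathEquiv d r p q) : PathEquiv d r' p q := by
  refine Relation.EqvGen.mono ?_ _ _ hp
  rintro a b ⟨h1, h2, l₁, l₂, y, hl1, hl2, rfl, rfl⟩
  exact ⟨isPathOf_mono d h h1, isPathOf_mono d h h2, l₁, l₂, y, hl1, hl2, rfl, rfl⟩

lemma pathEquiv_map {X Y : Type*} (dX : X → X → ℝ) (dY : Y → Y → ℝ) {r r' : ℝ} (g : X → Y)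
    (hg : ∀ a b, dX a b ≤ r → dY (g a) (g b) ≤ r') {p q : List X}
    (h : PathEquiv dX r p q) : PathEquiv dY r' (p.map g) (q.map g) := by
  induction h with
  | rel a b hab =>
    obtain ⟨⟨h1n, h1c⟩, ⟨h2n, h2c⟩, l₁, l₂, y, hl1, hl2, rfl, rfl⟩ := hab
    refine Relation.EqvGen.rel _ _
      ⟨⟨?_, ?_⟩, ⟨?_, ?_⟩, l₁.map g, l₂.map g, g y, ?_, ?_, by simp, by simp⟩
    · simpa using h1n
    · rw [List.Chain', List.isChain_map]; exact h1c.imp fun a b hab => hg a b hab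
    · simpa using h2n
    · rw [List.Chain', List.isChain_map]; exact h2c.imp fun a b hab => hg a b hab
    · simpa using hl1
    · simpa using hl2
  | refl a => exact Relation.EqvGen.refl _
  | symm a b _ ih => exact Relation.EqvGen.symm _ _ ih
  | trans a b c _ _ ih1 ih2 => exact Relation.EqvGen.trans _ _ _ ih1 ih2

lemma pathEquiv_head_cons {X : Type*} (d : X → X → ℝ) (r : ℝ) {p q : List X}
    (h : PathEquiv d r p q) :
    p.head? = q.head? ∧
      ∀ x : X, (∀ b ∈ p.head?, d x b ≤ r) → PathEquiv d r (x :: p) (x :: q) := by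
  induction h with
  | rel a b hab =>
    obtain ⟨⟨h1n, h1c⟩, ⟨h2n, h2c⟩, l₁, l₂, y, hl1, hl2, rfl, rfl⟩ := hab
    obtain ⟨u, l₁, rfl⟩ := List.exists_cons_of_ne_nil hl1
    constructor
    · simp
    · intro x hx
      refine Relation.EqvGen.rel _ _
        ⟨⟨List.cons_ne_nil _ _, ?_⟩, ⟨List.cons_ne_nil _ _, ?_⟩,
          x :: u :: l₁, l₂, y, List.cons_ne_nil _ _, hl2, rfl, rfl⟩
      · exact List.isChain_cons.mpr ⟨by simpa using hx, h1c⟩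
      · exact List.isChain_cons.mpr ⟨by simpa using hx, h2c⟩
  | refl a => exact ⟨rfl, fun x _ => Relation.EqvGen.refl _⟩
  | symm a b _ ih =>
    refine ⟨ih.1.symm, fun x hx => Relation.EqvGen.symm _ _ (ih.2 x ?_)⟩
    rw [ih.1]; exact hx
  | trans a b c _ _ ih1 ih2 =>
    refine ⟨ih1.1.trans ih2.1, fun x hx =>
      Relation.EqvGen.trans _ _ _ (ih1.2 x hx) (ih2.2 x ?_)⟩
    rw [← ih1.1]; exact hx

lemma cross_chain {X : Type*} [PseudoMetricSpace X] {c s : ℝ} :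
    ∀ (p q : List X), List.Forall₂ (fun a b => dist a b ≤ c) p q →
      List.Chain' (fun a b => dist a b ≤ s) p →
      List.Chain' (fun ab ab' : X × X => dist ab.2 ab'.1 ≤ s + c) (p.zip q) := by
  intro p
  induction p with
  | nil => intro q h hc; simp [List.Chain']
  | cons a p ih =>
    intro q h hc
    rcases q with _ | ⟨b, q⟩
    · cases h
    rw [List.forall₂_cons] at h
    obtain ⟨hab, htail⟩ := h
    rcases p with _ | ⟨a', p'⟩
    · cases htail; simp [List.Chain']
    rcases q with _ | ⟨b', q'⟩
    · cases htail
    rw [List.forall₂_cons] at htail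
    obtain ⟨hab', htail'⟩ := htail
    simp only [List.zip_cons_cons]
    rw [List.Chain', List.isChain_cons_cons]
    constructor
    · calc dist b a' ≤ dist b a + dist a a' := dist_triangle _ _ _
        _ ≤ c + s := add_le_add (by rw [dist_comm]; exact hab) (List.isChain_cons_cons.mp hc).1
        _ = s + c := add_comm _ _
    · have := ih (b' :: q') (List.forall₂_cons.mpr ⟨hab', htail'⟩) (List.isChain_cons_cons.mp hc).2
      simpa [List.Chain'] using this

lemma close_aux {X : Type*} [PseudoMetricSpace X] {s : ℝ} :
    ∀ (p q : List X), List.Forall₂ (fun a b => dist a b ≤ s) p q →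
    ∀ x : X, List.Chain' (fun a b => dist a b ≤ s) p →
    List.Chain' (fun a b => dist a b ≤ s) q →
    List.Chain' (fun ab ab' : X × X => dist ab.2 ab'.1 ≤ s) (p.zip q) →
    (∀ a ∈ p.head?, dist x a ≤ s) →
    (∀ b ∈ q.head?, dist x b ≤ s) →
    p.getLast? = q.getLast? →
    PathEquiv (dist : X → X → ℝ) s (x :: p) (x :: q) := by
  intro p
  induction p with
  | nil =>
    intro q h x _ _ _ _ _ _
    cases h
    exact Relation.EqvGen.refl _
  | cons a p ih =>
    intro q h x hcp hcq hcz hx1 hx2 hl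
    rcases q with _ | ⟨b, q'⟩
    · cases h
    rw [List.forall₂_cons] at h
    obtain ⟨hab, htail⟩ := h
    rcases p with _ | ⟨a', p'⟩
    · cases htail
      have : a = b := by simpa using hl
      subst this
      exact Relation.EqvGen.refl _
    rcases q' with _ | ⟨b', q''⟩
    · cases htail
    rw [List.forall₂_cons] at htail
    obtain ⟨hab', htail'⟩ := htail
    have hxa : dist x a ≤ s := hx1 a rfl
    have hxb : dist x b ≤ s := hx2 b rfl
    have hba : dist b a ≤ s := by rw [dist_comm]; exact hab
    have hba' : dist b a' ≤ s := by
      have := (List.isChain_cons_cons.mp hcz).1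
      simpa using this
    have hbb' : dist b b' ≤ s := (List.isChain_cons_cons.mp hcq).1
    have hcp' : List.Chain' (fun a b => dist a b ≤ s) (a' :: p') := (List.isChain_cons_cons.mp hcp).2
    have hcq' : List.Chain' (fun a b => dist a b ≤ s) (b' :: q'') := (List.isChain_cons_cons.mp hcq).2
    have path1 : IsPathOf (dist : X → X → ℝ) s (x :: a :: a' :: p') :=
      ⟨List.cons_ne_nil _ _, List.isChain_cons_cons.mpr ⟨hxa, hcp⟩⟩
    have path2 : IsPathOf (dist : X → X → ℝ) s (x :: b :: a :: a' :: p') :=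
      ⟨List.cons_ne_nil _ _, List.isChain_cons_cons.mpr ⟨hxb, List.isChain_cons_cons.mpr ⟨hba, hcp⟩⟩⟩
    have path3 : IsPathOf (dist : X → X → ℝ) s (x :: b :: a' :: p') :=
      ⟨List.cons_ne_nil _ _, List.isChain_cons_cons.mpr ⟨hxb, List.isChain_cons_cons.mpr ⟨hba', hcp'⟩⟩⟩
    have step1 : PathEquiv (dist : X → X → ℝ) s (x :: a :: a' :: p') (x :: b :: a :: a' :: p') :=
      Relation.EqvGen.rel _ _
        ⟨path1, path2, [x], a :: a' :: p', b, List.cons_ne_nil _ _, List.cons_ne_nil _ _, rfl, rfl⟩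
    have step2 : PathEquiv (dist : X → X → ℝ) s (x :: b :: a :: a' :: p') (x :: b :: a' :: p') :=
      Relation.EqvGen.symm _ _ (Relation.EqvGen.rel _ _
        ⟨path3, path2, [x, b], a' :: p', a, List.cons_ne_nil _ _, List.cons_ne_nil _ _, rfl, rfl⟩)
    have step3 : PathEquiv (dist : X → X → ℝ) s (b :: a' :: p') (b :: b' :: q'') := by
      refine ih (b' :: q'') (List.forall₂_cons.mpr ⟨hab', htail'⟩) b hcp' hcq' ?_ ?_ ?_ ?_
      · have := (List.isChain_cons_cons.mp hcz).2
        simpa [List.Chain', List.zip] using this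
      · intro u hu
        simp only [List.head?_cons, Option.mem_def, Option.some.injEq] at hu
        subst hu; exact hba'
      · intro u hu
        simp only [List.head?_cons, Option.mem_def, Option.some.injEq] at hu
        subst hu; exact hbb'
      · rw [List.getLast?_cons_cons] at hl
        rw [List.getLast?_cons_cons] at hl
        exact hl
    have step3' : PathEquiv (dist : X → X → ℝ) s (x :: b :: a' :: p') (x :: b :: b' :: q'') := by
      refine (pathEquiv_head_cons _ _ step3).2 x ?_
      intro u hu
      simp only [List.head?_cons, Option.mem_def, Option.some.injEq] at hu
      subst hu; exact hxb
    exact Relation.EqvGen.trans _ _ _ (Relation.EqvGen.trans _ _ _ step1 step2) step3'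

lemma close_pathEquiv {X : Type*} [PseudoMetricSpace X] {s c : ℝ} (hs : 0 ≤ s) (hc : 0 ≤ c)
    {p q : List X} (h : List.Forall₂ (fun a b => dist a b ≤ c) p q)
    (hp : List.Chain' (fun a b => dist a b ≤ s) p)
    (hq : List.Chain' (fun a b => dist a b ≤ s) q)
    (hh : p.head? = q.head?) (hl : p.getLast? = q.getLast?) :
    PathEquiv (dist : X → X → ℝ) (s + c) p q := by
  rcases p with _ | ⟨x, p'⟩
  · cases h; exact Relation.EqvGen.refl _
  rcases q with _ | ⟨y, q'⟩
  · cases h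
  have hxy : x = y := by simpa using hh
  subst hxy
  rw [List.forall₂_cons] at h
  obtain ⟨-, htail⟩ := h
  have hsc : s ≤ s + c := by linarith
  have hcsc : c ≤ s + c := by linarith
  refine close_aux p' q' (htail.imp fun a b hab => hab.trans hcsc) x
    ((List.isChain_cons.mp hp).2.imp fun a b hab => hab.trans hsc)
    ((List.isChain_cons.mp hq).2.imp fun a b hab => hab.trans hsc)
    (cross_chain p' q' htail (List.isChain_cons.mp hp).2)
    (fun a ha => ((List.isChain_cons.mp hp).1 a ha).trans hsc)
    (fun b hb => ((List.isChain_cons.mp hq).1 b hb).trans hsc) ?_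
  rcases p' with _ | ⟨a, p''⟩
  · cases htail; rfl
  rcases q' with _ | ⟨b, q''⟩
  · cases htail
  rw [List.getLast?_cons_cons] at hl
  rw [List.getLast?_cons_cons] at hl
  exact hl

end Aux

/-- coarse simple connectedness of metric spaces is a quasi-isometry invariant. -/
theorem coarselySimplyConnected_of_quasiIsometry {X Y : Type*} [MetricSpace X] [MetricSpace Y]
    (f : X → Y) (hf : IsQuasiIsometryWith (dist : X → X → ℝ) (dist : Y → Y → ℝ) f)
    (hY : CoarselySimplyConnected Y) :
    CoarselySimplyConnected X := by
  classical
  obtain ⟨A, B, hA, hB, hlow, hup, hdense⟩ := hf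
  have hA0 : (0:ℝ) < A := lt_of_lt_of_le zero_lt_one hA
  have hdist_le : ∀ a b : X, dist a b ≤ A * (dist (f a) (f b) + B) := by
    intro a b
    have h1 := hlow a b
    have h2 : A * A⁻¹ = 1 := mul_inv_cancel₀ hA0.ne'
    have h4 : A⁻¹ * dist a b ≤ dist (f a) (f b) + B := by linarith
    calc dist a b = A * (A⁻¹ * dist a b) := by rw [← mul_assoc, h2, one_mul]
      _ ≤ A * (dist (f a) (f b) + B) := mul_le_mul_of_nonneg_left h4 hA0.le
  have glip : ∀ (g : Y → X), (∀ y, dist (f (g y)) y ≤ B) →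
      ∀ (u : ℝ) (a b : Y), dist a b ≤ u → dist (g a) (g b) ≤ A * (u + 3 * B) := by
    intro g hg u a b hab
    have h1 := hdist_le (g a) (g b)
    have h2 : dist (f (g a)) (f (g b)) ≤ B + u + B := by
      calc dist (f (g a)) (f (g b)) ≤ dist (f (g a)) a + dist a b + dist b (f (g b)) :=
            dist_triangle4 _ _ _ _
        _ ≤ B + u + B := by
            have h3 := hg a
            have h4 := hg b
            rw [dist_comm b]
            exact add_le_add (add_le_add h3 hab) h4
    nlinarith [mul_le_mul_of_nonneg_left h2 hA0.le]
  obtain ⟨⟨s, hconn⟩, hfill⟩ := hY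
  unfold CoarselySimplyConnected CoarselySimplyConnectedWith CoarselyConnectedWith
  constructor
  · -- coarse connectedness of X
    refine ⟨A * (max s 0 + 3 * B), ?_⟩
    intro x x'
    set g : Y → X := fun y => Classical.choose (hdense y) with hgdef
    have hg : ∀ y, dist (f (g y)) y ≤ B := fun y => Classical.choose_spec (hdense y)
    obtain ⟨q, ⟨hqne, hqc⟩, hqh, hql⟩ := hconn (f x) (f x')
    refine ⟨x :: (q.map g ++ [x']), ⟨List.cons_ne_nil _ _, ?_⟩, rfl, ?_⟩
    · rw [List.Chain', List.isChain_cons]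
      constructor
      · intro y hy
        obtain ⟨y0, q', rfl⟩ := List.exists_cons_of_ne_nil hqne
        have hy0 : y0 = f x := by simpa using hqh
        subst hy0
        simp only [List.map_cons, List.cons_append, List.head?_cons, Option.mem_def,
          Option.some.injEq] at hy
        subst hy
        have h1 := hdist_le x (g (f x))
        have h2 : dist (f x) (f (g (f x))) ≤ B := by rw [dist_comm]; exact hg (f x)
        have h3 : (0:ℝ) ≤ max s 0 := le_max_right _ _
        nlinarith [mul_le_mul_of_nonneg_left h2 hA0.le]
      · rw [List.isChain_append]
        refine ⟨?_, List.isChain_singleton _, ?_⟩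
        · rw [List.isChain_map]
          exact hqc.imp fun a b hab => glip g hg _ a b (hab.trans (le_max_left s 0))
        · intro u hu v hv
          simp only [List.head?_cons, Option.mem_def, Option.some.injEq] at hv
          subst hv
          rw [List.getLast?_map, hql] at hu
          simp only [Option.map_some, Option.mem_def, Option.some.injEq] at hu
          subst hu
          have h1 := hdist_le (g (f x')) x'
          have h2 := hg (f x')
          have h3 : (0:ℝ) ≤ max s 0 := le_max_right _ _
          nlinarith [mul_le_mul_of_nonneg_left h2 hA0.le]
    · show (x :: (q.map g ++ [x'])).getLast? = some x'
      rw [show x :: (q.map g ++ [x']) = (x :: q.map g) ++ [x'] from rfl, List.getLast?_concat]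
  · -- filling loops in X
    intro r
    set r₀ : ℝ := max r 0 with hr₀
    have hr₀0 : 0 ≤ r₀ := le_max_right _ _
    set rY : ℝ := A * r₀ + B with hrY
    obtain ⟨t, htY, hYfill⟩ := hfill rY
    have hrY0 : 0 ≤ rY := by
      have : 0 ≤ A * r₀ := mul_nonneg hA0.le hr₀0
      linarith
    have ht0 : 0 ≤ t := hrY0.trans htY
    set tg : ℝ := A * (t + 3 * B) with htg
    set s₀ : ℝ := max r₀ tg with hs₀
    set cc : ℝ := 2 * (A * B) with hcc
    refine ⟨max r (max (s₀ + cc) tg), le_max_left _ _, ?_⟩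
    intro x p hploop
    obtain ⟨⟨hpne, hpchain⟩, hph, hpl⟩ := hploop
    set g : Y → X := fun y => if y = f x then x else Classical.choose (hdense y) with hgdef
    have hg : ∀ y, dist (f (g y)) y ≤ B := by
      intro y
      by_cases hy : y = f x
      · subst hy
        have : g (f x) = x := by simp [hgdef]
        rw [this]
        simpa using hB
      · simp only [hgdef, if_neg hy]
        exact Classical.choose_spec (hdense y)
    have hgfx : g (f x) = x := by simp [hgdef]
    have hfp : IsLoopOf (dist : Y → Y → ℝ) rY (f x) (p.map f) := by
      refine ⟨⟨by simpa using hpne, ?_⟩, ?_, ?_⟩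
      · rw [List.Chain', List.isChain_map]
        refine hpchain.imp fun a b hab => ?_
        have h1 := hup a b
        have h2 : dist a b ≤ r₀ := hab.trans (le_max_left _ _)
        nlinarith [mul_le_mul_of_nonneg_left h2 hA0.le]
      · rw [List.head?_map, hph]; rfl
      · rw [List.getLast?_map, hpl]; rfl
    obtain ⟨k, hk⟩ := hYfill (f x) (p.map f) hfp
    have hk' : PathEquiv (dist : X → X → ℝ) tg ((p.map f).map g)
        ((List.replicate (k+1) (f x)).map g) :=
      pathEquiv_map _ _ g (fun a b hab => glip g hg t a b hab) hk
    rw [List.map_map, List.map_replicate, hgfx] at hk'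
    have hs₀0 : 0 ≤ s₀ := hr₀0.trans (le_max_left _ _)
    have hcc0 : 0 ≤ cc := by
      have : 0 ≤ A * B := mul_nonneg hA0.le hB
      linarith
    have hclose : PathEquiv (dist : X → X → ℝ) (s₀ + cc) p (p.map (g ∘ f)) := by
      refine close_pathEquiv hs₀0 hcc0 ?_ ?_ ?_ ?_ ?_
      · rw [List.forall₂_map_right_iff, List.forall₂_same]
        intro z _
        simp only [Function.comp_apply]
        have h1 := hdist_le z (g (f z))
        have h2 : dist (f z) (f (g (f z))) ≤ B := by rw [dist_comm]; exact hg (f z)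
        nlinarith [mul_le_mul_of_nonneg_left h2 hA0.le]
      · exact hpchain.imp fun a b hab =>
          hab.trans ((le_max_left r 0).trans (le_max_left r₀ tg))
      · rw [List.Chain', List.isChain_map]
        refine hpchain.imp fun a b hab => ?_
        have h1 : dist (f a) (f b) ≤ t := by
          have h2 := hup a b
          have h3 : dist a b ≤ r₀ := hab.trans (le_max_left _ _)
          have h4 : dist (f a) (f b) ≤ rY := by
            nlinarith [mul_le_mul_of_nonneg_left h3 hA0.le]
          exact h4.trans htY
        exact (glip g hg t (f a) (f b) h1).trans (le_max_right r₀ tg)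
      · simp [List.head?_map, hph, hgfx, Function.comp]
      · simp [List.getLast?_map, hpl, hgfx, Function.comp]
    refine ⟨k, ?_⟩
    have e1 := pathEquiv_mono (dist : X → X → ℝ)
      (le_trans (le_max_left (s₀ + cc) tg) (le_max_right r (max (s₀ + cc) tg))) hclose
    have e2 := pathEquiv_mono (dist : X → X → ℝ)
      (le_trans (le_max_right (s₀ + cc) tg) (le_max_right r (max (s₀ + cc) tg))) hk'
    exact Relation.EqvGen.trans _ _ _ e1 e2
end

section
/- Let G and H be locally compact, compactly generated Hausdorff topological groups, with compact generating subsets S and T respectively. Suppose that G equipped with the word metric with respect to S is quasi-isometric to H equipped with the word metric with respect to T. Then G is compactly presented if and only if H is compactly presented. -/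
open scoped Pointwise

open scoped Classical
set_option linter.unusedSectionVars false
set_option maxHeartbeats 1000000

namespace CPQI


variable {G : Type*} [Group G]

/-- ℕ-valued word distance. -/
noncomputable def wdistN (S : Set G) (g h : G) : ℕ := sInf {n : ℕ | g⁻¹ * h ∈ (S ∪ S⁻¹) ^ n}

lemma symm_pow_inv_mem {P : Set G} (hP : P⁻¹ = P) : ∀ n, ∀ x ∈ P ^ n, x⁻¹ ∈ P ^ n := by
  intro n
  induction n with
  | zero => intro x hx; simp_all
  | succ n ih =>
    intro x hx
    rw [pow_succ] at hx
    rcases Set.mem_mul.1 hx with ⟨y, hy, z, hz, rfl⟩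
    rw [mul_inv_rev, pow_succ']
    exact Set.mul_mem_mul (by rw [← hP]; exact Set.inv_mem_inv.2 hz) (ih _ hy)

lemma union_inv_inv (S : Set G) : (S ∪ S⁻¹)⁻¹ = S ∪ S⁻¹ := by
  ext x; simp [or_comm]

/-- generation gives some power membership -/
lemma exists_pow_mem {S : Set G} (hgen : Subgroup.closure S = ⊤) (x : G) :
    ∃ n, x ∈ (S ∪ S⁻¹) ^ n := by
  have hx : x ∈ (Subgroup.closure S).toSubmonoid := by rw [hgen]; trivial
  rw [Subgroup.closure_toSubmonoid] at hx
  obtain ⟨l, hl, rfl⟩ := Submonoid.exists_list_of_mem_closure hx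
  refine ⟨l.length, ?_⟩
  clear hx
  induction l with
  | nil => simp
  | cons a l ih =>
    simp only [List.length_cons, List.prod_cons, pow_succ']
    exact Set.mul_mem_mul (hl a (by simp)) (ih fun y hy => hl y (by simp [hy]))

lemma wdistN_nonempty {S : Set G} (hgen : Subgroup.closure S = ⊤) (g h : G) :
    {n : ℕ | g⁻¹ * h ∈ (S ∪ S⁻¹) ^ n}.Nonempty := exists_pow_mem hgen _

lemma wdistN_spec {S : Set G} (hgen : Subgroup.closure S = ⊤) (g h : G) :
    g⁻¹ * h ∈ (S ∪ S⁻¹) ^ (wdistN S g h) := Nat.sInf_mem (wdistN_nonempty hgen g h)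

lemma wdistN_le {S : Set G} {g h : G} {n : ℕ} (hn : g⁻¹ * h ∈ (S ∪ S⁻¹) ^ n) :
    wdistN S g h ≤ n := Nat.sInf_le hn

lemma wdistN_self (S : Set G) (g : G) : wdistN S g g = 0 :=
  Nat.le_zero.1 (wdistN_le (by simp))

lemma wdistN_symm (S : Set G) (hgen : Subgroup.closure S = ⊤) (g h : G) :
    wdistN S g h = wdistN S h g := by
  have key : ∀ a b : G, wdistN S a b ≤ wdistN S b a := by
    intro a b
    apply wdistN_le
    have := symm_pow_inv_mem (union_inv_inv S) _ _ (wdistN_spec hgen b a)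
    simpa using this
  exact le_antisymm (key g h) (key h g)

lemma wdistN_triangle {S : Set G} (hgen : Subgroup.closure S = ⊤) (g h k : G) :
    wdistN S g k ≤ wdistN S g h + wdistN S h k := by
  apply wdistN_le
  rw [pow_add]
  have : g⁻¹ * k = (g⁻¹ * h) * (h⁻¹ * k) := by group
  rw [this]
  exact Set.mul_mem_mul (wdistN_spec hgen g h) (wdistN_spec hgen h k)


variable {G : Type*} [Group G]

/-- evaluation of a letter -/
def lv {S : Set G} (a : S × Bool) : G := cond a.2 (a.1 : G) (a.1 : G)⁻¹

noncomputable abbrev liftS (S : Set G) : FreeGroup S →* G := FreeGroup.lift (fun s : S => (s : G))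

lemma liftS_mk {S : Set G} (L : List (S × Bool)) :
    liftS S (FreeGroup.mk L) = (L.map lv).prod := by
  rw [FreeGroup.lift_mk]
  congr 1

lemma liftS_single {S : Set G} (a : S × Bool) : liftS S (FreeGroup.mk [a]) = lv a := by
  rw [liftS_mk]; simp

lemma lv_mem {S : Set G} (a : S × Bool) : lv a ∈ S ∪ S⁻¹ := by
  rcases a with ⟨s, b⟩
  cases b
  · exact Or.inr (by simp [lv])
  · exact Or.inl (by simp [lv])

/-- a word evaluates into the corresponding power -/
lemma word_mem_pow {S : Set G} (L : List (S × Bool)) :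
    liftS S (FreeGroup.mk L) ∈ (S ∪ S⁻¹) ^ L.length := by
  induction L with
  | nil => simp [liftS_mk]
  | cons a L ih =>
    have : FreeGroup.mk (a :: L) = FreeGroup.mk [a] * FreeGroup.mk L := by
      rw [FreeGroup.mul_mk]; rfl
    rw [this, map_mul, liftS_single, List.length_cons, pow_succ']
    exact Set.mul_mem_mul (lv_mem a) ih

/-- membership in a power gives a word of that length -/
lemma exists_word_of_mem_pow {S : Set G} : ∀ {n : ℕ} {x : G}, x ∈ (S ∪ S⁻¹) ^ n →
    ∃ L : List (S × Bool), L.length = n ∧ liftS S (FreeGroup.mk L) = x := by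
  intro n
  induction n with
  | zero => intro x hx; refine ⟨[], rfl, ?_⟩; simp at hx; simp [liftS_mk, hx]
  | succ n ih =>
    intro x hx
    rw [pow_succ'] at hx
    rcases Set.mem_mul.1 hx with ⟨y, hy, z, hz, rfl⟩
    obtain ⟨L, hL, hLe⟩ := ih hz
    rcases hy with hy | hy
    · refine ⟨(⟨y, hy⟩, true) :: L, by simp [hL], ?_⟩
      have : FreeGroup.mk ((⟨y, hy⟩, true) :: L) = FreeGroup.mk [(⟨y, hy⟩, true)] * FreeGroup.mk L := by
        rw [FreeGroup.mul_mk]; rfl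
      rw [this, map_mul, liftS_single, hLe]; rfl
    · refine ⟨(⟨y⁻¹, hy⟩, false) :: L, by simp [hL], ?_⟩
      have : FreeGroup.mk ((⟨y⁻¹, hy⟩, false) :: L) = FreeGroup.mk [(⟨y⁻¹, hy⟩, false)] * FreeGroup.mk L := by
        rw [FreeGroup.mul_mk]; rfl
      rw [this, map_mul, liftS_single, hLe]
      simp [lv]

lemma liftS_surjective {S : Set G} (hgen : Subgroup.closure S = ⊤) :
    Function.Surjective (liftS S) := by
  intro x
  obtain ⟨n, hx⟩ := exists_pow_mem hgen x
  obtain ⟨L, _, hL⟩ := exists_word_of_mem_pow hx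
  exact ⟨FreeGroup.mk L, hL⟩


variable {H : Type*} [Group H] {S : Set G} {T : Set H}


lemma mk_cons {α : Type*} (a : α × Bool) (L : List (α × Bool)) :
    FreeGroup.mk (a :: L) = FreeGroup.mk [a] * FreeGroup.mk L := by
  rw [FreeGroup.mul_mk]; rfl

lemma lv_flip (t : T) (b : Bool) : lv ((t, !b) : T × Bool) = (lv ((t, b) : T × Bool))⁻¹ := by
  cases b <;> simp [lv]

/-- pullback of an `H`-word to `FreeGroup S` along a connecting family `c`. -/
def pull (c : H → H → FreeGroup S) : H → List (T × Bool) → FreeGroup S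
  | _, [] => 1
  | z, a :: V => c z (z * lv a) * pull c (z * lv a) V

@[simp] lemma pull_nil (c : H → H → FreeGroup S) (z : H) : pull c z ([] : List (T × Bool)) = 1 := rfl

lemma pull_cons (c : H → H → FreeGroup S) (z : H) (a : T × Bool) (V : List (T × Bool)) :
    pull c z (a :: V) = c z (z * lv a) * pull c (z * lv a) V := rfl

lemma pull_append (c : H → H → FreeGroup S) (z : H) (V₁ V₂ : List (T × Bool)) :
    pull c z (V₁ ++ V₂) = pull c z V₁ * pull c (z * liftS T (FreeGroup.mk V₁)) V₂ := by
  induction V₁ generalizing z with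
  | nil =>
    have : liftS T (FreeGroup.mk ([] : List (T × Bool))) = 1 := by simp [liftS_mk]
    simp [this]
  | cons a V₁ ih =>
    rw [List.cons_append, pull_cons, pull_cons, ih, mk_cons, map_mul, liftS_single, mul_assoc,
      mul_assoc]

variable {c : H → H → FreeGroup S}

lemma pull_step (hanti : ∀ z z', c z z' = (c z' z)⁻¹) {V V' : List (T × Bool)}
    (h : FreeGroup.Red.Step V V') (z : H) : pull c z V = pull c z V' := by
  induction h with
  | @not L₁ L₂ x b =>
    rw [pull_append, pull_append]
    congr 1
    rw [pull_cons, pull_cons]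
    set w := z * liftS T (FreeGroup.mk L₁) with hw
    rw [lv_flip x b, mul_inv_cancel_right, hanti w (w * lv ((x, b) : T × Bool)), ← mul_assoc,
      inv_mul_cancel, one_mul]

lemma pull_red (hanti : ∀ z z', c z z' = (c z' z)⁻¹) {V V' : List (T × Bool)}
    (h : FreeGroup.Red V V') (z : H) : pull c z V = pull c z V' := by
  induction h with
  | refl => rfl
  | tail _ h ih => exact ih.trans (pull_step hanti h z)

lemma pull_eq_of_mk_eq (hanti : ∀ z z', c z z' = (c z' z)⁻¹) {V V' : List (T × Bool)}
    (h : FreeGroup.mk V = FreeGroup.mk V') (z : H) : pull c z V = pull c z V' := by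
  obtain ⟨L, h₁, h₂⟩ := FreeGroup.Red.exact.1 h
  rw [pull_red hanti h₁ z, pull_red hanti h₂ z]

/-- pullback of a free group element. -/
noncomputable def pull' (c : H → H → FreeGroup S) (z : H) (x : FreeGroup T) : FreeGroup S :=
  pull c z x.toWord

lemma pull'_mk (hanti : ∀ z z', c z z' = (c z' z)⁻¹) (z : H) (V : List (T × Bool)) :
    pull' c z (FreeGroup.mk V) = pull c z V :=
  pull_eq_of_mk_eq hanti (by rw [FreeGroup.mk_toWord]) z

@[simp] lemma pull'_one (z : H) : pull' c z (1 : FreeGroup T) = 1 := by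
  unfold pull'
  rw [FreeGroup.toWord_one]
  rfl

lemma pull'_mul (hanti : ∀ z z', c z z' = (c z' z)⁻¹) (z : H) (x y : FreeGroup T) :
    pull' c z (x * y) = pull' c z x * pull' c (z * liftS T x) y := by
  have h1 : pull' c z (x * y) = pull c z (x.toWord ++ y.toWord) := by
    apply pull_eq_of_mk_eq hanti
    rw [FreeGroup.mk_toWord, ← FreeGroup.mul_mk, FreeGroup.mk_toWord, FreeGroup.mk_toWord]
  rw [h1, pull_append, FreeGroup.mk_toWord]
  rfl

lemma pull'_inv (hanti : ∀ z z', c z z' = (c z' z)⁻¹) (z : H) (x : FreeGroup T) :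
    pull' c (z * liftS T x) x⁻¹ = (pull' c z x)⁻¹ := by
  have := pull'_mul hanti z x x⁻¹
  rw [mul_inv_cancel, pull'_one] at this
  exact (inv_eq_of_mul_eq_one_right this.symm).symm

lemma pull_eval {φ : H → G} (heval : ∀ z z', liftS S (c z z') = (φ z)⁻¹ * φ z')
    (z : H) (V : List (T × Bool)) :
    liftS S (pull c z V) = (φ z)⁻¹ * φ (z * liftS T (FreeGroup.mk V)) := by
  induction V generalizing z with
  | nil => simp [liftS_mk]
  | cons a V ih =>
    rw [pull_cons, map_mul, heval, ih, mk_cons, map_mul, liftS_single, ← mul_assoc, ← mul_assoc]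
    simp [mul_assoc]

lemma pull_length {C : ℕ}
    (hlen : ∀ z z', wdistN T z z' ≤ 1 → ∃ w : List (S × Bool), FreeGroup.mk w = c z z' ∧ w.length ≤ C)
    (z : H) (V : List (T × Bool)) :
    ∃ w : List (S × Bool), FreeGroup.mk w = pull c z V ∧ w.length ≤ C * V.length := by
  induction V generalizing z with
  | nil => exact ⟨[], rfl, by simp⟩
  | cons a V ih =>
    obtain ⟨w₁, hw₁, hl₁⟩ := hlen z (z * lv a) (by
      apply wdistN_le (n := 1)
      simpa using lv_mem a)
    obtain ⟨w₂, hw₂, hl₂⟩ := ih (z * lv a)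
    refine ⟨w₁ ++ w₂, ?_, ?_⟩
    · rw [← FreeGroup.mul_mk, hw₁, hw₂, pull_cons]
    · simp only [List.length_append, List.length_cons]
      calc w₁.length + w₂.length ≤ C + C * V.length := Nat.add_le_add hl₁ hl₂
        _ = C * (V.length + 1) := by ring



/-- an antisymmetric family of connecting words -/
lemma exists_pairing {S : Set G} (hgen : Subgroup.closure S = ⊤) :
    ∃ p : G → G → FreeGroup S,
      (∀ a b, p a b = (p b a)⁻¹) ∧
      (∀ a b, liftS S (p a b) = a⁻¹ * b) ∧
      (∀ a b, ∃ w : List (S × Bool), FreeGroup.mk w = p a b ∧ w.length ≤ wdistN S a b) := by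
  have hch : ∀ a b : G, ∃ L : List (S × Bool), L.length = wdistN S a b ∧
      liftS S (FreeGroup.mk L) = a⁻¹ * b := fun a b =>
    exists_word_of_mem_pow (wdistN_spec hgen a b)
  choose q hq1 hq2 using hch
  refine ⟨fun a b =>
    if a = b then 1 else if WellOrderingRel a b then FreeGroup.mk (q a b)
      else (FreeGroup.mk (q b a))⁻¹, ?_, ?_, ?_⟩
  · intro a b
    by_cases hab : a = b
    · subst hab; simp
    have hba : ¬ b = a := fun h => hab h.symm
    rcases trichotomous_of WellOrderingRel a b with h | h | h
    · have h' : ¬ WellOrderingRel b a := asymm h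
      simp [hab, hba, h, h']
    · exact absurd h hab
    · have h' : ¬ WellOrderingRel a b := asymm h
      simp [hab, hba, h, h']
  · intro a b
    by_cases hab : a = b
    · subst hab; simp
    by_cases h : WellOrderingRel a b
    · simp only [hab, if_false, h, if_true]; exact hq2 a b
    · simp only [hab, if_false, h]
      rw [map_inv, hq2 b a]
      group
  · intro a b
    by_cases hab : a = b
    · subst hab
      exact ⟨[], by simp [FreeGroup.one_eq_mk], by simp⟩
    by_cases h : WellOrderingRel a b
    · exact ⟨q a b, by simp [hab, h], le_of_eq (hq1 a b)⟩
    · refine ⟨FreeGroup.invRev (q b a), ?_, ?_⟩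
      · simp only [hab, if_false, h, if_false]
        rw [← FreeGroup.inv_mk]
      · rw [FreeGroup.invRev_length, hq1 b a, wdistN_symm S hgen a b]


/-- trivial words of length at most `n` -/
def Rset (S : Set G) (n : ℕ) : Set (FreeGroup S) :=
  {r | (∃ w : List (S × Bool), FreeGroup.mk w = r ∧ w.length ≤ n) ∧ liftS S r = 1}

lemma Rset_mono (S : Set G) {m n : ℕ} (h : m ≤ n) : Rset S m ⊆ Rset S n :=
  fun r ⟨⟨w, hw, hl⟩, h1⟩ => ⟨⟨w, hw, hl.trans h⟩, h1⟩

lemma ncl_Rset_le_ker (S : Set G) (n : ℕ) :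
    Subgroup.normalClosure (Rset S n) ≤ MonoidHom.ker (liftS S) :=
  Subgroup.normalClosure_le_normal fun _ hr => hr.2

lemma mem_ncl_Rset_lift_eq_one {S : Set G} {n : ℕ} {x : FreeGroup S}
    (h : x ∈ Subgroup.normalClosure (Rset S n)) : liftS S x = 1 :=
  ncl_Rset_le_ker S n h

/-- bounded presentation is equivalent to presentability with all short trivial words -/
lemma boundedlyPresentedBy_iff {S : Set G} (hgen : Subgroup.closure S = ⊤) :
    BoundedlyPresentedBy G S ↔
      ∃ n, MonoidHom.ker (liftS S) = Subgroup.normalClosure (Rset S n) := by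
  constructor
  · rintro ⟨n, R, hword, hsurj, hker⟩
    refine ⟨n, le_antisymm ?_ (ncl_Rset_le_ker S n)⟩
    have hsub : R ⊆ Rset S n := by
      intro r hr
      refine ⟨hword r hr, ?_⟩
      have : r ∈ Subgroup.normalClosure R := Subgroup.subset_normalClosure hr
      rw [← hker] at this
      exact this
    rw [hker]
    exact Subgroup.normalClosure_le_normal
      (hsub.trans Subgroup.subset_normalClosure)
  · rintro ⟨n, hker⟩
    exact ⟨n, Rset S n, fun r hr => hr.1, liftS_surjective hgen, hker⟩


/-- The heart: pullbacks of elements of the normal closure of short trivial words lie in the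
normal closure of short trivial words. -/
lemma pull'_mem_ncl {S : Set G} {T : Set H} {c : H → H → FreeGroup S} {φ : H → G} {C n N : ℕ}
    (hanti : ∀ z z', c z z' = (c z' z)⁻¹)
    (heval : ∀ z z', liftS S (c z z') = (φ z)⁻¹ * φ z')
    (hlen : ∀ z z', wdistN T z z' ≤ 1 → ∃ w : List (S × Bool), FreeGroup.mk w = c z z' ∧ w.length ≤ C)
    (hN : C * n ≤ N)
    {x : FreeGroup T} (hx : x ∈ Subgroup.normalClosure (Rset T n)) (z : H) :
    pull' c z x ∈ Subgroup.normalClosure (Rset S N) := by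
  revert z
  have hx' := hx
  unfold Subgroup.normalClosure at hx'
  induction hx' using Subgroup.closure_induction with
  | mem r hr =>
    intro z
    rcases Group.mem_conjugatesOfSet_iff.1 hr with ⟨r₀, hr₀, hconj⟩
    rcases isConj_iff.1 hconj with ⟨u, rfl⟩
    have hr₀1 : liftS T r₀ = 1 := hr₀.2
    have e1 : pull' c z (u * r₀ * u⁻¹)
        = pull' c z u * pull' c (z * liftS T u) r₀ * (pull' c z u)⁻¹ := by
      rw [pull'_mul hanti, pull'_mul hanti, map_mul, hr₀1, mul_one, pull'_inv hanti]
    rw [e1]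
    have hmid : pull' c (z * liftS T u) r₀ ∈ Rset S N := by
      obtain ⟨w₀, hw₀, hlw₀⟩ := hr₀.1
      rw [← hw₀, pull'_mk hanti]
      constructor
      · obtain ⟨w, hw, hlw⟩ := pull_length hlen (z * liftS T u) w₀
        exact ⟨w, hw, hlw.trans (le_trans (Nat.mul_le_mul_left C hlw₀) hN)⟩
      · rw [pull_eval heval, hw₀, hr₀1, mul_one, inv_mul_cancel]
    exact (Subgroup.normalClosure_normal).conj_mem _
      (Subgroup.subset_normalClosure hmid) _
  | one =>
    intro z
    rw [pull'_one]
    exact one_mem _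
  | mul a b ha hb iha ihb =>
    intro z
    have ha1 : liftS T a = 1 := mem_ncl_Rset_lift_eq_one ha
    rw [pull'_mul hanti, ha1, mul_one]
    exact mul_mem (iha ha z) (ihb hb z)
  | inv a ha iha =>
    intro z
    have ha1 : liftS T a = 1 := mem_ncl_Rset_lift_eq_one ha
    have := pull'_inv hanti z a
    rw [ha1, mul_one] at this
    rw [this]
    exact inv_mem (iha ha z)

/-- MAIN transfer lemma -/
theorem main_transfer {S : Set G} (hSgen : Subgroup.closure S = ⊤)
    {T : Set H} (hTgen : Subgroup.closure T = ⊤)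
    (f : G → H) (g : H → G) (C : ℕ)
    (h1 : ∀ x x' : G, wdistN S x x' ≤ 1 → wdistN T (f x) (f x') ≤ C)
    (h2 : ∀ y y' : H, wdistN T y y' ≤ 1 → wdistN S (g y) (g y') ≤ C)
    (h3 : ∀ x : G, wdistN S (g (f x)) x ≤ C)
    (hH : ∃ n, MonoidHom.ker (liftS T) = Subgroup.normalClosure (Rset T n)) :
    ∃ N, MonoidHom.ker (liftS S) = Subgroup.normalClosure (Rset S N) := by
  obtain ⟨n, hker⟩ := hH
  obtain ⟨p, hpanti, hpeval, hpword⟩ := exists_pairing hSgen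
  -- connecting family over H
  set c : H → H → FreeGroup S := fun z z' => p (g z) (g z') with hc
  have hanti : ∀ z z', c z z' = (c z' z)⁻¹ := fun z z' => hpanti _ _
  have heval : ∀ z z', liftS S (c z z') = (g z)⁻¹ * g z' := fun z z' => hpeval _ _
  have hlen : ∀ z z', wdistN T z z' ≤ 1 →
      ∃ w : List (S × Bool), FreeGroup.mk w = c z z' ∧ w.length ≤ C := by
    intro z z' hd
    obtain ⟨w, hw, hlw⟩ := hpword (g z) (g z')
    exact ⟨w, hw, hlw.trans (h2 z z' hd)⟩
  -- choice of words over T representing f-images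
  have hv : ∀ x : G, ∃ v : FreeGroup T, liftS T v = f x := fun x => liftS_surjective hTgen (f x)
  choose v hveq using hv
  set N : ℕ := C * n + C * C + 2 * C + 1 with hN
  set NN := Subgroup.normalClosure (Rset S N) with hNN
  have hNn : C * n ≤ N := by omega
  -- cone words
  set cw : G → FreeGroup S := fun x => pull' c 1 (v x) * p (g (f x)) x with hcw
  -- triangle lemma
  have tri : ∀ (x : G) (a : S × Bool),
      cw x * FreeGroup.mk [a] * (cw (x * lv a))⁻¹ ∈ NN := by
    intro x a
    set x' := x * lv a with hx'
    have hd1 : wdistN S x x' ≤ 1 := by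
      apply wdistN_le (n := 1)
      rw [hx']
      simpa using lv_mem a
    have hdT : wdistN T (f x) (f x') ≤ C := h1 x x' hd1
    obtain ⟨u, hul, hue⟩ := exists_word_of_mem_pow (wdistN_spec hTgen (f x) (f x'))
    have hulC : u.length ≤ C := le_of_eq_of_le hul hdT
    -- the H-loop
    set X : FreeGroup T := v x * (FreeGroup.mk u * (v x')⁻¹) with hX
    have hXker : X ∈ MonoidHom.ker (liftS T) := by
      rw [MonoidHom.mem_ker, hX, map_mul, map_mul, map_inv, hveq, hveq, hue]
      group
    have hXmem : X ∈ Subgroup.normalClosure (Rset T n) := by rw [← hker]; exact hXker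
    have HP : pull' c 1 X ∈ NN := pull'_mem_ncl hanti heval hlen hNn hXmem 1
    -- expand pull' of X
    have HPeq : pull' c 1 X =
        pull' c 1 (v x) * (pull c (f x) u * (pull' c 1 (v x'))⁻¹) := by
      rw [hX, pull'_mul hanti, pull'_mul hanti, hveq, one_mul]
      have e2 : liftS T (FreeGroup.mk u) = (f x)⁻¹ * f x' := hue
      rw [e2]
      have e3 : f x * ((f x)⁻¹ * f x') = (1 : H) * liftS T (v x') := by
        rw [hveq]; group
      rw [e3, pull'_inv hanti, pull'_mk hanti]
    -- the small relator
    set E := pull c (f x) u with hE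
    set q := p (g (f x)) x with hq
    set q' := p (g (f x')) x' with hq'
    set r : FreeGroup S := q * FreeGroup.mk [a] * q'⁻¹ * E⁻¹ with hr
    have hrmem : r ∈ Rset S N := by
      constructor
      · obtain ⟨wq, hwq, hlq⟩ := hpword (g (f x)) x
        obtain ⟨wq', hwq', hlq'⟩ := hpword (g (f x')) x'
        obtain ⟨wE, hwE, hlE⟩ := pull_length hlen (f x) u
        refine ⟨wq ++ [a] ++ FreeGroup.invRev wq' ++ FreeGroup.invRev wE, ?_, ?_⟩
        · rw [← FreeGroup.mul_mk, ← FreeGroup.mul_mk, ← FreeGroup.mul_mk,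
            ← FreeGroup.inv_mk, ← FreeGroup.inv_mk, hwq, hwq', hwE, hr, hq, hq', hE]
        · simp only [List.length_append, FreeGroup.invRev_length, List.length_cons,
            List.length_nil]
          have l1 : wq.length ≤ C := hlq.trans (h3 x)
          have l2 : wq'.length ≤ C := hlq'.trans (h3 x')
          have l3 : wE.length ≤ C * C := hlE.trans (Nat.mul_le_mul_left C hulC)
          omega
      · rw [hr, map_mul, map_mul, map_mul, map_inv, map_inv, hq, hq', hpeval, hpeval,
          liftS_single, hE]
        rw [pull_eval heval, hue]
        have : f x * ((f x)⁻¹ * f x') = f x' := by group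
        rw [this, hx']
        group
    have hrNN : r ∈ NN := Subgroup.subset_normalClosure hrmem
    have key : cw x * FreeGroup.mk [a] * (cw x')⁻¹ =
        (pull' c 1 (v x) * r * (pull' c 1 (v x))⁻¹) * pull' c 1 X := by
      rw [HPeq, hcw, hr, hq, hq', hE]
      simp only [mul_inv_rev, inv_inv]
      group
    rw [key]
    exact mul_mem ((Subgroup.normalClosure_normal).conj_mem _ hrNN _) HP
  -- telescoping
  have tele : ∀ (L : List (S × Bool)) (x : G),
      cw x * FreeGroup.mk L * (cw (x * liftS S (FreeGroup.mk L)))⁻¹ ∈ NN := by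
    intro L
    induction L with
    | nil =>
      intro x
      have h1' : FreeGroup.mk ([] : List (S × Bool)) = 1 := (FreeGroup.one_eq_mk).symm
      rw [h1', map_one, mul_one, mul_one, mul_inv_cancel]
      exact one_mem _
    | cons a L ih =>
      intro x
      have e : cw x * FreeGroup.mk (a :: L) * (cw (x * liftS S (FreeGroup.mk (a :: L))))⁻¹ =
          (cw x * FreeGroup.mk [a] * (cw (x * lv a))⁻¹) *
          (cw (x * lv a) * FreeGroup.mk L * (cw ((x * lv a) * liftS S (FreeGroup.mk L)))⁻¹) := by
        rw [mk_cons, map_mul, liftS_single, ← mul_assoc x (lv a) (liftS S (FreeGroup.mk L))]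
        group
      rw [e]
      exact mul_mem (tri x a) (ih (x * lv a))
  refine ⟨N, le_antisymm ?_ (ncl_Rset_le_ker S N)⟩
  intro w hw
  have hw1 : liftS S w = 1 := hw
  have := tele (FreeGroup.toWord w) 1
  rw [FreeGroup.mk_toWord, hw1, mul_one] at this
  rw [← hNN]
  have hfin : w = (cw 1)⁻¹ * (cw 1 * w * (cw 1)⁻¹) * ((cw 1)⁻¹)⁻¹ := by group
  rw [hfin]
  exact (Subgroup.normalClosure_normal).conj_mem _ this _

section Top
variable [TopologicalSpace G] [IsTopologicalGroup G] [T2Space G] [LocallyCompactSpace G]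

lemma bigQ_inv (S : Set G) : (S ∪ S⁻¹ ∪ {1} : Set G)⁻¹ = S ∪ S⁻¹ ∪ {1} := by
  ext x; simp; tauto

lemma bigQ_compact {S : Set G} (hS : IsCompact S) : IsCompact (S ∪ S⁻¹ ∪ {1} : Set G) :=
  (hS.union hS.inv).union isCompact_singleton

lemma pow_compact {K : Set G} (hK : IsCompact K) : ∀ n, IsCompact (K ^ n) := by
  intro n
  induction n with
  | zero => rw [pow_zero]; exact isCompact_singleton
  | succ n ih => rw [pow_succ]; exact ih.mul hK

lemma drop_ones {P : Set G} : ∀ (k : ℕ), ∀ x ∈ (P ∪ {1}) ^ k, ∃ j ≤ k, x ∈ P ^ j := by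
  intro k
  induction k with
  | zero => intro x hx; exact ⟨0, le_refl _, by simpa using hx⟩
  | succ k ih =>
    intro x hx
    rw [pow_succ] at hx
    rcases Set.mem_mul.1 hx with ⟨y, hy, z, hz, rfl⟩
    obtain ⟨j, hj, hyj⟩ := ih y hy
    rcases hz with hz | hz
    · exact ⟨j + 1, by omega, by rw [pow_succ]; exact Set.mul_mem_mul hyj hz⟩
    · simp only [Set.mem_singleton_iff] at hz
      subst hz
      exact ⟨j, by omega, by simpa using hyj⟩

lemma pow_subset_bigQ_pow {S : Set G} : ∀ n, (S ∪ S⁻¹) ^ n ⊆ (S ∪ S⁻¹ ∪ {1} : Set G) ^ n := by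
  intro n
  exact Set.pow_subset_pow_left Set.subset_union_left

/-- any compact set is contained in a bounded ball -/
lemma compact_in_ball {S : Set G} (hS : IsCompact S) (hgen : Subgroup.closure S = ⊤)
    {K : Set G} (hK : IsCompact K) : ∃ m, ∀ x ∈ K, wdistN S 1 x ≤ m := by
  set Q : Set G := S ∪ S⁻¹ ∪ {1} with hQ
  have hQc : IsCompact Q := bigQ_compact hS
  have hQi : Q⁻¹ = Q := bigQ_inv S
  have hone : (1 : G) ∈ Q := by simp [hQ]
  have hQpow_inv : ∀ n, (Q ^ n)⁻¹ = Q ^ n := by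
    intro n
    ext x
    constructor
    · intro hx
      have := symm_pow_inv_mem hQi n x⁻¹ (by simpa using hx)
      simpa using this
    · intro hx
      exact Set.mem_inv.2 (by simpa using symm_pow_inv_mem hQi n x hx)
  have hmemQ : ∀ x : G, ∃ n, x ∈ Q ^ n := by
    intro x
    obtain ⟨n, hn⟩ := exists_pow_mem hgen x
    exact ⟨n, pow_subset_bigQ_pow n hn⟩
  have hcover : ⋃ n : ℕ, Q ^ n = Set.univ := by
    ext x; simp only [Set.mem_iUnion, Set.mem_univ, iff_true]; exact hmemQ x
  -- Baire
  obtain ⟨m, x₀, hx₀⟩ : ∃ (m : ℕ) (x₀ : G), x₀ ∈ interior (Q ^ m) := by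
    have hcl : ∀ n : ℕ, IsClosed ((Q : Set G) ^ n) := fun n => (pow_compact hQc n).isClosed
    obtain ⟨i, hi⟩ := nonempty_interior_of_iUnion_of_closed hcl hcover
    obtain ⟨x₀, hx₀⟩ := hi
    exact ⟨i, x₀, hx₀⟩
  set U : Set G := x₀⁻¹ • interior (Q ^ m) with hU
  have hUopen : IsOpen U := (isOpen_interior).smul _
  have hUone : (1 : G) ∈ U := by
    rw [hU, Set.mem_smul_set_iff_inv_smul_mem]
    simpa using hx₀
  have hUsub : U ⊆ Q ^ (2 * m) := by
    intro u hu
    rw [hU, Set.mem_smul_set_iff_inv_smul_mem] at hu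
    have h1 : x₀ * u ∈ Q ^ m := interior_subset (by simpa using hu)
    have h2 : x₀⁻¹ ∈ Q ^ m := by
      rw [← hQpow_inv m]
      exact Set.inv_mem_inv.2 (interior_subset hx₀)
    have : x₀⁻¹ * (x₀ * u) ∈ Q ^ m * Q ^ m := Set.mul_mem_mul h2 h1
    rw [← pow_add] at this
    simpa [two_mul, mul_assoc] using this
  -- cover K by translates
  have hcov2 : K ⊆ ⋃ g : G, g • U := by
    intro x _
    refine Set.mem_iUnion.2 ⟨x, ?_⟩
    rw [Set.mem_smul_set_iff_inv_smul_mem]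
    simpa using hUone
  obtain ⟨t, ht⟩ := hK.elim_finite_subcover (fun g : G => g • U)
    (fun g => hUopen.smul g) hcov2
  -- bound for elements of t
  have hbound : ∀ g ∈ t, ∃ j, g ∈ Q ^ j := fun g _ => hmemQ g
  choose! jfun hjfun using hbound
  set M := t.sup jfun with hM
  refine ⟨M + 2 * m, ?_⟩
  intro x hx
  obtain ⟨g, hgt, hgx⟩ := Set.mem_iUnion₂.1 (ht hx)
  rw [Set.mem_smul_set_iff_inv_smul_mem] at hgx
  have hg : g ∈ Q ^ (jfun g) := hjfun g hgt
  have hgM : Q ^ (jfun g) ⊆ Q ^ M :=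
    Set.pow_subset_pow_right hone (Finset.le_sup hgt)
  have hxQ : x ∈ Q ^ (M + 2 * m) := by
    have h1 : g⁻¹ * x ∈ Q ^ (2 * m) := hUsub hgx
    have h2 : g ∈ Q ^ M := hgM hg
    have := Set.mul_mem_mul h2 h1
    rw [← pow_add] at this
    simpa using this
  obtain ⟨j, hj, hxj⟩ := drop_ones (P := S ∪ S⁻¹) (M + 2 * m) x hxQ
  have : wdistN S 1 x ≤ j := wdistN_le (by simpa using hxj)
  omega
end Top

lemma wordDist_eq (S : Set G) (x y : G) : wordDist S x y = (wdistN S x y : ℝ) := rfl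

lemma wdistN_shift (S : Set G) (x x' : G) : wdistN S x x' = wdistN S 1 (x⁻¹ * x') := by
  simp [wdistN]

lemma gen_of_surj {S : Set G} (h : Function.Surjective (liftS S)) :
    Subgroup.closure S = ⊤ := by
  have h1 : (liftS S).range = Subgroup.closure (Set.range fun s : S => (s : G)) :=
    FreeGroup.range_lift_eq_closure
  rw [Subtype.range_coe] at h1
  rw [← h1]
  exact MonoidHom.range_eq_top.2 h

/-- change of compact generating set, as a transfer of the `Rset` presentation condition -/
lemma change_gen {G : Type*} [Group G] [TopologicalSpace G] [IsTopologicalGroup G]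
    [T2Space G] [LocallyCompactSpace G]
    {S : Set G} (hS : IsCompact S) (hSgen : Subgroup.closure S = ⊤)
    {S' : Set G} (hS' : IsCompact S') (hS'gen : Subgroup.closure S' = ⊤)
    (hpres : ∃ n, MonoidHom.ker (liftS S') = Subgroup.normalClosure (Rset S' n)) :
    ∃ n, MonoidHom.ker (liftS S) = Subgroup.normalClosure (Rset S n) := by
  obtain ⟨m₁, hm₁⟩ := compact_in_ball hS' hS'gen
    (K := S ∪ S⁻¹ ∪ {1}) (((hS.union hS.inv).union isCompact_singleton))
  obtain ⟨m₂, hm₂⟩ := compact_in_ball hS hSgen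
    (K := S' ∪ S'⁻¹ ∪ {1}) (((hS'.union hS'.inv).union isCompact_singleton))
  refine main_transfer hSgen hS'gen id id (max m₁ m₂) ?_ ?_ ?_ hpres
  · intro x x' hd
    simp only [id_eq]
    have hsp := wdistN_spec hSgen x x'
    rcases Nat.le_one_iff_eq_zero_or_eq_one.1 hd with h0 | h1'
    · rw [h0, pow_zero] at hsp
      simp only [Set.mem_one] at hsp
      rw [wdistN_shift S' x x', hsp]
      simp [wdistN_self]
    · rw [h1', pow_one] at hsp
      have : wdistN S' 1 (x⁻¹ * x') ≤ m₁ := hm₁ _ (Or.inl hsp)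
      rw [wdistN_shift S' x x']
      exact le_trans this (le_max_left _ _)
  · intro y y' hd
    simp only [id_eq]
    have hsp := wdistN_spec hS'gen y y'
    rcases Nat.le_one_iff_eq_zero_or_eq_one.1 hd with h0 | h1'
    · rw [h0, pow_zero] at hsp
      simp only [Set.mem_one] at hsp
      rw [wdistN_shift S y y', hsp]
      simp [wdistN_self]
    · rw [h1', pow_one] at hsp
      have : wdistN S 1 (y⁻¹ * y') ≤ m₂ := hm₂ _ (Or.inl hsp)
      rw [wdistN_shift S y y']
      exact le_trans this (le_max_right _ _)
  · intro x
    simp only [id_eq]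
    simp [wdistN_self]


end CPQI

/-- among locally compact compactly generated Hausdorff topological groups, being
compactly presented is a quasi-isometry invariant (for the word metrics of compact generating
subsets). -/
theorem compactlyPresented_iff_of_quasiIsometry {G H : Type*}
    [Group G] [TopologicalSpace G] [IsTopologicalGroup G] [T2Space G] [LocallyCompactSpace G]
    [Group H] [TopologicalSpace H] [IsTopologicalGroup H] [T2Space H] [LocallyCompactSpace H]
    (S : Set G) (hS : IsCompact S) (hSgen : Subgroup.closure S = ⊤)
    (T : Set H) (hT : IsCompact T) (hTgen : Subgroup.closure T = ⊤)
    (f : G → H) (hf : IsQuasiIsometryWith (wordDist S) (wordDist T) f) :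
    CompactlyPresented G ↔ CompactlyPresented H := by
  classical
  obtain ⟨A, B, hA, hB, hlow, hup, hdense⟩ := hf
  have hA0 : (0 : ℝ) < A := lt_of_lt_of_le one_pos hA
  -- quasi-inverse
  choose g hg using hdense
  -- natural-number constant
  set Bn : ℕ := ⌈B⌉₊ with hBn
  set C : ℕ := ⌈A * (3 * B + 4) + B + 1⌉₊ with hC
  have hBnB : (Bn : ℝ) ≤ B + 1 := le_of_lt (Nat.ceil_lt_add_one hB)
  have hCge : A * (3 * B + 4) + B + 1 ≤ (C : ℝ) := Nat.le_ceil _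
  -- basic distance facts in ℕ, via casts
  have cast_le : ∀ {d : ℕ} {x : ℝ}, (d : ℝ) ≤ x → x ≤ (C : ℝ) → d ≤ C := by
    intro d x h1 h2
    exact_mod_cast h1.trans h2
  have hgB : ∀ y, CPQI.wdistN T (f (g y)) y ≤ Bn := by
    intro y
    have := hg y
    rw [CPQI.wordDist_eq] at this
    exact_mod_cast this.trans (Nat.le_ceil B)
  -- h1 : f is coarse-Lipschitz at scale 1
  have h1 : ∀ x x' : G, CPQI.wdistN S x x' ≤ 1 → CPQI.wdistN T (f x) (f x') ≤ C := by
    intro x x' hd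
    have hup' := hup x x'
    rw [CPQI.wordDist_eq, CPQI.wordDist_eq] at hup'
    have hd' : (CPQI.wdistN S x x' : ℝ) ≤ 1 := by exact_mod_cast hd
    have hb : (CPQI.wdistN T (f x) (f x') : ℝ) ≤ A * 1 + B :=
      hup'.trans (add_le_add_left (mul_le_mul_of_nonneg_left hd' hA0.le) B)
    exact cast_le hb (by nlinarith)
  -- h2 : g is coarse-Lipschitz at scale 1
  have h2 : ∀ y y' : H, CPQI.wdistN T y y' ≤ 1 → CPQI.wdistN S (g y) (g y') ≤ C := by
    intro y y' hd
    have htr : CPQI.wdistN T (f (g y)) (f (g y')) ≤ 2 * Bn + 1 := by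
      have t1 := CPQI.wdistN_triangle hTgen (f (g y)) y (f (g y'))
      have t2 := CPQI.wdistN_triangle hTgen y y' (f (g y'))
      have e1 : CPQI.wdistN T (f (g y)) y ≤ Bn := hgB y
      have e2 : CPQI.wdistN T y' (f (g y')) ≤ Bn := by
        rw [CPQI.wdistN_symm T hTgen]; exact hgB y'
      omega
    have hlow' := hlow (g y) (g y')
    rw [CPQI.wordDist_eq, CPQI.wordDist_eq] at hlow'
    have htr' : (CPQI.wdistN T (f (g y)) (f (g y')) : ℝ) ≤ 2 * Bn + 1 := by exact_mod_cast htr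
    -- A⁻¹ * d - B ≤ 2Bn+1 ⇒ d ≤ A * (2Bn+1+B)
    set d : ℝ := (CPQI.wdistN S (g y) (g y') : ℝ) with hdd
    have step1 : A⁻¹ * d ≤ 2 * Bn + 1 + B := by linarith
    have step2 : d ≤ A * (2 * Bn + 1 + B) := by
      have := mul_le_mul_of_nonneg_left step1 hA0.le
      rw [← mul_assoc, mul_inv_cancel₀ hA0.ne', one_mul] at this
      exact this
    refine cast_le step2 ?_
    have : A * (2 * (Bn : ℝ) + 1 + B) ≤ A * (3 * B + 4) := by
      have : 2 * (Bn : ℝ) + 1 + B ≤ 3 * B + 4 := by linarith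
      exact mul_le_mul_of_nonneg_left this hA0.le
    linarith
  -- h3 : g ∘ f is close to identity
  have h3 : ∀ x : G, CPQI.wdistN S (g (f x)) x ≤ C := by
    intro x
    have hlow' := hlow (g (f x)) x
    rw [CPQI.wordDist_eq, CPQI.wordDist_eq] at hlow'
    have e1 : (CPQI.wdistN T (f (g (f x))) (f x) : ℝ) ≤ Bn := by exact_mod_cast hgB (f x)
    set d : ℝ := (CPQI.wdistN S (g (f x)) x : ℝ) with hdd
    have step1 : A⁻¹ * d ≤ Bn + B := by linarith
    have step2 : d ≤ A * (Bn + B) := by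
      have := mul_le_mul_of_nonneg_left step1 hA0.le
      rw [← mul_assoc, mul_inv_cancel₀ hA0.ne', one_mul] at this
      exact this
    refine cast_le step2 ?_
    have : A * ((Bn : ℝ) + B) ≤ A * (3 * B + 4) := by
      have : (Bn : ℝ) + B ≤ 3 * B + 4 := by linarith
      exact mul_le_mul_of_nonneg_left this hA0.le
    linarith
  -- h3' : f ∘ g is close to identity
  have h3' : ∀ y : H, CPQI.wdistN T (f (g y)) y ≤ C := by
    intro y
    refine le_trans (hgB y) ?_
    have : (Bn : ℝ) ≤ (C : ℝ) := by nlinarith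
    exact_mod_cast this
  constructor
  · rintro ⟨S', hS'c, hbp⟩
    have hS'gen : Subgroup.closure S' = ⊤ := CPQI.gen_of_surj hbp.choose_spec.choose_spec.2.1
    have hpres' : ∃ n, MonoidHom.ker (CPQI.liftS S') =
        Subgroup.normalClosure (CPQI.Rset S' n) := by
      obtain ⟨n, R, hw, hsurj, hker⟩ := hbp
      exact (CPQI.boundedlyPresentedBy_iff hS'gen).1 ⟨n, R, hw, hsurj, hker⟩
    have hpresS : ∃ n, MonoidHom.ker (CPQI.liftS S) =
        Subgroup.normalClosure (CPQI.Rset S n) :=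
      CPQI.change_gen hS hSgen hS'c hS'gen hpres'
    have hpresT : ∃ n, MonoidHom.ker (CPQI.liftS T) =
        Subgroup.normalClosure (CPQI.Rset T n) :=
      CPQI.main_transfer hTgen hSgen g f C h2 h1 h3' hpresS
    exact ⟨T, hT, (CPQI.boundedlyPresentedBy_iff hTgen).2 hpresT⟩
  · rintro ⟨T', hT'c, hbp⟩
    have hT'gen : Subgroup.closure T' = ⊤ := CPQI.gen_of_surj hbp.choose_spec.choose_spec.2.1
    have hpres' : ∃ n, MonoidHom.ker (CPQI.liftS T') =
        Subgroup.normalClosure (CPQI.Rset T' n) := by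
      obtain ⟨n, R, hw, hsurj, hker⟩ := hbp
      exact (CPQI.boundedlyPresentedBy_iff hT'gen).1 ⟨n, R, hw, hsurj, hker⟩
    have hpresT : ∃ n, MonoidHom.ker (CPQI.liftS T) =
        Subgroup.normalClosure (CPQI.Rset T n) :=
      CPQI.change_gen hT hTgen hT'c hT'gen hpres'
    have hpresS : ∃ n, MonoidHom.ker (CPQI.liftS S) =
        Subgroup.normalClosure (CPQI.Rset S n) :=
      CPQI.main_transfer hSgen hTgen f g C h1 h2 h3 hpresT
    exact ⟨S, hS, (CPQI.boundedlyPresentedBy_iff hSgen).2 hpresS⟩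
end

section
/- Let X be a weakly geodesic metric space. If X is simply connected (as a topological space), then X is coarsely simply connected. -/
namespace CSCaux

open List

variable {X : Type*} [MetricSpace X] {R : ℝ}

local notation "D" => (fun (a b : X) => dist a b ≤ R)

/-- chain' for a map over `range'`. -/
lemma chain'_map_range' (f : ℕ → X) :
    ∀ (n s : ℕ), (∀ j, s ≤ j → j + 1 < s + n → dist (f j) (f (j+1)) ≤ R) →
      ((List.range' s n).map f).Chain' (fun a b => dist a b ≤ R) := by
  intro n
  induction n with
  | zero => simp [List.Chain']
  | succ n ih =>
    intro s h
    rw [List.range'_succ]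
    cases n with
    | zero => simp [List.Chain']
    | succ n =>
      rw [List.range'_succ, map_cons, map_cons, List.Chain', isChain_cons_cons]
      refine ⟨h s le_rfl (by omega), ?_⟩
      have := ih (s+1) (fun j hj hj2 => h j (by omega) (by omega))
      rwa [List.range'_succ, map_cons] at this

lemma head?_map_range' (f : ℕ → X) (s n : ℕ) (hn : n ≠ 0) :
    ((List.range' s n).map f).head? = some (f s) := by
  cases n with
  | zero => omega
  | succ n => rw [List.range'_succ]; rfl

lemma getLast?_map_range' (f : ℕ → X) (s n : ℕ) (hn : n ≠ 0) :
    ((List.range' s n).map f).getLast? = some (f (s + n - 1)) := by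
  cases n with
  | zero => omega
  | succ n =>
    rw [show n + 1 = n + 1 by rfl, List.range'_concat, map_append]
    simp

end CSCaux

namespace CSCaux2
open List
variable {X : Type*} [MetricSpace X] {R : ℝ}
set_option linter.unusedSectionVars false

lemma ispath_mid {l₁ l₂ : List X} {a b c : X} (h : IsPathOf dist R (l₁ ++ a :: b :: l₂))
    (hac : dist a c ≤ R) (hcb : dist c b ≤ R) :
    IsPathOf dist R (l₁ ++ a :: c :: b :: l₂) := by
  obtain ⟨-, hch⟩ := h
  refine ⟨by simp, ?_⟩
  rw [List.Chain', List.isChain_append] at hch ⊢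
  obtain ⟨h1, h2, h3⟩ := hch
  exact ⟨h1, isChain_cons_cons.2 ⟨hac, isChain_cons_cons.2 ⟨hcb, (isChain_cons_cons.1 h2).2⟩⟩,
    by simpa using h3⟩

lemma insert_one {l₁ l₂ : List X} {a b c : X} (h : IsPathOf dist R (l₁ ++ a :: b :: l₂))
    (hac : dist a c ≤ R) (hcb : dist c b ≤ R) :
    PathInsertStep dist R (l₁ ++ a :: b :: l₂) (l₁ ++ a :: c :: b :: l₂) :=
  ⟨h, ispath_mid h hac hcb, l₁ ++ [a], b :: l₂, c, by simp, by simp, by simp, by simp⟩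

lemma insert_block : ∀ (blk l₁ l₂ : List X) (a b : X),
    IsPathOf dist R (l₁ ++ a :: b :: l₂) →
    (∀ u ∈ a :: b :: blk, ∀ v ∈ a :: b :: blk, dist u v ≤ R) →
    PathEquiv dist R (l₁ ++ a :: b :: l₂) (l₁ ++ a :: (blk ++ b :: l₂)) := by
  intro blk
  induction blk with
  | nil => intro l₁ l₂ a b _ _; exact Relation.EqvGen.refl _
  | cons c blk ih =>
    intro l₁ l₂ a b hp hbd
    have hac : dist a c ≤ R := hbd a (by simp) c (by simp)
    have hcb : dist c b ≤ R := hbd c (by simp) b (by simp)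
    have step := insert_one hp hac hcb
    have hmid : IsPathOf dist R (l₁ ++ a :: c :: b :: l₂) := ispath_mid hp hac hcb
    have hmid' : IsPathOf dist R ((l₁ ++ [a]) ++ c :: b :: l₂) := by simpa using hmid
    have hrec := ih (l₁ ++ [a]) l₂ c b hmid' (by
      intro u hu v hv
      simp only [List.mem_cons] at hu hv
      refine hbd u ?_ v ?_ <;> simp only [List.mem_cons] <;> tauto)
    have : PathEquiv dist R (l₁ ++ a :: c :: b :: l₂) (l₁ ++ a :: (c :: blk ++ b :: l₂)) := by
      simpa using hrec
    exact Relation.EqvGen.trans _ _ _ (Relation.EqvGen.rel _ _ step) this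

end CSCaux2

namespace CSCaux3
open List CSCaux
variable {X : Type*} [MetricSpace X] {R : ℝ}
set_option linter.unusedSectionVars false

def hyb (M : ℕ) (f g : ℕ → X) (a : ℕ) : List X :=
  (List.range a).map g ++ (List.range' a (M+1-a)).map f

def midl (M : ℕ) (f g : ℕ → X) (a : ℕ) : List X :=
  (List.range (a+1)).map g ++ (List.range' a (M+1-a)).map f

section rows
variable {M : ℕ} {f g : ℕ → X}
variable (hf : ∀ j < M, dist (f j) (f (j+1)) ≤ R)
variable (hg : ∀ j < M, dist (g j) (g (j+1)) ≤ R)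
variable (hfg : ∀ j ≤ M, dist (f j) (g j) ≤ R)
variable (hd : ∀ j < M, dist (g j) (f (j+1)) ≤ R)

include hf hg hfg hd

lemma ispath_hyb (a : ℕ) (ha1 : 1 ≤ a) (ha2 : a ≤ M + 1) :
    IsPathOf dist R (hyb M f g a) := by
  refine ⟨by simp [hyb]; omega, ?_⟩
  rw [hyb, List.Chain', List.isChain_append]
  refine ⟨?_, ?_, ?_⟩
  · rw [List.range_eq_range']
    exact chain'_map_range' g a 0 (fun j hj hj2 => hg j (by omega))
  · exact chain'_map_range' f (M+1-a) a (fun j hj hj2 => hf j (by omega))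
  · intro u hu v hv
    rcases Nat.lt_or_ge a (M+1) with h | h
    · rw [List.range_eq_range', getLast?_map_range' g 0 a (by omega)] at hu
      rw [head?_map_range' f a (M+1-a) (by omega)] at hv
      simp only [Option.mem_def, Option.some.injEq] at hu hv
      subst hu; subst hv
      have := hd (0 + a - 1) (by omega)
      rwa [show 0 + a - 1 + 1 = a by omega] at this
    · have : M + 1 - a = 0 := by omega
      rw [this] at hv; simp at hv

lemma ispath_mid' (a : ℕ) (ha1 : 1 ≤ a) (ha2 : a ≤ M) :
    IsPathOf dist R (midl M f g a) := by
  refine ⟨by simp [midl], ?_⟩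
  rw [midl, List.Chain', List.isChain_append]
  refine ⟨?_, ?_, ?_⟩
  · rw [List.range_eq_range']
    exact chain'_map_range' g (a+1) 0 (fun j hj hj2 => hg j (by omega))
  · exact chain'_map_range' f (M+1-a) a (fun j hj hj2 => hf j (by omega))
  · intro u hu v hv
    rw [List.range_eq_range', getLast?_map_range' g 0 (a+1) (by omega)] at hu
    rw [head?_map_range' f a (M+1-a) (by omega)] at hv
    simp only [Option.mem_def, Option.some.injEq] at hu hv
    subst hu; subst hv
    rw [show 0 + (a+1) - 1 = a by omega, dist_comm]
    exact hfg a (by omega)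

lemma hyb_step (a : ℕ) (ha1 : 1 ≤ a) (ha2 : a < M) :
    PathEquiv dist R (hyb M f g a) (hyb M f g (a+1)) := by
  have stepA : PathInsertStep dist R (hyb M f g a) (midl M f g a) := by
    refine ⟨ispath_hyb hf hg hfg hd a ha1 (by omega),
      ispath_mid' hf hg hfg hd a ha1 (by omega),
      (List.range a).map g, (List.range' a (M+1-a)).map f, g a, ?_, ?_, rfl, ?_⟩
    · simp; omega
    · simp; omega
    · rw [midl, List.range_succ, map_append]; simp [hyb]
  have stepB : PathInsertStep dist R (hyb M f g (a+1)) (midl M f g a) := by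
    refine ⟨ispath_hyb hf hg hfg hd (a+1) (by omega) (by omega),
      ispath_mid' hf hg hfg hd a ha1 (by omega),
      (List.range (a+1)).map g, (List.range' (a+1) (M-a)).map f, f a, ?_, ?_, ?_, ?_⟩
    · simp
    · simp; omega
    · rw [hyb, show M + 1 - (a+1) = M - a by omega]
    · rw [midl, show M + 1 - a = (M - a) + 1 by omega, List.range'_succ, map_cons]
  exact Relation.EqvGen.trans _ _ _ (Relation.EqvGen.rel _ _ stepA)
    (Relation.EqvGen.symm _ _ (Relation.EqvGen.rel _ _ stepB))

lemma rows_equiv (h0 : f 0 = g 0) (hM : f M = g M) :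
    PathEquiv dist R ((List.range (M+1)).map f) ((List.range (M+1)).map g) := by
  rcases Nat.eq_zero_or_pos M with hM0 | hM0
  · subst hM0
    rw [show (List.range 1).map f = [f 0] by rfl, show (List.range 1).map g = [g 0] by rfl,
      h0]
    exact Relation.EqvGen.refl _
  · have hrowf : (List.range (M+1)).map f = hyb M f g 1 := by
      rw [hyb, List.range_eq_range', List.range'_succ]
      simp [h0, List.range_succ]
    have hrowg : hyb M f g M = (List.range (M+1)).map g := by
      rw [hyb, show M + 1 - M = 1 by omega, List.range_succ, map_append]
      congr 1
      simp [hM]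
    have hchain : ∀ a, 1 ≤ a → a ≤ M → PathEquiv dist R (hyb M f g 1) (hyb M f g a) := by
      intro a
      induction a with
      | zero => omega
      | succ a ih =>
        intro _ ha2
        rcases Nat.eq_zero_or_pos a with h | h
        · subst h; exact Relation.EqvGen.refl _
        · exact Relation.EqvGen.trans _ _ _ (ih (by omega) (by omega))
            (hyb_step hf hg hfg hd a h (by omega))
    rw [hrowf, ← hrowg]
    exact hchain M (by omega) le_rfl

end rows
end CSCaux3

namespace CSCaux4
open List Set
variable {X : Type*} [MetricSpace X]

lemma unif_path (w : ℝ → ℝ)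
    (hw : ∀ x y : X, ∃ γ : Path x y, ∀ u v : unitInterval, dist (γ u) (γ v) ≤ w (dist x y))
    {r : ℝ} (hr : 0 < r) (x y : X) (hxy : dist x y ≤ r) :
    ∃ γ : Path x y, ∀ u v : unitInterval,
      dist (γ u) (γ v) ≤ 2 * max (w (2*r)) (4*r) := by
  obtain ⟨γ₀, hγ₀⟩ := hw x y
  set C := max (w (2*r)) (4*r) with hC
  have h4rC : 4*r ≤ C := le_max_right _ _
  have hC0 : 0 < C := lt_of_lt_of_le (by linarith) h4rC
  by_cases hbig : ∃ s : ℝ, s ∈ Set.Icc (0:ℝ) 1 ∧ 2*r < dist x (γ₀.extend s)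
  · obtain ⟨s₁, hs₁, hbig⟩ := hbig
    set F : ℝ → ℝ := fun s => dist x (γ₀.extend s) with hF
    have hFc : Continuous F := continuous_const.dist γ₀.continuous_extend
    have hF0 : F 0 = 0 := by simp [hF, Path.extend_zero]
    have hF1 : F 1 ≤ r := by simpa [hF, Path.extend_one] using hxy
    set K : Set ℝ := Set.Icc (0:ℝ) 1 ∩ F ⁻¹' {2*r} with hK
    have hKne : K.Nonempty := by
      have : (2*r) ∈ Set.Icc (F 0) (F s₁) := ⟨by rw [hF0]; linarith, le_of_lt hbig⟩
      obtain ⟨s₂, hs₂, hFs₂⟩ := intermediate_value_Icc hs₁.1 (hFc.continuousOn) this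
      exact ⟨s₂, ⟨⟨hs₂.1, le_trans hs₂.2 hs₁.2⟩, hFs₂⟩⟩
    have hKcl : IsClosed K := isClosed_Icc.inter (isClosed_eq hFc continuous_const)
    have hKbdd : BddAbove K := ⟨1, fun s hs => hs.1.2⟩
    set s₀ : ℝ := sSup K with hs₀
    have hs₀K : s₀ ∈ K := hKcl.csSup_mem hKne hKbdd
    have hs₀01 : s₀ ∈ Set.Icc (0:ℝ) 1 := hs₀K.1
    have hFs₀ : F s₀ = 2*r := hs₀K.2
    have hafter : ∀ s, s₀ ≤ s → s ≤ 1 → F s ≤ 2*r := by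
      intro s hs hs1
      by_contra hgt
      push_neg at hgt
      have h2r : (2*r) ∈ Set.Icc (F 1) (F s) := ⟨by linarith, le_of_lt hgt⟩
      obtain ⟨s', hs', hFs'⟩ := intermediate_value_Icc' hs1 (hFc.continuousOn) h2r
      have hs'K : s' ∈ K := ⟨⟨le_trans (le_trans hs₀01.1 hs) hs'.1, hs'.2⟩, hFs'⟩
      have : s' ≤ s₀ := le_csSup hKbdd hs'K
      have hss₀ : s₀ < s := lt_of_le_of_ne hs (fun h => by rw [← h] at hgt; linarith)
      linarith [hs'.1]
    set v : X := γ₀.extend s₀ with hv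
    have hdxv : dist x v = 2*r := hFs₀
    obtain ⟨η, hη⟩ := hw x v
    have hηbd : ∀ u : unitInterval, dist (η u) v ≤ C := by
      intro u
      have : dist (η u) (η 1) ≤ w (dist x v) := hη u 1
      rw [Path.target] at this
      rw [hdxv] at this
      exact le_trans this (le_max_left _ _)
    have htail0 : v = γ₀.extend (min s₀ 1) := by rw [min_eq_left hs₀01.2]
    have htail1 : y = γ₀.extend 1 := (γ₀.extend_one).symm
    set tail : Path v y := (γ₀.truncate s₀ 1).cast htail0 htail1 with htail
    have htailbd : ∀ u : unitInterval, dist (tail u) v ≤ C := by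
      intro u
      have happ : tail u = γ₀.extend (min (max (u:ℝ) s₀) 1) := rfl
      set s := min (max (u:ℝ) s₀) 1 with hs
      have h1 : s₀ ≤ s := le_min (le_max_right _ _) hs₀01.2
      have h2 : s ≤ 1 := min_le_right _ _
      have : dist x (tail u) ≤ 2*r := by rw [happ]; exact hafter s h1 h2
      have : dist (tail u) v ≤ dist (tail u) x + dist x v := dist_triangle _ _ _
      rw [dist_comm (tail u) x] at this
      calc dist (tail u) v ≤ dist x (tail u) + dist x v := this
        _ ≤ 2*r + 2*r := by
            refine add_le_add ?_ (le_of_eq hdxv)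
            rw [happ]; exact hafter s h1 h2
        _ ≤ C := by linarith
    refine ⟨η.trans tail, fun u u' => ?_⟩
    have hpt : ∀ u : unitInterval, dist ((η.trans tail) u) v ≤ C := by
      intro u
      rw [Path.trans_apply]
      split_ifs with h
      · exact hηbd _
      · exact htailbd _
    calc dist ((η.trans tail) u) ((η.trans tail) u')
        ≤ dist ((η.trans tail) u) v + dist v ((η.trans tail) u') := dist_triangle _ _ _
      _ ≤ C + C := add_le_add (hpt u) (by rw [dist_comm]; exact hpt u')
      _ = 2 * C := by ring
  · push_neg at hbig
    refine ⟨γ₀, fun u v => ?_⟩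
    have hball : ∀ u : unitInterval, dist x (γ₀ u) ≤ 2*r := by
      intro u
      have := hbig (u:ℝ) ⟨u.2.1, u.2.2⟩
      rwa [Path.extend_extends' γ₀ u] at this
    calc dist (γ₀ u) (γ₀ v) ≤ dist (γ₀ u) x + dist x (γ₀ v) := dist_triangle _ _ _
      _ ≤ 2*r + 2*r := add_le_add (by rw [dist_comm]; exact hball u) (hball v)
      _ ≤ 2 * C := by linarith

end CSCaux4


namespace CSCaux5
open List Set unitInterval
variable {X : Type*} [MetricSpace X]

noncomputable def Spath (x' : ℕ → X) (Γ : ∀ i, Path (x' i) (x' (i+1))) : ∀ k, Path (x' 0) (x' k)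
  | 0 => Path.refl (x' 0)
  | (k+1) => (Spath x' Γ k).trans (Γ k)

noncomputable def tau (k i : ℕ) : ℝ := if i = 0 then 0 else min 1 ((2:ℝ)^i / 2^k)

lemma tau_mem (k i : ℕ) : tau k i ∈ Set.Icc (0:ℝ) 1 := by
  rw [tau]
  split_ifs with h
  · exact ⟨le_rfl, zero_le_one⟩
  · exact ⟨le_min zero_le_one (by positivity), min_le_left _ _⟩

lemma tau_zero (k : ℕ) : tau k 0 = 0 := by simp [tau]

lemma tau_top (k : ℕ) (hk : 1 ≤ k) : tau k k = 1 := by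
  rw [tau, if_neg (by omega), div_self (by positivity), min_self]

lemma tau_mono (k i : ℕ) : tau k i ≤ tau k (i+1) := by
  have hpow : (2:ℝ)^i ≤ 2^(i+1) := pow_le_pow_right₀ one_le_two (by omega)
  rw [tau, tau, if_neg (Nat.succ_ne_zero i)]
  split_ifs with h
  · exact le_min zero_le_one (by positivity)
  · exact min_le_min le_rfl (by gcongr)

lemma tau_half (k i : ℕ) (hik : i ≤ k) : tau (k+1) i = tau k i / 2 := by
  rw [tau, tau]
  split_ifs with h
  · simp
  · have h1 : (2:ℝ)^i / 2^(k+1) = (2^i / 2^k) / 2 := by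
      rw [pow_succ]; ring
    have h2 : (2:ℝ)^i / 2^k ≤ 1 := by
      rw [div_le_one (by positivity)]
      exact pow_le_pow_right₀ (by norm_num) hik
    have h3 : (2:ℝ)^i / 2^(k+1) ≤ 1 := by
      rw [h1]; linarith
    rw [min_eq_right h2, min_eq_right h3, h1]

lemma tau_succ_le_half (k i : ℕ) (hik : i ≤ k) : tau (k+1) i ≤ 1/2 := by
  rw [tau_half k i hik]
  have := (tau_mem k i).2
  linarith

section seglemmas
variable (x' : ℕ → X) (Γ : ∀ i, Path (x' i) (x' (i+1)))

lemma Spath_bp : ∀ k, ∀ i ≤ k, Spath x' Γ k ⟨tau k i, tau_mem k i⟩ = x' i := by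
  intro k
  induction k with
  | zero =>
    intro i hi
    interval_cases i
    simp [Spath]
  | succ k ih =>
    intro i hi
    rcases Nat.lt_or_ge i (k+1) with h | h
    · have hik : i ≤ k := by omega
      rw [Spath, Path.trans_apply]
      have hhalf : (↑(⟨tau (k+1) i, tau_mem _ _⟩ : unitInterval) : ℝ) ≤ 1/2 :=
        tau_succ_le_half k i hik
      rw [dif_pos hhalf]
      convert ih i hik using 2
      apply Subtype.ext
      show 2 * tau (k+1) i = tau k i
      rw [tau_half k i hik]; ring
    · obtain rfl : i = k + 1 := by omega
      have e1 : (⟨tau (k+1) (k+1), tau_mem _ _⟩ : unitInterval) = 1 :=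
        Subtype.ext (tau_top (k+1) (by omega))
      rw [e1]
      exact Path.target _

lemma Spath_seg : ∀ k, ∀ i < k, ∀ u : unitInterval,
    tau k i ≤ (u:ℝ) → (u:ℝ) ≤ tau k (i+1) → ∃ v : unitInterval, Spath x' Γ k u = Γ i v := by
  intro k
  induction k with
  | zero => intro i hi; omega
  | succ k ih =>
    intro i hi u hu1 hu2
    rcases Nat.lt_or_ge i k with h | h
    · -- i < k : goes into first half
      have hu2' : (u:ℝ) ≤ 1/2 := le_trans hu2 (tau_succ_le_half k (i+1) (by omega))
      rw [Spath, Path.trans_apply, dif_pos hu2']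
      have h2u1 : tau k i ≤ 2 * (u:ℝ) := by
        rw [tau_half k i (by omega)] at hu1; linarith
      have h2u2 : 2 * (u:ℝ) ≤ tau k (i+1) := by
        rw [tau_half k (i+1) (by omega)] at hu2; linarith
      exact ih i h ⟨2 * (u:ℝ), ⟨mul_nonneg (by norm_num) u.2.1, by linarith⟩⟩ h2u1 h2u2
    · obtain rfl : i = k := by omega
      rw [Spath, Path.trans_apply]
      split_ifs with hhalf
      · refine ⟨0, ?_⟩
        have hsrc : Γ i 0 = x' i := Path.source _
        rw [hsrc]
        rcases Nat.eq_zero_or_pos i with h0 | h0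
        · subst h0; simp [Spath]
        · have h2u : 2 * (u:ℝ) = 1 := by
            have h1 : tau (i+1) i = 1/2 := by
              rw [tau_half i i le_rfl, tau_top i h0]
            rw [h1] at hu1
            linarith
          convert Spath_bp x' Γ i i le_rfl using 2
          apply Subtype.ext
          show 2 * (u:ℝ) = tau i i
          rw [h2u, tau_top i h0]
      · exact ⟨_, rfl⟩

end seglemmas
end CSCaux5


namespace CSCaux6
open List Set unitInterval CSCaux
variable {X : Type*} [MetricSpace X]

lemma unitdiv_mem (m j : ℕ) : min ((j:ℝ)/m) 1 ∈ Set.Icc (0:ℝ) 1 :=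
  ⟨le_min (by positivity) zero_le_one, min_le_right _ _⟩

lemma unitdiv_dist (m j : ℕ) (hm : 0 < m) (hj : j + 1 ≤ m) :
    |min (((j+1:ℕ):ℝ)/m) 1 - min ((j:ℝ)/m) 1| = 1/m := by
  have hm' : (0:ℝ) < m := by exact_mod_cast hm
  have hc : (((j+1:ℕ)):ℝ) = (j:ℝ)+1 := by push_cast; ring
  have h1 : (((j+1:ℕ)):ℝ)/m ≤ 1 := by
    rw [div_le_one hm']; exact_mod_cast hj
  have h0 : (j:ℝ)/m ≤ 1 := by
    rw [div_le_one hm']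
    rw [hc] at h1
    linarith [(div_le_one hm').1 h1]
  rw [min_eq_left h1, min_eq_left h0, hc]
  have he : ((j:ℝ)+1)/m - (j:ℝ)/m = 1/m := by field_simp; ring
  rw [he, abs_of_nonneg (by positivity)]

lemma range_split (a b : ℕ) (hb : 1 ≤ b) :
    List.range (a + b + 1) = List.range a ++ a :: (List.range' (a+1) (b-1) ++ [a+b]) := by
  rw [List.range_eq_range']
  have h1 : List.range' (a+1) (b-1) ++ [a+b] = List.range' (a+1) b := by
    have h := List.range'_append_1 (s := a+1) (m := b-1) (n := 1)
    rw [show a+1+(b-1) = a+b by omega, show b-1+1 = b by omega] at h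
    rw [← h]
    simp
  rw [h1, show a :: List.range' (a+1) b = List.range' a (b+1) from List.range'_succ.symm]
  have h3 := List.range'_append_1 (s := 0) (m := a) (n := b+1)
  rw [Nat.zero_add] at h3
  rw [show a+b+1 = a+(b+1) by omega, ← h3, List.range_eq_range']

lemma sample_path (x y : X) (γ : Path x y) {ε : ℝ} (hε : 0 < ε) :
    ∃ p : List X, IsPathOf dist ε p ∧ p.head? = some x ∧ p.getLast? = some y := by
  have huc : UniformContinuous ⇑γ :=
    CompactSpace.uniformContinuous_of_continuous γ.continuous
  obtain ⟨δ, hδ0, hδ⟩ := Metric.uniformContinuous_iff.1 huc ε hε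
  obtain ⟨m, hm⟩ := exists_nat_gt (1/δ)
  have hm0 : 0 < m := by
    rcases Nat.eq_zero_or_pos m with h | h
    · exfalso
      rw [h] at hm
      norm_num at hm
      linarith [one_div_pos.mpr hδ0]
    · exact h
  have hm' : (0:ℝ) < m := by exact_mod_cast hm0
  have hmδ : 1/(m:ℝ) < δ := by
    rw [div_lt_iff₀ hm']
    rw [div_lt_iff₀ hδ0] at hm
    linarith
  set u : ℕ → unitInterval := fun j => ⟨min ((j:ℝ)/m) 1, unitdiv_mem m j⟩ with hu
  set f : ℕ → X := fun j => γ (u j) with hf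
  refine ⟨(List.range (m+1)).map f, ⟨by simp, ?_⟩, ?_, ?_⟩
  · rw [List.range_eq_range']
    apply chain'_map_range'
    intro j hj hj2
    have hdist : dist (u j) (u (j+1)) < δ := by
      rw [Subtype.dist_eq]
      show dist (min ((j:ℝ)/m) 1) (min (((j+1:ℕ):ℝ)/m) 1) < δ
      rw [Real.dist_eq, abs_sub_comm, unitdiv_dist m j hm0 (by omega)]
      exact hmδ
    exact le_of_lt (hδ hdist)
  · rw [List.range_eq_range', head?_map_range' f 0 (m+1) (by omega)]
    have h00 : u 0 = 0 := by
      apply Subtype.ext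
      show min (((0:ℕ):ℝ)/m) 1 = ((0 : unitInterval) : ℝ)
      simp
    have h0 : f 0 = x := by
      rw [hf]
      simp only
      rw [h00]
      exact γ.source
    rw [h0]
  · rw [List.range_eq_range', getLast?_map_range' f 0 (m+1) (by omega),
      show 0 + (m+1) - 1 = m from by omega]
    have h1u : u m = 1 := by
      apply Subtype.ext
      show min (((m:ℕ):ℝ)/m) 1 = ((1 : unitInterval) : ℝ)
      rw [div_self (ne_of_gt hm'), min_self]
      rfl
    have h1 : f m = y := by
      rw [hf]
      simp only
      rw [h1u]
      exact γ.target
    rw [h1]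

end CSCaux6

namespace CSCmain
open List Set unitInterval CSCaux CSCaux2 CSCaux3 CSCaux4 CSCaux5 CSCaux6

theorem main {X : Type*} [MetricSpace X]
    [SimplyConnectedSpace X] (w : ℝ → ℝ)
    (hw : ∀ x y : X, ∃ γ : Path x y,
      ∀ u v : unitInterval, dist (γ u) (γ v) ≤ w (dist x y)) :
    CoarselySimplyConnectedWith (dist : X → X → ℝ) := by
  constructor
  · refine ⟨1, fun x y => ?_⟩
    obtain ⟨γ, -⟩ := hw x y
    exact sample_path x y γ one_pos
  · intro r
    set r₁ : ℝ := max r 1 with hr₁def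
    have hr₁pos : (0:ℝ) < r₁ := lt_of_lt_of_le one_pos (le_max_right _ _)
    set R : ℝ := 2 * max (w (2*r₁)) (4*r₁) with hRdef
    have h4 : 4*r₁ ≤ max (w (2*r₁)) (4*r₁) := le_max_right _ _
    have hmaxpos : 0 < max (w (2*r₁)) (4*r₁) := lt_of_lt_of_le (by linarith) h4
    have hr₁R : r₁ ≤ R := by rw [hRdef]; nlinarith
    have hrR : r ≤ R := le_trans (le_max_left r 1) hr₁R
    refine ⟨R, hrR, ?_⟩
    rintro x₀ p ⟨⟨hpne, hpch⟩, hph, hpl⟩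
    have hpch₁ : p.Chain' (fun a b => dist a b ≤ r₁) :=
      List.IsChain.imp (fun a b h => le_trans h (le_max_left _ _)) hpch
    -- trivial case : single point
    rcases hlen2 : p.length.lt_or_ge 2 with hlen | hlen
    · -- p = [x₀]
      have : p = [x₀] := by
        match p, hpne, hph with
        | [a], _, hph => simp at hph; rw [hph]
        | a :: b :: l, _, _ => simp at hlen
      refine ⟨0, ?_⟩
      rw [this]
      exact Relation.EqvGen.refl _
    -- main case
    set N : ℕ := p.length - 1 with hNdef
    have hN1 : 1 ≤ N := by omega
    have hlenN : p.length = N + 1 := by omega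
    have hgetD : ∀ i (h : i < p.length), p.getD i x₀ = p.get ⟨i, h⟩ := by
      intro i h
      simp [List.getD_eq_getElem?_getD, List.getElem?_eq_getElem h]
    set x' : ℕ → X := fun i => p.getD (min i N) x₀ with hx'def
    have hx'0 : x' 0 = x₀ := by
      show p.getD (min 0 N) x₀ = x₀
      rw [Nat.zero_min, List.getD_eq_getElem?_getD, ← List.head?_eq_getElem?, hph]
      rfl
    have hx'N : ∀ i, N ≤ i → x' i = x₀ := by
      intro i hi
      show p.getD (min i N) x₀ = x₀
      rw [min_eq_right hi, List.getD_eq_getElem?_getD]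
      have hNl : p[N]? = some x₀ := by
        have := List.getLast?_eq_getElem? (l := p)
        rw [hpl] at this
        rw [← this]
      rw [hNl]
      rfl
    have hchget : ∀ (j : ℕ), j + 1 < p.length →
        dist (p.getD j x₀) (p.getD (j+1) x₀) ≤ r₁ := by
      intro j h
      rw [hgetD j (by omega), hgetD (j+1) h]
      exact List.isChain_iff_getElem.1 hpch₁ j (by omega)
    have hx'adj : ∀ i, dist (x' i) (x' (i+1)) ≤ r₁ := by
      intro i
      rcases Nat.lt_or_ge i N with h | h
      · show dist (p.getD (min i N) x₀) (p.getD (min (i+1) N) x₀) ≤ r₁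
        rw [min_eq_left (by omega), min_eq_left (by omega)]
        exact hchget i (by omega)
      · show dist (p.getD (min i N) x₀) (p.getD (min (i+1) N) x₀) ≤ r₁
        rw [min_eq_right h, min_eq_right (by omega), dist_self]
        exact le_of_lt hr₁pos
    have hpeq : p = (List.range (N+1)).map x' := by
      apply List.ext_get
      · simp [hlenN]
      · intro j h1 h2
        simp only [List.get_eq_getElem, List.getElem_map, List.getElem_range]
        show p[j] = p.getD (min j N) x₀
        rw [min_eq_left (by omega : j ≤ N), hgetD j (by omega)]
        simp
    -- filler paths
    have hΓex : ∀ i, ∃ γ : Path (x' i) (x' (i+1)),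
        ∀ u v : unitInterval, dist (γ u) (γ v) ≤ R := by
      intro i
      obtain ⟨γ, hγ⟩ := unif_path w hw hr₁pos (x' i) (x' (i+1)) (hx'adj i)
      exact ⟨γ, fun u v => by rw [hRdef]; exact hγ u v⟩
    set Γ : ∀ i, Path (x' i) (x' (i+1)) := fun i => (hΓex i).choose with hΓdef
    have HΓ : ∀ i (u v : unitInterval), dist (Γ i u) (Γ i v) ≤ R :=
      fun i => (hΓex i).choose_spec
    set σ₀ : Path (x' 0) (x' N) := Spath x' Γ N with hσ₀def
    set sg : Path x₀ x₀ := σ₀.cast hx'0.symm ((hx'N N le_rfl).symm) with hsgdef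
    have hσcoe : ∀ t, sg t = σ₀ t := fun t => rfl
    have hom : Path.Homotopic sg (Path.refl x₀) :=
      SimplyConnectedSpace.paths_homotopic sg _
    set H := hom.some with hHdef
    have hHuc : UniformContinuous (⇑H : I × I → X) :=
      CompactSpace.uniformContinuous_of_continuous (map_continuous H)
    obtain ⟨δ, hδ0, hδ⟩ := Metric.uniformContinuous_iff.1 hHuc r₁ hr₁pos
    obtain ⟨m, hmgt⟩ := exists_nat_gt (1/δ)
    have hm0 : 0 < m := by
      rcases Nat.eq_zero_or_pos m with h | h
      · exfalso
        rw [h] at hmgt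
        norm_num at hmgt
        linarith [one_div_pos.mpr hδ0]
      · exact h
    have hm' : (0:ℝ) < m := by exact_mod_cast hm0
    have hmδ : 1/(m:ℝ) < δ := by
      rw [div_lt_iff₀ hm']
      rw [div_lt_iff₀ hδ0] at hmgt
      linarith
    set M : ℕ := N * m with hMdef
    have hM1 : 1 ≤ M := by
      have := Nat.mul_le_mul hN1 hm0
      omega
    set tj : ℕ → ℝ := fun j =>
      tau N (j/m) + ((j % m : ℕ):ℝ) * (tau N (j/m + 1) - tau N (j/m)) / m with htjdef
    have htj_seg : ∀ j, tau N (j/m) ≤ tj j ∧ tj j ≤ tau N (j/m+1) := by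
      intro j
      have hd0 : 0 ≤ tau N (j/m+1) - tau N (j/m) := by linarith [tau_mono N (j/m)]
      have hq : (0:ℝ) ≤ ((j % m : ℕ):ℝ) := Nat.cast_nonneg _
      have hqm : ((j % m : ℕ):ℝ) ≤ m := by
        exact_mod_cast le_of_lt (Nat.mod_lt j hm0)
      constructor
      · show tau N (j/m) ≤ tau N (j/m) + ((j % m : ℕ):ℝ) * (tau N (j/m + 1) - tau N (j/m)) / m
        have : 0 ≤ ((j % m:ℕ):ℝ) * (tau N (j/m+1) - tau N (j/m)) / m := by positivity
        linarith
      · show tau N (j/m) + ((j % m : ℕ):ℝ) * (tau N (j/m + 1) - tau N (j/m)) / m ≤ tau N (j/m+1)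
        have h1 : ((j % m:ℕ):ℝ) * (tau N (j/m+1) - tau N (j/m)) / m
            ≤ tau N (j/m+1) - tau N (j/m) := by
          rw [div_le_iff₀ hm']
          nlinarith
        linarith
    have htj_mem : ∀ j, tj j ∈ Set.Icc (0:ℝ) 1 := fun j =>
      ⟨le_trans (tau_mem N (j/m)).1 (htj_seg j).1,
        le_trans (htj_seg j).2 (tau_mem N (j/m+1)).2⟩
    set T : ℕ → unitInterval := fun j => ⟨tj j, htj_mem j⟩ with hTdef
    set ρ : ℕ → X := fun j => σ₀ (T j) with hρdef
    have hTbp : ∀ i, T (i*m) = ⟨tau N i, tau_mem N i⟩ := by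
      intro i
      apply Subtype.ext
      show tj (i*m) = tau N i
      show tau N ((i*m)/m) + (((i*m) % m : ℕ):ℝ) * (tau N ((i*m)/m + 1) - tau N ((i*m)/m)) / m
        = tau N i
      rw [Nat.mul_div_cancel i hm0, Nat.mul_mod_left i m]
      norm_num
    have hbp : ∀ i, i ≤ N → ρ (i*m) = x' i := by
      intro i hi
      show σ₀ (T (i*m)) = x' i
      rw [hTbp i]
      exact Spath_bp x' Γ N i hi
    have hdivlt : ∀ j, j < M → j/m < N := by
      intro j hj
      exact (Nat.div_lt_iff_lt_mul hm0).2 hj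
    have hseg : ∀ j, j < M → ∃ v, ρ j = Γ (j/m) v := by
      intro j hj
      exact Spath_seg x' Γ N (j/m) (hdivlt j hj) (T j) (htj_seg j).1 (htj_seg j).2
    have hρadj : ∀ j, j < M → dist (ρ j) (ρ (j+1)) ≤ R := by
      intro j hj
      obtain ⟨v, hv⟩ := hseg j hj
      rcases Nat.lt_or_ge (j+1) ((j/m + 1) * m) with h | h
      · have hdiv : (j+1)/m = j/m := by
          apply Nat.div_eq_of_lt_le
          · exact le_trans (Nat.div_mul_le_self j m) (by omega)
          · exact h
        have hj1M : j + 1 < M := by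
          have h2 : j/m + 1 ≤ N := hdivlt j hj
          calc j + 1 < (j/m+1)*m := h
            _ ≤ N * m := Nat.mul_le_mul_right m h2
        obtain ⟨v', hv'⟩ := hseg (j+1) hj1M
        rw [hv, hv', hdiv]
        exact HΓ _ _ _
      · have e1 : (j/m+1)*m = j/m*m + m := by ring
        have h1 := Nat.div_add_mod j m
        have h2 := Nat.mod_lt j hm0
        have e2 : j/m*m = m*(j/m) := Nat.mul_comm _ _
        have hj1 : j + 1 = (j/m + 1) * m := by omega
        have hiN : j/m + 1 ≤ N := hdivlt j hj
        have hlast : ρ (j+1) = x' (j/m + 1) := by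
          rw [hj1]
          exact hbp _ hiN
        rw [hv, hlast]
        have hfin : dist (Γ (j/m) v) (Γ (j/m) 1) ≤ R := HΓ _ _ _
        rwa [Path.target] at hfin
    -- STEP 1 : refine p into the fine sampled row
    have step1 : ∀ i, i ≤ N → PathEquiv dist R p
        ((List.range (i*m+1)).map ρ ++ (List.range' (i+1) (N-i)).map x') := by
      intro i
      induction i with
      | zero =>
        intro _
        have hρ0 : ρ 0 = x' 0 := by
          have := hbp 0 (by omega)
          rwa [Nat.zero_mul] at this
        have hL0 : (List.range (0*m+1)).map ρ ++ (List.range' (0+1) (N-0)).map x'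
            = (List.range (N+1)).map x' := by
          rw [Nat.zero_mul, show (List.range (0+1)).map ρ = [ρ 0] from rfl, hρ0]
          rw [List.range_eq_range', List.range'_succ]
          simp
        rw [hL0, ← hpeq]
        exact Relation.EqvGen.refl _
      | succ i ih =>
        intro hi1
        have hiN : i < N := by omega
        have hIH := ih (by omega)
        refine Relation.EqvGen.trans _ _ _ hIH ?_
        have himM : i*m + m ≤ M := by
          calc i*m + m = (i+1)*m := by ring
            _ ≤ N*m := Nat.mul_le_mul_right m (by omega)
        have hsplit : (List.range (i*m+1)).map ρ ++ (List.range' (i+1) (N-i)).map x'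
            = ((List.range (i*m)).map ρ) ++ ρ (i*m) :: x' (i+1)
              :: ((List.range' (i+2) (N-i-1)).map x') := by
          rw [List.range_succ, show N-i = (N-i-1)+1 by omega, List.range'_succ]
          simp
        have hpath : IsPathOf dist R (((List.range (i*m)).map ρ) ++ ρ (i*m) :: x' (i+1)
              :: ((List.range' (i+2) (N-i-1)).map x')) := by
          rw [← hsplit]
          constructor
          · simp
          · rw [List.Chain', List.isChain_append]
            refine ⟨?_, ?_, ?_⟩
            · rw [List.range_eq_range']
              apply chain'_map_range'
              intro j hj hj2
              exact hρadj j (by omega)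
            · apply chain'_map_range'
              intro j hj hj2
              exact le_trans (hx'adj j) hr₁R
            · intro u hu v hv
              rw [List.range_eq_range', getLast?_map_range' ρ 0 (i*m+1) (by omega)] at hu
              rw [head?_map_range' x' (i+1) (N-i) (by omega)] at hv
              simp only [Option.mem_def, Option.some.injEq] at hu hv
              subst hu; subst hv
              rw [show 0 + (i*m+1) - 1 = i*m by omega, hbp i (by omega)]
              exact le_trans (hx'adj i) hr₁R
        have hmem : ∀ z ∈ ρ (i*m) :: x' (i+1) :: ((List.range' (i*m+1) (m-1)).map ρ),
            ∃ v', z = Γ i v' := by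
          intro z hz
          rcases List.mem_cons.1 hz with h | h
          · refine ⟨0, ?_⟩
            rw [h, hbp i (by omega)]
            exact (Path.source _).symm
          rcases List.mem_cons.1 h with h | h
          · exact ⟨1, by rw [h]; exact (Path.target _).symm⟩
          · obtain ⟨j, hj, rfl⟩ := List.mem_map.1 h
            rw [List.mem_range'_1] at hj
            have hjM : j < M := by omega
            have hdiv : j / m = i := by
              apply Nat.div_eq_of_lt_le
              · omega
              · calc j < i*m + 1 + (m-1) := hj.2
                  _ ≤ (i+1)*m := by
                      have : (i+1)*m = i*m + m := by ring
                      omega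
            obtain ⟨v, hv⟩ := hseg j hjM
            rw [hdiv] at hv
            exact ⟨v, hv⟩
        have hpair : ∀ u ∈ ρ (i*m) :: x' (i+1) :: ((List.range' (i*m+1) (m-1)).map ρ),
            ∀ v ∈ ρ (i*m) :: x' (i+1) :: ((List.range' (i*m+1) (m-1)).map ρ),
            dist u v ≤ R := by
          intro u hu v hv
          obtain ⟨a', ha'⟩ := hmem u hu
          obtain ⟨b', hb'⟩ := hmem v hv
          rw [ha', hb']
          exact HΓ _ _ _
        have hins := insert_block (R := R) ((List.range' (i*m+1) (m-1)).map ρ)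
          ((List.range (i*m)).map ρ) ((List.range' (i+2) (N-i-1)).map x')
          (ρ (i*m)) (x' (i+1)) hpath hpair
        rw [hsplit]
        have hglue : ((List.range (i*m)).map ρ) ++ ρ (i*m)
              :: (((List.range' (i*m+1) (m-1)).map ρ) ++ x' (i+1)
                :: ((List.range' (i+2) (N-i-1)).map x'))
            = (List.range ((i+1)*m+1)).map ρ ++ (List.range' ((i+1)+1) (N-(i+1))).map x' := by
          have hx : x' (i+1) = ρ ((i+1)*m) := (hbp (i+1) (by omega)).symm
          rw [show (i+1)*m+1 = i*m + m + 1 by ring, range_split (i*m) m (by omega)]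
          rw [show N-(i+1) = N-i-1 by omega]
          simp only [List.map_append, List.map_cons, List.map_nil, List.append_assoc,
            List.cons_append, List.nil_append]
          rw [hx, show (i+1)*m = i*m + m by ring]
        rw [hglue] at hins
        exact hins
    -- STEP 2 : contract the fine row via the homotopy grid
    set sI : ℕ → unitInterval := fun k => ⟨min ((k:ℝ)/m) 1, unitdiv_mem m k⟩ with hsIdef
    have hsI0 : sI 0 = 0 := by
      apply Subtype.ext
      show min (((0:ℕ):ℝ)/m) 1 = ((0:unitInterval):ℝ)
      simp
    have hsIm : sI m = 1 := by
      apply Subtype.ext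
      show min (((m:ℕ):ℝ)/m) 1 = ((1:unitInterval):ℝ)
      rw [div_self (ne_of_gt hm'), min_self]
      rfl
    set Frow : ℕ → ℕ → X := fun k j => H (sI k, T j) with hFrowdef
    have hT0 : T 0 = 0 := by
      apply Subtype.ext
      show tau N (0/m) + (((0 % m : ℕ)):ℝ) * (tau N (0/m + 1) - tau N (0/m)) / m
        = ((0:unitInterval):ℝ)
      rw [Nat.zero_div, Nat.zero_mod, tau_zero]
      norm_num
    have hTM : T M = 1 := by
      apply Subtype.ext
      show tau N ((N*m)/m) + ((((N*m) % m : ℕ)):ℝ) * (tau N ((N*m)/m + 1) - tau N ((N*m)/m)) / m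
        = ((1:unitInterval):ℝ)
      rw [Nat.mul_div_cancel _ hm0, Nat.mul_mod_left, tau_top N hN1]
      norm_num
    have hrow0 : ∀ j, Frow 0 j = ρ j := by
      intro j
      show H (sI 0, T j) = σ₀ (T j)
      rw [hsI0]
      exact H.apply_zero (T j)
    have hrowm : ∀ j, Frow m j = x₀ := by
      intro j
      show H (sI m, T j) = x₀
      rw [hsIm]
      exact H.apply_one (T j)
    have hcol0 : ∀ k', Frow k' 0 = x₀ := by
      intro k'
      show H (sI k', T 0) = x₀
      rw [hT0]
      exact Path.Homotopy.source H (sI k')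
    have hcolM : ∀ k', Frow k' M = x₀ := by
      intro k'
      show H (sI k', T M) = x₀
      rw [hTM]
      exact Path.Homotopy.target H (sI k')
    have hHdist : ∀ (s s' t t' : unitInterval), |(s:ℝ) - (s':ℝ)| < δ →
        |(t:ℝ) - (t':ℝ)| < δ → dist (H (s, t)) (H (s', t')) ≤ R := by
      intro s s' t t' h1 h2
      refine le_trans (le_of_lt (hδ ?_)) hr₁R
      rw [Prod.dist_eq]
      apply max_lt
      · rw [Subtype.dist_eq, Real.dist_eq]; exact h1
      · rw [Subtype.dist_eq, Real.dist_eq]; exact h2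
    have hsIdist : ∀ k, k < m → |(sI (k+1):ℝ) - (sI k:ℝ)| < δ := by
      intro k hk
      have h := unitdiv_dist m k hm0 (by omega)
      show |min (((k+1:ℕ):ℝ)/m) 1 - min (((k:ℕ):ℝ)/m) 1| < δ
      rw [h]
      exact hmδ
    have hmesh : ∀ j, 0 ≤ tj (j+1) - tj j ∧ tj (j+1) - tj j ≤ 1/m := by
      intro j
      have hqm : j % m < m := Nat.mod_lt j hm0
      have hdm := Nat.div_add_mod j m
      have he2 : (j/m)*m = m*(j/m) := Nat.mul_comm _ _
      have hd0 : 0 ≤ tau N (j/m+1) - tau N (j/m) := by linarith [tau_mono N (j/m)]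
      have hd1 : tau N (j/m+1) - tau N (j/m) ≤ 1 := by
        have h1 := (tau_mem N (j/m+1)).2
        have h2 := (tau_mem N (j/m)).1
        linarith
      have e0 : tj j = tau N (j/m) + ((j % m : ℕ):ℝ) * (tau N (j/m+1) - tau N (j/m)) / m := rfl
      rcases Nat.lt_or_ge (j % m + 1) m with hcase | hcase
      · have hdiv : (j+1)/m = j/m := by
          apply Nat.div_eq_of_lt_le
          · omega
          · have : (j/m+1)*m = (j/m)*m + m := by ring
            omega
        have hmod : (j+1) % m = j % m + 1 := by
          have h3 : j + 1 = (j % m + 1) + (j/m)*m := by omega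
          rw [h3, Nat.add_mul_mod_self_right, Nat.mod_eq_of_lt hcase]
        have e1 : tj (j+1) = tau N (j/m) + ((j % m + 1 : ℕ):ℝ) * (tau N (j/m+1) - tau N (j/m)) / m := by
          show tau N ((j+1)/m) + (((j+1) % m : ℕ):ℝ) * (tau N ((j+1)/m+1) - tau N ((j+1)/m)) / m = _
          rw [hdiv, hmod]
        rw [e1, e0]
        have key : tau N (j/m) + ((j % m + 1 : ℕ):ℝ) * (tau N (j/m+1) - tau N (j/m)) / m
            - (tau N (j/m) + ((j % m : ℕ):ℝ) * (tau N (j/m+1) - tau N (j/m)) / m)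
            = (tau N (j/m+1) - tau N (j/m)) / m := by
          push_cast
          ring
        rw [key]
        constructor
        · positivity
        · exact (div_le_div_iff_of_pos_right hm').2 hd1
      · have hq1 : j % m + 1 = m := by omega
        have hj1 : j + 1 = (j/m+1) * m := by
          have : (j/m+1)*m = (j/m)*m + m := by ring
          omega
        have e1 : tj (j+1) = tau N (j/m+1) := by
          show tau N ((j+1)/m) + (((j+1) % m : ℕ):ℝ) * (tau N ((j+1)/m+1) - tau N ((j+1)/m)) / m = _
          rw [hj1, Nat.mul_div_cancel _ hm0, Nat.mul_mod_left]
          norm_num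
        rw [e1, e0]
        have hqr : ((j % m : ℕ):ℝ) = (m:ℝ) - 1 := by
          have h5 : ((j % m + 1 : ℕ):ℝ) = ((m:ℕ):ℝ) := by exact_mod_cast congrArg Nat.cast hq1
          push_cast at h5
          linarith
        rw [hqr]
        have key : tau N (j/m+1) - (tau N (j/m) + ((m:ℝ)-1) * (tau N (j/m+1) - tau N (j/m)) / m)
            = (tau N (j/m+1) - tau N (j/m)) / m := by
          field_simp
          ring
        rw [key]
        constructor
        · positivity
        · exact (div_le_div_iff_of_pos_right hm').2 hd1
    have hTdist : ∀ j, j < M → |(T (j+1):ℝ) - (T j:ℝ)| < δ := by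
      intro j hj
      have h := hmesh j
      show |tj (j+1) - tj j| < δ
      rw [abs_of_nonneg h.1]
      exact lt_of_le_of_lt h.2 hmδ
    have step2 : ∀ k, k ≤ m → PathEquiv dist R
        ((List.range (M+1)).map (fun j => Frow 0 j))
        ((List.range (M+1)).map (fun j => Frow k j)) := by
      intro k
      induction k with
      | zero => intro _; exact Relation.EqvGen.refl _
      | succ k ih =>
        intro hk1
        refine Relation.EqvGen.trans _ _ _ (ih (by omega)) ?_
        have hzero : |(0:ℝ)| < δ := by rw [abs_zero]; exact hδ0
        apply rows_equiv (R := R) (M := M) (f := fun j => Frow k j) (g := fun j => Frow (k+1) j)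
        · intro j hj
          exact hHdist _ _ _ _ (by rw [sub_self]; exact hzero) (by rw [abs_sub_comm]; exact hTdist j hj)
        · intro j hj
          exact hHdist _ _ _ _ (by rw [sub_self]; exact hzero) (by rw [abs_sub_comm]; exact hTdist j hj)
        · intro j hj
          exact hHdist _ _ _ _ (by rw [abs_sub_comm]; exact hsIdist k (by omega)) (by rw [sub_self]; exact hzero)
        · intro j hj
          exact hHdist _ _ _ _ (hsIdist k (by omega)) (by rw [abs_sub_comm]; exact hTdist j hj)
        · exact (hcol0 k).trans (hcol0 (k+1)).symm
        · exact (hcolM k).trans (hcolM (k+1)).symm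
    -- final assembly
    have h1 := step1 N le_rfl
    rw [Nat.sub_self] at h1
    have hemp : (List.range' (N+1) 0).map x' = [] := by simp
    rw [hemp, List.append_nil] at h1
    have hrow0eq : (List.range (N*m+1)).map ρ = (List.range (M+1)).map (fun j => Frow 0 j) := by
      apply List.map_congr_left
      intro j hj
      exact (hrow0 j).symm
    have hfinal_eq : (List.range (M+1)).map (fun j => Frow m j) = List.replicate (M+1) x₀ := by
      rw [List.eq_replicate_iff]
      constructor
      · simp
      · intro b hb
        obtain ⟨j, hj, rfl⟩ := List.mem_map.1 hb
        exact hrowm j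
    refine ⟨M, ?_⟩
    refine Relation.EqvGen.trans _ _ _ h1 ?_
    rw [hrow0eq]
    have h2 := step2 m le_rfl
    rw [hfinal_eq] at h2
    exact h2

end CSCmain

/-- a weakly geodesic metric space which is simply connected is coarsely simply
connected. -/
theorem coarselySimplyConnected_of_simplyConnected {X : Type*} [MetricSpace X]
    [SimplyConnectedSpace X] (w : ℝ → ℝ)
    (hw : ∀ x y : X, ∃ γ : Path x y,
      ∀ u v : unitInterval, dist (γ u) (γ v) ≤ w (dist x y)) :
    CoarselySimplyConnected X := by
  exact CSCmain.main w hw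
end

section
/- Let G be a locally compact Hausdorff topological group, N a closed normal subgroup of G, and Q = G/N the quotient topological group. Suppose that G is compactly generated and that Q is compactly presented. Then N is compactly generated as a normal subgroup of G, i.e. N is the normal closure in G of some compact subset of N. -/
open scoped Pointwise

section AuxCP

variable {G : Type*} [Group G]

private lemma auxCP_list_prod_mem_pow {W : Set G} :
    ∀ l : List G, (∀ x ∈ l, x ∈ W) → l.prod ∈ W ^ l.length := by
  intro l
  induction l with
  | nil => intro _; simp
  | cons a t ih =>
    intro h
    rw [List.prod_cons, List.length_cons, pow_succ']
    exact Set.mul_mem_mul (h a (List.mem_cons_self))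
      (ih fun x hx => h x (List.mem_cons_of_mem _ hx))

private lemma auxCP_inv_mem_pow {W : Set G} (h : ∀ x ∈ W, x⁻¹ ∈ W) :
    ∀ m, ∀ x ∈ W ^ m, x⁻¹ ∈ W ^ m := by
  intro m
  induction m with
  | zero => intro x hx; rw [pow_zero] at hx ⊢; simp only [Set.mem_one] at hx ⊢; simp [hx]
  | succ m ih =>
    intro x hx
    rw [pow_succ] at hx
    obtain ⟨a, ha, b, hb, rfl⟩ := hx
    rw [mul_inv_rev, pow_succ']
    exact Set.mul_mem_mul (h b hb) (ih a ha)

private lemma auxCP_isCompact_pow [TopologicalSpace G] [IsTopologicalGroup G] {W : Set G}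
    (hW : IsCompact W) : ∀ m, IsCompact (W ^ m) := by
  intro m
  induction m with
  | zero =>
    rw [pow_zero]
    have h1 : (1 : Set G) = {1} := rfl
    rw [h1]
    exact isCompact_singleton
  | succ m ih => rw [pow_succ]; exact ih.mul hW

end AuxCP

/-- if `G` is a compactly generated locally compact group and the quotient
`Q = G / N` by a closed normal subgroup `N` is compactly presented, then `N` is compactly
generated as a normal subgroup of `G`, i.e. it is the normal closure of a compact subset of
itself. -/
theorem normal_compactly_generated_of_quotient_compactlyPresented {G : Type*} [Group G]
    [TopologicalSpace G] [IsTopologicalGroup G] [T2Space G] [LocallyCompactSpace G]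
    (N : Subgroup G) [N.Normal] (hclosed : IsClosed (N : Set G))
    (hG : ∃ S : Set G, IsCompact S ∧ Subgroup.closure S = ⊤)
    (hQ : CompactlyPresented (G ⧸ N)) :
    ∃ C : Set G, C ⊆ (N : Set G) ∧ IsCompact C ∧ Subgroup.normalClosure C = N := by
  classical
  haveI : IsClosed (N : Set G) := hclosed
  obtain ⟨S, hScomp, hSgen⟩ := hG
  obtain ⟨T, hTcomp, n, R, hR, hsurj, hker⟩ := hQ
  set π : G →* G ⧸ N := QuotientGroup.mk' N with hπdef
  have hπcont : Continuous (π : G → G ⧸ N) := continuous_quotient_mk'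
  have hπopen : IsOpenMap (π : G → G ⧸ N) := QuotientGroup.isOpenMap_coe
  set lam : FreeGroup T →* G ⧸ N := FreeGroup.lift (fun t : T => (t : G ⧸ N)) with hlamdef
  -- a compact set `L ⊆ G` whose image under `π` covers `T`
  obtain ⟨L, hLcomp, hLcov⟩ :
      ∃ L : Set G, IsCompact L ∧ ∀ s : T, ∃ y ∈ L, π y = (s : G ⧸ N) := by
    have hsec : ∀ q : G ⧸ N, ∃ g : G, π g = q := QuotientGroup.mk'_surjective N
    choose g hg using hsec
    choose U hUcomp hUnhds using fun x : G => exists_compact_mem_nhds x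
    have hcov : T ⊆ ⋃ q : T, π '' interior (U (g (q : G ⧸ N))) := by
      intro q hq
      refine Set.mem_iUnion.2 ⟨⟨q, hq⟩, ⟨g q, ?_, hg q⟩⟩
      exact mem_interior_iff_mem_nhds.2 (hUnhds _)
    obtain ⟨t, ht⟩ := hTcomp.elim_finite_subcover _
      (fun q : T => hπopen _ isOpen_interior) hcov
    refine ⟨⋃ q ∈ t, U (g (q : G ⧸ N)), t.finite_toSet.isCompact_biUnion fun q _ => hUcomp _, ?_⟩
    intro s
    obtain ⟨q, hqt, y, hyint, hys⟩ := Set.mem_iUnion₂.1 (ht s.2)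
    exact ⟨y, Set.mem_biUnion hqt (interior_subset hyint), hys⟩
  choose σ hσL hσπ using hLcov
  set φ : FreeGroup T →* G := FreeGroup.lift σ with hφdef
  have hπφ : ∀ z : FreeGroup T, π (φ z) = lam z := by
    intro z
    have : π.comp φ = lam := FreeGroup.ext_hom _ _ fun s => by
      simp [hφdef, hlamdef, hσπ s]
    exact DFunLike.congr_fun this z
  -- the compact symmetric generating set `K'`
  set K' : Set G := S ∪ S⁻¹ ∪ L ∪ L⁻¹ ∪ {1} with hK'def
  have hK'comp : IsCompact K' :=
    (((hScomp.union hScomp.inv).union hLcomp).union hLcomp.inv).union isCompact_singleton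
  have h1K' : (1 : G) ∈ K' := by simp [hK'def]
  have hK'symm : ∀ x ∈ K', x⁻¹ ∈ K' := by
    intro x hx
    simp only [hK'def, Set.mem_union, Set.mem_inv, Set.mem_singleton_iff] at hx ⊢
    rcases hx with ((((h | h) | h) | h) | h)
    · exact Or.inl (Or.inl (Or.inl (Or.inr (by simpa using h))))
    · exact Or.inl (Or.inl (Or.inl (Or.inl h)))
    · exact Or.inl (Or.inr (by simpa using h))
    · exact Or.inl (Or.inl (Or.inr h))
    · exact Or.inr (by simp [h])
  have hLK' : L ⊆ K' := by intro x hx; simp [hK'def, hx]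
  have hLinvK' : L⁻¹ ⊆ K' := by intro x hx; simp [hK'def]; tauto
  have hSK' : S ⊆ K' := by intro x hx; simp [hK'def, hx]
  -- the symmetric compact set `T'` in the quotient
  set T' : Set (G ⧸ N) := T ∪ T⁻¹ ∪ {1} with hT'def
  have hT'comp : IsCompact T' := (hTcomp.union hTcomp.inv).union isCompact_singleton
  have h1T' : (1 : G ⧸ N) ∈ T' := by simp [hT'def]
  have hT'symm : ∀ x ∈ T', x⁻¹ ∈ T' := by
    intro x hx
    simp only [hT'def, Set.mem_union, Set.mem_inv, Set.mem_singleton_iff] at hx ⊢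
    rcases hx with ((h | h) | h)
    · exact Or.inl (Or.inr (by simpa using h))
    · exact Or.inl (Or.inl (by simpa using h))
    · exact Or.inr (by simp [h])
  -- every element of the quotient lies in some power of `T'`
  have hTgen : Subgroup.closure T = ⊤ := by
    have h := FreeGroup.range_lift_eq_closure (f := fun t : T => (t : G ⧸ N))
    rw [Subtype.range_coe] at h
    rw [← h]
    exact MonoidHom.range_eq_top.2 hsurj
  have hQcov : ∀ q : G ⧸ N, ∃ m, q ∈ T' ^ m := by
    intro q
    have hq : q ∈ Submonoid.closure (T ∪ T⁻¹) := by
      rw [← Subgroup.closure_toSubmonoid, hTgen]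
      trivial
    obtain ⟨l, hl, hlprod⟩ := Submonoid.exists_list_of_mem_closure hq
    exact ⟨l.length, hlprod ▸ auxCP_list_prod_mem_pow l
      fun x hx => Set.mem_union_left _ (hl x hx)⟩
  -- Baire category: some power of `T'` has nonempty interior
  have hclosedpow : ∀ j : ℕ, IsClosed (T' ^ j) :=
    fun j => (auxCP_isCompact_pow hT'comp j).isClosed
  have huniv : (⋃ j : ℕ, T' ^ j) = Set.univ := by
    ext q
    simp only [Set.mem_iUnion, Set.mem_univ, iff_true]
    exact hQcov q
  obtain ⟨j₀, u, hu⟩ : ∃ j₀ : ℕ, ∃ u, u ∈ interior (T' ^ j₀) := by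
    obtain ⟨j₀, hne⟩ := nonempty_interior_of_iUnion_of_closed hclosedpow huniv
    exact ⟨j₀, hne⟩
  have huT : u ∈ T' ^ j₀ := interior_subset hu
  have huinv : u⁻¹ ∈ T' ^ j₀ := auxCP_inv_mem_pow hT'symm j₀ u huT
  set Uo : Set (G ⧸ N) := (fun y => u⁻¹ * y) '' interior (T' ^ j₀) with hUodef
  have hUoopen : IsOpen Uo := isOpenMap_mul_left u⁻¹ _ isOpen_interior
  have h1Uo : (1 : G ⧸ N) ∈ Uo := ⟨u, hu, inv_mul_cancel u⟩
  have hUosub : Uo ⊆ T' ^ j₀ * T' ^ j₀ := by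
    rintro y ⟨v, hv, rfl⟩
    exact Set.mul_mem_mul huinv (interior_subset hv)
  set O : ℕ → Set (G ⧸ N) := fun j => T' ^ j * Uo with hOdef
  have hOopen : ∀ j, IsOpen (O j) := fun j => hUoopen.mul_left
  have hOcov : (π '' K') ⊆ ⋃ j, O j := by
    intro q _
    obtain ⟨m, hm⟩ := hQcov q
    exact Set.mem_iUnion.2 ⟨m, ⟨q, hm, 1, h1Uo, mul_one q⟩⟩
  obtain ⟨t₂, ht₂⟩ := (hK'comp.image hπcont).elim_finite_subcover O hOopen hOcov
  set M : ℕ := t₂.sup id + 2 * j₀ with hMdef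
  have hMmem : ∀ y ∈ K', (π y : G ⧸ N) ∈ T' ^ M := by
    intro y hy
    obtain ⟨j, hjt, hjmem⟩ := Set.mem_iUnion₂.1 (ht₂ (Set.mem_image_of_mem _ hy))
    obtain ⟨a, ha, b, hb, heq⟩ := hjmem
    have ha' : a ∈ T' ^ (t₂.sup id) :=
      Set.pow_subset_pow_right h1T' (Finset.le_sup (f := id) hjt) ha
    have hmem : π y ∈ T' ^ (t₂.sup id) * (T' ^ j₀ * T' ^ j₀) :=
      heq ▸ Set.mul_mem_mul ha' (hUosub hb)
    simpa [hMdef, pow_add, two_mul, mul_assoc] using hmem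
  -- bounded words over `T` representing elements of powers of `T'`, with lift in powers of `K'`
  have hword : ∀ m : ℕ, ∀ q ∈ T' ^ m, ∃ z : FreeGroup T, lam z = q ∧ φ z ∈ K' ^ m := by
    intro m
    induction m with
    | zero =>
      intro q hq
      rw [pow_zero] at hq
      refine ⟨1, ?_, ?_⟩
      · rw [map_one]; exact (Set.mem_one.1 hq).symm
      · rw [pow_zero, map_one]; exact Set.mem_one.2 rfl
    | succ m ih =>
      intro q hq
      rw [pow_succ'] at hq
      obtain ⟨a, ha, b, hb, rfl⟩ := hq
      obtain ⟨zb, hzb1, hzb2⟩ := ih b hb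
      rcases ha with (ha | ha) | ha
      · refine ⟨FreeGroup.of ⟨a, ha⟩ * zb, ?_, ?_⟩
        · rw [map_mul, hzb1]; simp [hlamdef]
        · rw [map_mul, pow_succ']
          have hof : φ (FreeGroup.of ⟨a, ha⟩) = σ ⟨a, ha⟩ := FreeGroup.lift_apply_of
          rw [hof]
          exact Set.mul_mem_mul (hLK' (hσL ⟨a, ha⟩)) hzb2
      · have ha' : a⁻¹ ∈ T := Set.mem_inv.1 ha
        refine ⟨(FreeGroup.of ⟨a⁻¹, ha'⟩)⁻¹ * zb, ?_, ?_⟩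
        · rw [map_mul, map_inv, hzb1]; simp [hlamdef]
        · rw [map_mul, map_inv, pow_succ']
          have hof : φ (FreeGroup.of ⟨a⁻¹, ha'⟩) = σ ⟨a⁻¹, ha'⟩ := FreeGroup.lift_apply_of
          rw [hof]
          refine Set.mul_mem_mul (hLinvK' ?_) hzb2
          exact Set.mem_inv.2 (by simpa using hσL ⟨a⁻¹, ha'⟩)
      · have ha1 : a = 1 := ha
        refine ⟨zb, ?_, Set.pow_subset_pow_right h1K' (Nat.le_succ m) hzb2⟩
        simpa [ha1] using hzb1
  -- the compact set `C`
  set m₀ : ℕ := max n (M + 1) with hm₀def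
  set C : Set G := K' ^ m₀ ∩ (N : Set G) with hCdef
  refine ⟨C, Set.inter_subset_right,
    (auxCP_isCompact_pow hK'comp m₀).inter_right hclosed, ?_⟩
  apply le_antisymm
  · exact Subgroup.normalClosure_le_normal Set.inter_subset_right
  intro x hx
  set ρ : G →* G ⧸ Subgroup.normalClosure C := QuotientGroup.mk' _ with hρdef
  have hker_ρ : ∀ y ∈ Subgroup.normalClosure C, ρ y = 1 :=
    fun y hy => (QuotientGroup.eq_one_iff y).2 hy
  have hA : ∀ y ∈ K', ∃ z : FreeGroup T, lam z = π y ∧ ρ (φ z) = ρ y := by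
    intro y hy
    obtain ⟨z, hz1, hz2⟩ := hword M (π y) (hMmem y hy)
    refine ⟨z, hz1, ?_⟩
    have hmem : y * (φ z)⁻¹ ∈ C := by
      refine ⟨?_, ?_⟩
      · have h1 : y ∈ K' ^ 1 := by rw [pow_one]; exact hy
        have h3 : y * (φ z)⁻¹ ∈ K' ^ 1 * K' ^ M :=
          Set.mul_mem_mul h1 (auxCP_inv_mem_pow hK'symm M _ hz2)
        rw [← pow_add] at h3
        exact Set.pow_subset_pow_right h1K' (by omega) h3
      · refine (QuotientGroup.eq_one_iff _).1 ?_
        show π (y * (φ z)⁻¹) = 1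
        rw [map_mul, map_inv, hπφ, hz1, mul_inv_cancel]
    have h0 : ρ (y * (φ z)⁻¹) = 1 := hker_ρ _ (Subgroup.subset_normalClosure hmem)
    rw [map_mul, map_inv] at h0
    exact (mul_inv_eq_one.1 h0).symm
  have hxK : x ∈ Submonoid.closure (K' ∪ K'⁻¹) := by
    rw [← Subgroup.closure_toSubmonoid,
      top_unique (hSgen ▸ Subgroup.closure_mono hSK' : (⊤ : Subgroup G) ≤ Subgroup.closure K')]
    trivial
  obtain ⟨l, hl, hlprod⟩ := Submonoid.exists_list_of_mem_closure hxK
  have hlK : ∀ y ∈ l, y ∈ K' := by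
    intro y hy
    rcases hl y hy with h | h
    · exact h
    · simpa using hK'symm _ (Set.mem_inv.1 h)
  have hlist : ∀ l' : List G, (∀ y ∈ l', y ∈ K') →
      ∃ z : FreeGroup T, lam z = π l'.prod ∧ ρ (φ z) = ρ l'.prod := by
    intro l'
    induction l' with
    | nil => intro _; exact ⟨1, by simp, by simp⟩
    | cons a t ih =>
      intro h
      obtain ⟨za, hza1, hza2⟩ := hA a (h a (List.mem_cons_self))
      obtain ⟨zt, hzt1, hzt2⟩ := ih fun y hy => h y (List.mem_cons_of_mem _ hy)
      exact ⟨za * zt, by rw [map_mul, hza1, hzt1, List.prod_cons, map_mul],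
        by rw [map_mul, map_mul, hza2, hzt2, List.prod_cons, map_mul]⟩
  obtain ⟨Z, hZ1, hZ2⟩ := hlist l hlK
  rw [hlprod] at hZ1 hZ2
  have hZker : Z ∈ Subgroup.normalClosure R := by
    rw [← hker, MonoidHom.mem_ker, hZ1]
    exact (QuotientGroup.eq_one_iff x).2 hx
  have himgC : φ '' R ⊆ C := by
    rintro _ ⟨r, hr, rfl⟩
    obtain ⟨w, hw, hwlen⟩ := hR r hr
    refine ⟨?_, ?_⟩
    · have hmem : ∀ y ∈ (w.map fun x : T × Bool => cond x.2 (σ x.1) (σ x.1)⁻¹), y ∈ K' := by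
        intro y hy
        obtain ⟨p, hpw, rfl⟩ := List.mem_map.1 hy
        cases hb : p.2
        · simpa [hb] using hK'symm _ (hLK' (hσL p.1))
        · simpa [hb] using hLK' (hσL p.1)
      have hprod := auxCP_list_prod_mem_pow _ hmem
      rw [List.length_map] at hprod
      have heq : φ r = (w.map fun x : T × Bool => cond x.2 (σ x.1) (σ x.1)⁻¹).prod := by
        rw [← hw, hφdef]
        exact FreeGroup.lift_mk
      rw [heq]
      exact Set.pow_subset_pow_right h1K' (le_trans hwlen (le_max_left _ _)) hprod
    · refine (QuotientGroup.eq_one_iff _).1 ?_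
      show π (φ r) = 1
      rw [hπφ]
      have : r ∈ MonoidHom.ker lam := hker ▸ Subgroup.subset_normalClosure hr
      exact this
  have hφZ : φ Z ∈ Subgroup.normalClosure C := by
    have hcomap : Subgroup.normalClosure R ≤ (Subgroup.normalClosure (φ '' R)).comap φ := by
      haveI : ((Subgroup.normalClosure (φ '' R)).comap φ).Normal :=
        Subgroup.Normal.comap inferInstance φ
      exact Subgroup.normalClosure_le_normal fun r hr =>
        Subgroup.subset_normalClosure (Set.mem_image_of_mem _ hr)
    exact Subgroup.normalClosure_mono himgC (hcomap hZker)
  have hρx : ρ x = 1 := by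
    rw [← hZ2]
    exact hker_ρ _ hφZ
  exact (QuotientGroup.eq_one_iff x).1 hρx
end
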